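/- arXiv:1706.07782 — 7 statements merged into one kernel-verified Lean document; each statement's English description precedes it below -/
import Mathlib

section
/- Let p ≥ 2 be an integer. For τ in the upper half-plane ℍ = {τ ∈ ℂ : Im τ > 0}, let τ^{1/p} denote the principal p-th root, i.e. τ^{1/p} = |τ|^{1/p} e^{iθ/p} where θ = Arg τ ∈ (0, π). Then for each j = 0, 1, …, p−1: (i) the map τ ↦ e^{ijπ/p} τ^{1/p} is holomorphic on ℍ and takes values in ℍ, and (ii) for every τ ∈ ℍ one has ∏_{j=0}^{p−1} Im(e^{ijπ/p} τ^{1/p}) = Im(τ) / 2^{p−1}. (This identity expresses that Mok's p-th root map ρ_p(τ) = (τ^{1/p}, e^{iπ/p} τ^{1/p}, …, e^{i(p−1)π/p} τ^{1/p}) is a holomorphic isometry from (ℍ, ds²_ℍ) into (ℍ^p, ds²_{ℍ^p}).) -/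
open Complex Finset Real

lemma aux_prod_root {p : ℕ} (hp : 0 < p) {ζ : ℂ} (hζ : IsPrimitiveRoot ζ p) (x y : ℂ) :
    ∏ j ∈ Finset.range p, (x - ζ ^ j * y) = x ^ p - y ^ p := by
  haveI : NeZero p := ⟨hp.ne'⟩
  rw [IsPrimitiveRoot.pow_sub_pow_eq_prod_sub_mul x y hp hζ]
  refine Finset.prod_nbij (fun j => ζ ^ j) ?_ ?_ ?_ (fun _ _ => rfl)
  · intro j _
    exact (Polynomial.mem_nthRootsFinset hp _).2 (by
      rw [← pow_mul, mul_comm, pow_mul, hζ.pow_eq_one, one_pow])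
  · intro a ha b hb H
    simp only [Finset.coe_range, Set.mem_Iio] at ha hb
    exact hζ.pow_inj ha hb H
  · intro z hz
    simp only [Finset.mem_coe] at hz
    obtain ⟨i, hi, rfl⟩ := hζ.eq_pow_of_pow_eq_one ((Polynomial.mem_nthRootsFinset hp _).1 hz)
    exact ⟨i, by simpa using hi, rfl⟩

lemma sin_complex (z : ℂ) :
    Complex.sin z = (Complex.exp (z * I) - Complex.exp (-(z * I))) / (2 * I) := by
  rw [Complex.sin]
  rw [div_eq_div_iff (by norm_num) (by simp [Complex.I_ne_zero])]
  ring_nf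
  simp [Complex.I_sq]

lemma sin_prod_lemma (p : ℕ) (hp : 0 < p) (θ : ℝ) :
    ∏ j ∈ Finset.range p, Real.sin (((j:ℝ) * Real.pi + θ) / ((p:ℕ) : ℝ))
      = Real.sin θ / 2 ^ (p - 1) := by
  obtain ⟨k, rfl⟩ : ∃ k, p = k + 1 := ⟨p - 1, (Nat.succ_pred_eq_of_pos hp).symm⟩
  set n : ℕ := k + 1 with hn
  rw [show n - 1 = k from rfl]
  have hnR : (n:ℝ) ≠ 0 := Nat.cast_ne_zero.2 (by omega : n ≠ 0)
  have hnC : (n:ℂ) ≠ 0 := Nat.cast_ne_zero.2 (by omega : n ≠ 0)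
  set ω : ℂ := Complex.exp (Real.pi * I / n) with hω
  set u : ℂ := Complex.exp (θ * I / n) with hu
  have hωne : ω ≠ 0 := Complex.exp_ne_zero _
  have hune : u ≠ 0 := Complex.exp_ne_zero _
  -- primitive root
  have hω2 : ω ^ 2 = Complex.exp (2 * Real.pi * I / n) := by
    rw [hω, ← Complex.exp_nat_mul]
    ring_nf
  have hprim : IsPrimitiveRoot (ω ^ 2) n := by
    rw [hω2]; exact Complex.isPrimitiveRoot_exp n (by omega)
  -- powers of u and ω
  have hupow : u ^ n = Complex.exp (θ * I) := by
    rw [hu, ← Complex.exp_nat_mul]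
    congr 1
    field_simp
  have hu2pow : (u ^ 2) ^ n = Complex.exp (θ * I) ^ 2 := by
    rw [← pow_mul, mul_comm 2 n, pow_mul, hupow]
  -- apply injective coercion
  apply Complex.ofReal_injective
  rw [Complex.ofReal_prod, Complex.ofReal_div, Complex.ofReal_sin, Complex.ofReal_pow,
    Complex.ofReal_ofNat]
  -- rewrite each sine factor
  have hfac : ∀ j ∈ Finset.range n,
      ((Real.sin (((j:ℝ) * Real.pi + θ) / (n:ℝ)) : ℝ) : ℂ)
        = (ω ^ j)⁻¹ * u⁻¹ * ((ω ^ 2) ^ j * u ^ 2 - 1) / (2 * I) := by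
    intro j _
    rw [Complex.ofReal_sin, sin_complex]
    have h1 : Complex.exp ((((j:ℝ) * Real.pi + θ : ℝ) / (n:ℝ) : ℝ) * I) = ω ^ j * u := by
      rw [hω, hu, ← Complex.exp_nat_mul, ← Complex.exp_add]
      congr 1
      push_cast
      field_simp
    have h2 : Complex.exp (-((((j:ℝ) * Real.pi + θ : ℝ) / (n:ℝ) : ℝ) * I))
        = (ω ^ j * u)⁻¹ := by
      rw [Complex.exp_neg, h1]
    rw [h1, h2]
    congr 1
    have hp2 : (ω ^ 2) ^ j = (ω ^ j) ^ 2 := by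
      rw [← pow_mul, mul_comm, pow_mul]
    rw [hp2]
    field_simp
  rw [Finset.prod_congr rfl hfac]
  rw [Finset.prod_div_distrib, Finset.prod_const, Finset.card_range]
  rw [Finset.prod_mul_distrib, Finset.prod_mul_distrib, Finset.prod_const, Finset.card_range,
    Finset.prod_inv_distrib, Finset.prod_pow_eq_pow_sum]
  have hneg : ∀ j ∈ Finset.range n,
      ((ω ^ 2) ^ j * u ^ 2 - 1 : ℂ) = (-1) * (1 - (ω ^ 2) ^ j * u ^ 2) := by
    intro j _; ring
  rw [Finset.prod_congr rfl hneg, Finset.prod_mul_distrib, Finset.prod_const, Finset.card_range]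
  have hroot : ∏ j ∈ Finset.range n, (1 - (ω ^ 2) ^ j * u ^ 2) = 1 - Complex.exp (θ * I) ^ 2 := by
    rw [aux_prod_root (by omega) hprim 1 (u ^ 2), one_pow, hu2pow]
  rw [hroot]
  -- the Gauss sum
  have hS2 : ((∑ j ∈ Finset.range n, j : ℕ) : ℂ) * 2 = (n : ℂ) * k := by
    have := Finset.sum_range_id_mul_two n
    exact_mod_cast congrArg (Nat.cast : ℕ → ℂ) this
  have hωS : ω ^ (∑ j ∈ Finset.range n, j) = I ^ k := by
    rw [hω, ← Complex.exp_nat_mul]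
    have hc : ((∑ j ∈ Finset.range n, j : ℕ) : ℂ) * (↑Real.pi * I / ↑n) = (k : ℂ) * (↑Real.pi * I / 2) := by
      push_cast at hS2 hnC ⊢
      field_simp
      linear_combination hS2
    rw [hc, Complex.exp_nat_mul]
    congr 1
    rw [show (↑Real.pi * I / 2 : ℂ) = ((Real.pi / 2 : ℝ) : ℂ) * I by push_cast; ring,
      Complex.exp_mul_I]
    simp
  rw [hωS]
  rw [inv_pow, hupow, sin_complex, Complex.exp_neg, hn]
  have hE : Complex.exp ((θ:ℂ) * I) ≠ 0 := Complex.exp_ne_zero _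
  have hII : (I : ℂ) ^ k * I ^ k = (-1) ^ k := by rw [← mul_pow, Complex.I_mul_I]
  have hm1 : ((-1 : ℂ)) ^ k * (-1) ^ k = 1 := by rw [← mul_pow]; norm_num
  have hIk : (I : ℂ) ^ k ≠ 0 := pow_ne_zero _ Complex.I_ne_zero
  have hinv : ((I : ℂ) ^ k)⁻¹ = I ^ k * (-1) ^ k := by
    refine inv_eq_of_mul_eq_one_right ?_
    rw [← mul_assoc, hII, hm1]
  rw [hinv, pow_succ (2 * I), mul_pow, pow_succ (-1 : ℂ)]
  field_simp
  linear_combination (cexp ((θ:ℂ) * I) ^ 2 - 1) * hm1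

lemma im_key (p : ℕ) (hp : 0 < p) (j : ℕ) (τ : ℂ) (hτ : τ ≠ 0) :
    (Complex.exp ((j : ℂ) * Real.pi * Complex.I / p) * τ ^ ((p : ℂ))⁻¹).im
      = Real.exp (Real.log (‖τ‖) / p)
        * Real.sin (((j : ℝ) * Real.pi + τ.arg) / p) := by
  have hpC : (p : ℂ) ≠ 0 := Nat.cast_ne_zero.2 hp.ne'
  rw [Complex.cpow_def_of_ne_zero hτ, ← Complex.exp_add, Complex.exp_im]
  have h : ((j : ℂ) * Real.pi * I / p + Complex.log τ * ((p : ℂ))⁻¹)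
      = ((Real.log (‖τ‖) / p : ℝ) : ℂ)
        + ((((j : ℝ) * Real.pi + τ.arg) / p : ℝ) : ℂ) * I := by
    rw [Complex.log]
    push_cast
    field_simp
    ring
  rw [h]
  simp

/-- Mok's `p`-th root map: each component `τ ↦ e^{ijπ/p} τ^{1/p}` is holomorphic on the
upper half-plane with values in the upper half-plane, and the product of the imaginary
parts of the components equals `Im τ / 2^(p-1)`, expressing the holomorphic isometry
property of the `p`-th root embedding at the level of potentials. -/
theorem pth_root_embedding_isometry (p : ℕ) (hp : 2 ≤ p) :
    (∀ j < p,
      DifferentiableOn ℂ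
        (fun τ : ℂ => Complex.exp ((j : ℂ) * Real.pi * Complex.I / p) * τ ^ ((p : ℂ))⁻¹)
        {τ : ℂ | 0 < τ.im} ∧
      ∀ τ : ℂ, 0 < τ.im →
        0 < (Complex.exp ((j : ℂ) * Real.pi * Complex.I / p) * τ ^ ((p : ℂ))⁻¹).im) ∧
    ∀ τ : ℂ, 0 < τ.im →
      ∏ j ∈ Finset.range p,
          (Complex.exp ((j : ℂ) * Real.pi * Complex.I / p) * τ ^ ((p : ℂ))⁻¹).im
        = τ.im / 2 ^ (p - 1) := by
  have hp0 : 0 < p := by omega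
  have hpR : (0:ℝ) < (p : ℝ) := by exact_mod_cast hp0
  -- facts about arg for points in the upper half plane
  have hargs : ∀ τ : ℂ, 0 < τ.im → τ ≠ 0 ∧ 0 < τ.arg ∧ τ.arg < Real.pi := by
    intro τ hτ
    have hτ0 : τ ≠ 0 := by rintro rfl; simp at hτ
    have hs : 0 < Real.sin τ.arg := by
      rw [Complex.sin_arg]; exact div_pos hτ (norm_pos_iff.mpr hτ0)
    refine ⟨hτ0, ?_, ?_⟩
    · by_contra h
      push_neg at h
      exact absurd hs (not_lt.2 (Real.sin_nonpos_of_nonpos_of_neg_pi_le h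
        (Complex.neg_pi_lt_arg τ).le))
    · refine lt_of_le_of_ne (Complex.arg_le_pi τ) fun h => ?_
      rw [h, Real.sin_pi] at hs
      exact lt_irrefl 0 hs
  constructor
  · intro j hj
    constructor
    · intro τ hτ
      refine DifferentiableAt.differentiableWithinAt ?_
      refine DifferentiableAt.const_mul ?_ _
      refine DifferentiableAt.cpow differentiableAt_id (differentiableAt_const _) ?_
      exact Complex.mem_slitPlane_iff.2 (Or.inr (ne_of_gt hτ))
    · intro τ hτ
      obtain ⟨hτ0, harg1, harg2⟩ := hargs τ hτ
      rw [im_key p hp0 j τ hτ0]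
      refine mul_pos (Real.exp_pos _) (Real.sin_pos_of_pos_of_lt_pi ?_ ?_)
      · apply div_pos _ hpR
        have : (0:ℝ) ≤ (j:ℝ) * Real.pi := by positivity
        linarith
      · rw [div_lt_iff₀ hpR]
        have hjp : (j:ℝ) ≤ (p:ℝ) - 1 := by
          have : (j:ℝ) + 1 ≤ (p:ℝ) := by exact_mod_cast hj
          linarith
        nlinarith [Real.pi_pos]
  · intro τ hτ
    obtain ⟨hτ0, harg1, harg2⟩ := hargs τ hτ
    rw [Finset.prod_congr rfl fun j _ => im_key p hp0 j τ hτ0, Finset.prod_mul_distrib,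
      Finset.prod_const, Finset.card_range, sin_prod_lemma p hp0 τ.arg]
    have hA : Real.exp (Real.log (‖τ‖) / p) ^ p = ‖τ‖ := by
      rw [← Real.exp_nat_mul]
      rw [show (p:ℝ) * (Real.log (‖τ‖) / p) = Real.log (‖τ‖) by
        field_simp]
      exact Real.exp_log (norm_pos_iff.mpr hτ0)
    rw [hA, Complex.sin_arg]
    field_simp
end

section
/- Let p ≥ 2 be an integer and λ > 0 a real constant. Suppose f = (f¹, …, f^p) : Δ → Δ^p is a holomorphic map with f(0) = 0, every component function f^j is non-constant, and ∏_{j=1}^p (1 − |f^j(w)|²) = (1 − |w|²)^λ for all w ∈ Δ. Then λ is an integer and 1 ≤ λ ≤ p. -/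
open Complex Metric Set Filter Topology

noncomputable section

namespace NCI

local notation "𝔻" => Metric.ball (0:ℂ) 1

lemma mem_D_iff {z : ℂ} : z ∈ Metric.ball (0:ℂ) 1 ↔ ‖z‖ < 1 := by
  simp [Metric.mem_ball, Complex.dist_eq]

lemma mul_mem_D {z w : ℂ} (hz : z ∈ Metric.ball (0:ℂ) 1) (hw : w ∈ Metric.ball (0:ℂ) 1) :
    z * w ∈ Metric.ball (0:ℂ) 1 := by
  rw [mem_D_iff] at *
  rw [norm_mul]
  nlinarith [norm_nonneg z, norm_nonneg w]

lemma conj_mem_D {z : ℂ} (hz : z ∈ Metric.ball (0:ℂ) 1) :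
    (starRingEnd ℂ) z ∈ Metric.ball (0:ℂ) 1 := by
  rw [mem_D_iff] at *
  rwa [Complex.norm_conj]

lemma one_sub_mem_slitPlane {u : ℂ} (hu : u ∈ Metric.ball (0:ℂ) 1) :
    1 - u ∈ Complex.slitPlane := by
  rw [Complex.mem_slitPlane_iff]
  left
  have h1 : u.re ≤ ‖u‖ := Complex.re_le_norm u
  have h2 : ‖u‖ < 1 := mem_D_iff.mp hu
  simp only [Complex.sub_re, Complex.one_re]
  linarith

lemma frequently_real_zero {P : ℂ → Prop} {r : ℝ} (hr : 0 < r)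
    (h : ∀ t : ℝ, 0 < t → t < r → P (t : ℂ)) : ∃ᶠ z in 𝓝[≠] (0:ℂ), P z := by
  have hpos : ∀ n : ℕ, 0 < r / (n + 2) := fun n => by positivity
  have hlt : ∀ n : ℕ, r / (n + 2) < r := fun n => by
    rw [div_lt_iff₀ (by positivity)]
    nlinarith
  have h0 : Tendsto (fun n : ℕ => (r / (n + 2) : ℝ)) atTop (𝓝 0) := by
    apply Tendsto.div_atTop tendsto_const_nhds
    exact Filter.tendsto_atTop_add_const_right _ _ tendsto_natCast_atTop_atTop
  have h1 : Tendsto (fun n : ℕ => ((r / (n + 2) : ℝ) : ℂ)) atTop (𝓝[≠] (0:ℂ)) := by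
    rw [tendsto_nhdsWithin_iff]
    constructor
    · have h2 := (Complex.continuous_ofReal.tendsto 0).comp h0
      rw [Complex.ofReal_zero] at h2
      exact h2
    · filter_upwards with n
      simp only [Set.mem_compl_iff, Set.mem_singleton_iff]
      exact_mod_cast (hpos n).ne'
  exact h1.frequently (Frequently.of_forall fun n => h _ (hpos n) (hlt n))

lemma hasDerivAt_conj_refl {g : ℂ → ℂ} {d z : ℂ} (h : HasDerivAt g d ((starRingEnd ℂ) z)) :
    HasDerivAt (fun w => (starRingEnd ℂ) (g ((starRingEnd ℂ) w))) ((starRingEnd ℂ) d) z := by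
  rw [hasDerivAt_iff_tendsto_slope] at h ⊢
  have hconj : Tendsto (fun w : ℂ => (starRingEnd ℂ) w) (𝓝[≠] z) (𝓝[≠] ((starRingEnd ℂ) z)) := by
    rw [tendsto_nhdsWithin_iff]
    constructor
    · exact tendsto_nhdsWithin_of_tendsto_nhds (Complex.continuous_conj.tendsto z)
    · filter_upwards [self_mem_nhdsWithin] with w hw
      simp only [Set.mem_compl_iff, Set.mem_singleton_iff] at hw ⊢
      exact fun hc => hw ((starRingEnd ℂ).injective hc)
  have h2 : Tendsto (fun w : ℂ => (starRingEnd ℂ) (slope g ((starRingEnd ℂ) z) ((starRingEnd ℂ) w)))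
      (𝓝[≠] z) (𝓝 ((starRingEnd ℂ) d)) :=
    (Complex.continuous_conj.tendsto d).comp (h.comp hconj)
  refine h2.congr' ?_
  filter_upwards [self_mem_nhdsWithin] with w hw
  simp only [Set.mem_compl_iff, Set.mem_singleton_iff] at hw
  rw [slope_def_field, slope_def_field]
  simp [map_div₀, map_sub, Complex.conj_conj]

lemma analyticOnNhd_conj_refl {g : ℂ → ℂ} (hg : AnalyticOnNhd ℂ g (Metric.ball (0:ℂ) 1)) :
    AnalyticOnNhd ℂ (fun w => (starRingEnd ℂ) (g ((starRingEnd ℂ) w))) (Metric.ball (0:ℂ) 1) := by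
  apply DifferentiableOn.analyticOnNhd _ Metric.isOpen_ball
  intro z hz
  exact (hasDerivAt_conj_refl
    ((hg _ (conj_mem_D hz)).differentiableAt.hasDerivAt)).differentiableAt.differentiableWithinAt

lemma iter_congr {g h : ℂ → ℂ} (he : ∀ z ∈ Metric.ball (0:ℂ) 1, g z = h z) (n : ℕ) :
    iteratedDeriv n g 0 = iteratedDeriv n h 0 := by
  have hmem : Metric.ball (0:ℂ) 1 ∈ 𝓝 (0:ℂ) :=
    Metric.isOpen_ball.mem_nhds (by simp)
  exact Filter.EventuallyEq.iteratedDeriv_eq n (by filter_upwards [hmem] with z hz using he z hz)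

lemma iter_sum {ι : Type*} (s : Finset ι) (g : ι → ℂ → ℂ)
    (hg : ∀ i ∈ s, AnalyticOnNhd ℂ (g i) (Metric.ball (0:ℂ) 1)) (n : ℕ) :
    iteratedDeriv n (fun z => ∑ i ∈ s, g i z) 0 = ∑ i ∈ s, iteratedDeriv n (g i) 0 := by
  induction n generalizing g with
  | zero => simp
  | succ n ih =>
    rw [iteratedDeriv_succ']
    have h1 : ∀ z ∈ Metric.ball (0:ℂ) 1,
        deriv (fun z => ∑ i ∈ s, g i z) z = ∑ i ∈ s, deriv (g i) z := fun z hz =>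
      deriv_fun_sum (fun i hi => ((hg i hi) z hz).differentiableAt)
    rw [iter_congr h1 n]
    rw [ih (fun i => deriv (g i)) (fun i hi => (hg i hi).deriv)]
    exact Finset.sum_congr rfl fun i _ => by rw [iteratedDeriv_succ']

lemma iter_cmul {g : ℂ → ℂ} (hg : AnalyticOnNhd ℂ g (Metric.ball (0:ℂ) 1)) (c : ℂ) (n : ℕ) :
    iteratedDeriv n (fun z => c * g z) 0 = c * iteratedDeriv n g 0 := by
  induction n generalizing g with
  | zero => simp
  | succ n ih =>
    rw [iteratedDeriv_succ']
    rw [iter_congr (fun z hz => deriv_const_mul c ((hg z hz).differentiableAt)) n]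
    rw [ih hg.deriv, ← iteratedDeriv_succ']

lemma iter_dilate {g : ℂ → ℂ} (hg : AnalyticOnNhd ℂ g (Metric.ball (0:ℂ) 1)) {w : ℂ}
    (hw : w ∈ Metric.ball (0:ℂ) 1) (n : ℕ) :
    iteratedDeriv n (fun z => g (z * w)) 0 = w ^ n * iteratedDeriv n g 0 := by
  induction n generalizing g with
  | zero => simp
  | succ n ih =>
    rw [iteratedDeriv_succ']
    have h1 : ∀ z ∈ Metric.ball (0:ℂ) 1, deriv (fun z => g (z * w)) z = w * deriv g (z * w) := by
      intro z hz
      have hd : HasDerivAt (fun z : ℂ => g (z * w)) (deriv g (z * w) * (1 * w)) z :=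
        ((hg _ (mul_mem_D hz hw)).differentiableAt.hasDerivAt).comp z
          ((hasDerivAt_id z).mul_const w)
      rw [hd.deriv]; ring
    rw [iter_congr h1 n]
    have han : AnalyticOnNhd ℂ (fun z => deriv g (z * w)) (Metric.ball (0:ℂ) 1) :=
      (hg.deriv).comp (analyticOnNhd_id.mul analyticOnNhd_const)
        (fun z hz => mul_mem_D hz hw)
    rw [iter_cmul han w n, ih hg.deriv, ← iteratedDeriv_succ']
    ring

lemma iter_conj_refl {g : ℂ → ℂ} (hg : AnalyticOnNhd ℂ g (Metric.ball (0:ℂ) 1)) (n : ℕ) :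
    iteratedDeriv n (fun w => (starRingEnd ℂ) (g ((starRingEnd ℂ) w))) 0 =
      (starRingEnd ℂ) (iteratedDeriv n g 0) := by
  induction n generalizing g with
  | zero => simp
  | succ n ih =>
    rw [iteratedDeriv_succ']
    have h1 : ∀ z ∈ Metric.ball (0:ℂ) 1,
        deriv (fun w => (starRingEnd ℂ) (g ((starRingEnd ℂ) w))) z =
          (starRingEnd ℂ) (deriv g ((starRingEnd ℂ) z)) := by
      intro z hz
      exact (hasDerivAt_conj_refl
        ((hg _ (conj_mem_D hz)).differentiableAt.hasDerivAt)).deriv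
    rw [iter_congr h1 n, ih hg.deriv, ← iteratedDeriv_succ']

lemma iter_monomial (m n : ℕ) :
    iteratedDeriv n (fun w : ℂ => w ^ m) 0 = if n = m then (m.factorial : ℂ) else 0 := by
  induction n generalizing m with
  | zero =>
    cases m with
    | zero => simp
    | succ m => simp
  | succ n ih =>
    rw [iteratedDeriv_succ']
    have h1 : deriv (fun w : ℂ => w ^ m) = fun w : ℂ => (m : ℂ) * w ^ (m - 1) := by
      funext w; simp [deriv_pow]
    rw [h1]
    have han : AnalyticOnNhd ℂ (fun w : ℂ => w ^ (m - 1)) (Metric.ball (0:ℂ) 1) :=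
      analyticOnNhd_id.pow _
    rw [iter_cmul han (m : ℂ) n, ih (m - 1)]
    cases m with
    | zero => simp
    | succ m =>
      simp only [Nat.add_sub_cancel]
      by_cases h : n = m
      · subst h
        rw [if_pos rfl, if_pos rfl, Nat.factorial_succ]
        push_cast
        ring
      · simp [h, fun hc => h (Nat.succ_injective hc)]


def Pf (mu : ℝ) : ℂ → ℂ := fun u => (1 - u) ^ (mu : ℂ)

lemma Pf_analytic (mu : ℝ) : AnalyticOnNhd ℂ (Pf mu) (Metric.ball (0:ℂ) 1) :=
  AnalyticOnNhd.cpow (analyticOnNhd_const.sub analyticOnNhd_id) analyticOnNhd_const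
    (fun _ hz => one_sub_mem_slitPlane hz)

lemma Pf_deriv (mu : ℝ) {u : ℂ} (hu : u ∈ Metric.ball (0:ℂ) 1) :
    deriv (Pf mu) u = -(mu : ℂ) * Pf (mu - 1) u := by
  have hb : HasDerivAt (fun u : ℂ => 1 - u) (-1) u := (hasDerivAt_id u).const_sub 1
  have hd := hb.cpow_const (c := (mu : ℂ)) (one_sub_mem_slitPlane hu)
  simp only [Pf]
  rw [show deriv (Pf mu) u = deriv (fun u : ℂ => (1 - u)^(mu:ℂ)) u from rfl, hd.deriv]
  push_cast
  ring

lemma Pf_iter (m : ℕ) (mu : ℝ) :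
    iteratedDeriv m (Pf mu) 0 =
      ((((-1 : ℝ) ^ m * ∏ i ∈ Finset.range m, (mu - i) : ℝ)) : ℂ) := by
  induction m generalizing mu with
  | zero => simp [Pf]
  | succ m ih =>
    rw [iteratedDeriv_succ']
    have h1 : ∀ z ∈ Metric.ball (0:ℂ) 1, deriv (Pf mu) z = -(mu:ℂ) * Pf (mu - 1) z :=
      fun z hz => Pf_deriv mu hz
    rw [iter_congr h1 m, iter_cmul (Pf_analytic (mu - 1)) _ m, ih (mu - 1)]
    have hreal : ((-1:ℝ)) ^ (m+1) * ∏ i ∈ Finset.range (m+1), (mu - i)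
        = -mu * ((-1:ℝ) ^ m * ∏ i ∈ Finset.range m, ((mu - 1) - i)) := by
      rw [Finset.prod_range_succ']
      have h2 : ∀ i ∈ Finset.range m, (mu - 1 - (i:ℝ)) = (mu - ((i:ℕ) + 1 : ℕ)) := by
        intro i _; push_cast; ring
      rw [Finset.prod_congr rfl h2]
      push_cast
      ring
    rw [hreal]
    push_cast
    ring

end NCI


end

/-- If `f = (f¹, …, fᵖ) : Δ → Δᵖ` is holomorphic with `f(0) = 0`, all components
non-constant, and `∏ⱼ (1 - |fʲ(w)|²) = (1 - |w|²)^λ` on `Δ`, then `λ` is an integer with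
`1 ≤ λ ≤ p`. -/
theorem normalizing_constant_is_integer (p : ℕ) (hp : 2 ≤ p) (lam : ℝ) (hlam : 0 < lam)
    (f : Fin p → ℂ → ℂ)
    (hol : ∀ j, DifferentiableOn ℂ (f j) (Metric.ball 0 1))
    (hmap : ∀ j, ∀ w ∈ Metric.ball (0 : ℂ) 1, ‖f j w‖ < 1)
    (h0 : ∀ j, f j 0 = 0)
    (hnc : ∀ j, ∃ w ∈ Metric.ball (0 : ℂ) 1, ∃ w' ∈ Metric.ball (0 : ℂ) 1, f j w ≠ f j w')
    (hiso : ∀ w ∈ Metric.ball (0 : ℂ) 1,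
      ∏ j, (1 - ‖f j w‖ ^ 2) = (1 - ‖w‖ ^ 2) ^ lam) :
    ∃ k : ℕ, 1 ≤ k ∧ k ≤ p ∧ lam = k := by
  classical
  have hA : ∀ j, AnalyticOnNhd ℂ (f j) (Metric.ball (0:ℂ) 1) := fun j =>
    (hol j).analyticOnNhd Metric.isOpen_ball
  set fc : Fin p → ℂ → ℂ := fun j w => (starRingEnd ℂ) (f j ((starRingEnd ℂ) w)) with hfc
  have hAc : ∀ j, AnalyticOnNhd ℂ (fc j) (Metric.ball (0:ℂ) 1) := fun j =>
    NCI.analyticOnNhd_conj_refl (hA j)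
  have hmapD : ∀ j, ∀ w ∈ Metric.ball (0:ℂ) 1, f j w ∈ Metric.ball (0:ℂ) 1 := fun j w hw =>
    NCI.mem_D_iff.mpr (hmap j w hw)
  have hmapDc : ∀ j, ∀ w ∈ Metric.ball (0:ℂ) 1, fc j w ∈ Metric.ball (0:ℂ) 1 := fun j w hw =>
    NCI.conj_mem_D (hmapD j _ (NCI.conj_mem_D hw))
  set E : ℂ → ℂ → ℂ := fun z w =>
    (∏ j, (1 - f j z * fc j w)) - (1 - z * w) ^ (lam : ℂ) with hE
  -- generic analyticity of E along two analytic maps into the disk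
  have hEan : ∀ (U : Set ℂ) (φ ψ : ℂ → ℂ), AnalyticOnNhd ℂ φ U → AnalyticOnNhd ℂ ψ U →
      Set.MapsTo φ U (Metric.ball (0:ℂ) 1) → Set.MapsTo ψ U (Metric.ball (0:ℂ) 1) →
      AnalyticOnNhd ℂ (fun u => E (φ u) (ψ u)) U := by
    intro U φ ψ hφ hψ hmφ hmψ
    apply AnalyticOnNhd.sub
    · apply Finset.analyticOnNhd_fun_prod
      intro j _
      exact analyticOnNhd_const.sub (((hA j).comp hφ hmφ).mul ((hAc j).comp hψ hmψ))
    · apply AnalyticOnNhd.cpow (analyticOnNhd_const.sub (hφ.mul hψ)) analyticOnNhd_const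
      intro u hu
      exact NCI.one_sub_mem_slitPlane (NCI.mul_mem_D (hmφ hu) (hmψ hu))
  -- diagonal identity
  have hdiag : ∀ z ∈ Metric.ball (0:ℂ) 1, E z ((starRingEnd ℂ) z) = 0 := by
    intro z hz
    have h1 : ∀ j, fc j ((starRingEnd ℂ) z) = (starRingEnd ℂ) (f j z) := fun j => by
      simp only [hfc, Complex.conj_conj]
    have h2 : (∏ j, (1 - f j z * fc j ((starRingEnd ℂ) z)))
        = (((∏ j, (1 - ‖f j z‖ ^ 2)) : ℝ) : ℂ) := by
      rw [Complex.ofReal_prod]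
      apply Finset.prod_congr rfl
      intro j _
      rw [h1 j, Complex.mul_conj, Complex.normSq_eq_norm_sq]
      push_cast
      ring
    have h3 : (1 : ℂ) - z * (starRingEnd ℂ) z = (((1 - ‖z‖ ^ 2) : ℝ) : ℂ) := by
      rw [Complex.mul_conj, Complex.normSq_eq_norm_sq]
      push_cast
      ring
    have h4 : (0:ℝ) ≤ 1 - ‖z‖ ^ 2 := by
      have := NCI.mem_D_iff.mp hz
      nlinarith [norm_nonneg z]
    simp only [hE]
    rw [h2, h3, ← Complex.ofReal_cpow h4, hiso z hz]
    exact sub_self _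
  -- Step 1 of polarization
  have hst1 : ∀ v : ℝ, |v| < 1/4 → ∀ u ∈ Metric.ball (0:ℂ) (1/4),
      E (u + (v:ℂ) * Complex.I) (u - (v:ℂ) * Complex.I) = 0 := by
    intro v hv
    have hmφ : Set.MapsTo (fun u : ℂ => u + (v:ℂ) * Complex.I)
        (Metric.ball (0:ℂ) (1/4)) (Metric.ball (0:ℂ) 1) := by
      intro u hu
      rw [NCI.mem_D_iff]
      have h1 : ‖u‖ < 1/4 := by
        simpa [Complex.dist_eq] using mem_ball.mp hu
      calc ‖u + (v:ℂ) * Complex.I‖ ≤ ‖u‖ + ‖(v:ℂ) * Complex.I‖ :=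
            norm_add_le _ _
        _ < 1 := by
            simp only [norm_mul, Complex.norm_I, Complex.norm_real, Real.norm_eq_abs, mul_one]
            linarith
    have hmψ : Set.MapsTo (fun u : ℂ => u - (v:ℂ) * Complex.I)
        (Metric.ball (0:ℂ) (1/4)) (Metric.ball (0:ℂ) 1) := by
      intro u hu
      rw [NCI.mem_D_iff]
      have h1 : ‖u‖ < 1/4 := by
        simpa [Complex.dist_eq] using mem_ball.mp hu
      calc ‖u - (v:ℂ) * Complex.I‖ ≤ ‖u‖ + ‖(v:ℂ) * Complex.I‖ := by
            rw [sub_eq_add_neg]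
            simpa using norm_add_le u (-((v:ℂ) * Complex.I))
        _ < 1 := by
            simp only [norm_mul, Complex.norm_I, Complex.norm_real, Real.norm_eq_abs, mul_one]
            linarith
    have han := hEan _ _ _ (analyticOnNhd_id.add analyticOnNhd_const)
      (analyticOnNhd_id.sub analyticOnNhd_const) hmφ hmψ
    have hzeros : ∃ᶠ u in 𝓝[≠] (0:ℂ), E (u + (v:ℂ) * Complex.I) (u - (v:ℂ) * Complex.I) = 0 := by
      apply NCI.frequently_real_zero (by norm_num : (0:ℝ) < 1/4)
      intro t ht0 htlt
      have hconj : ((t:ℂ) - (v:ℂ) * Complex.I) = (starRingEnd ℂ) ((t:ℂ) + (v:ℂ) * Complex.I) := by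
        simp [map_add, Complex.conj_ofReal, Complex.conj_I]
        ring
      rw [hconj]
      apply hdiag
      rw [NCI.mem_D_iff]
      calc ‖(t:ℂ) + (v:ℂ) * Complex.I‖
          ≤ ‖(t:ℂ)‖ + ‖(v:ℂ) * Complex.I‖ := norm_add_le _ _
        _ < 1 := by
            simp only [norm_mul, Complex.norm_I, Complex.norm_real, Real.norm_eq_abs, mul_one]
            rw [abs_of_pos ht0]
            linarith
    have := han.eqOn_zero_of_preconnected_of_frequently_eq_zero
      (convex_ball (0:ℂ) (1/4)).isPreconnected (by simp : (0:ℂ) ∈ Metric.ball (0:ℂ) (1/4)) hzeros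
    intro u hu
    exact this hu
  -- Step 2
  have hst2 : ∀ u ∈ Metric.ball (0:ℂ) (1/4), ∀ v ∈ Metric.ball (0:ℂ) (1/4),
      E (u + v * Complex.I) (u - v * Complex.I) = 0 := by
    intro u hu
    have hmφ : Set.MapsTo (fun v : ℂ => u + v * Complex.I)
        (Metric.ball (0:ℂ) (1/4)) (Metric.ball (0:ℂ) 1) := by
      intro v hv
      rw [NCI.mem_D_iff]
      have h1 : ‖v‖ < 1/4 := by simpa [Complex.dist_eq] using mem_ball.mp hv
      have h2 : ‖u‖ < 1/4 := by simpa [Complex.dist_eq] using mem_ball.mp hu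
      calc ‖u + v * Complex.I‖ ≤ ‖u‖ + ‖v * Complex.I‖ :=
            norm_add_le _ _
        _ < 1 := by
            simp only [norm_mul, Complex.norm_I, mul_one]
            linarith
    have hmψ : Set.MapsTo (fun v : ℂ => u - v * Complex.I)
        (Metric.ball (0:ℂ) (1/4)) (Metric.ball (0:ℂ) 1) := by
      intro v hv
      rw [NCI.mem_D_iff]
      have h1 : ‖v‖ < 1/4 := by simpa [Complex.dist_eq] using mem_ball.mp hv
      have h2 : ‖u‖ < 1/4 := by simpa [Complex.dist_eq] using mem_ball.mp hu
      calc ‖u - v * Complex.I‖ ≤ ‖u‖ + ‖v * Complex.I‖ := by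
            rw [sub_eq_add_neg]
            simpa using norm_add_le u (-(v * Complex.I))
        _ < 1 := by
            simp only [norm_mul, Complex.norm_I, mul_one]
            linarith
    have han := hEan _ _ _ (analyticOnNhd_const.add (analyticOnNhd_id.mul analyticOnNhd_const))
      (analyticOnNhd_const.sub (analyticOnNhd_id.mul analyticOnNhd_const)) hmφ hmψ
    have hzeros : ∃ᶠ v in 𝓝[≠] (0:ℂ), E (u + v * Complex.I) (u - v * Complex.I) = 0 := by
      apply NCI.frequently_real_zero (by norm_num : (0:ℝ) < 1/4)
      intro t ht0 htlt
      have habs : |t| < 1/4 := by rw [abs_of_pos ht0]; exact htlt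
      exact hst1 t habs u hu
    have := han.eqOn_zero_of_preconnected_of_frequently_eq_zero
      (convex_ball (0:ℂ) (1/4)).isPreconnected (by simp : (0:ℂ) ∈ Metric.ball (0:ℂ) (1/4)) hzeros
    intro v hv
    exact this hv
  -- Step 3
  have hst3 : ∀ z ∈ Metric.ball (0:ℂ) (1/8), ∀ w ∈ Metric.ball (0:ℂ) (1/8), E z w = 0 := by
    intro z hz w hw
    have hz' : ‖z‖ < 1/8 := by simpa [Complex.dist_eq] using mem_ball.mp hz
    have hw' : ‖w‖ < 1/8 := by simpa [Complex.dist_eq] using mem_ball.mp hw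
    set u : ℂ := (z + w) / 2 with hu
    set v : ℂ := (w - z) * Complex.I / 2 with hv
    have h1 : u + v * Complex.I = z := by
      rw [hu, hv]
      linear_combination ((w - z)/2) * Complex.I_sq
    have h2 : u - v * Complex.I = w := by
      rw [hu, hv]
      linear_combination (-(w - z)/2) * Complex.I_sq
    have hum : u ∈ Metric.ball (0:ℂ) (1/4) := by
      rw [mem_ball, Complex.dist_eq, sub_zero, hu, norm_div, Complex.norm_two]
      have h5 := norm_add_le z w
      linarith
    have hvm : v ∈ Metric.ball (0:ℂ) (1/4) := by
      rw [mem_ball, Complex.dist_eq, sub_zero, hv, norm_div, norm_mul, Complex.norm_I,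
        Complex.norm_two, mul_one]
      have h5 : ‖w - z‖ ≤ ‖w‖ + ‖z‖ := by
        rw [sub_eq_add_neg]; simpa using norm_add_le w (-z)
      linarith
    have h6 := hst2 u hum v hvm
    rw [h1, h2] at h6
    exact h6
  -- Step 4
  have hst4 : ∀ w ∈ Metric.ball (0:ℂ) (1/8), ∀ z ∈ Metric.ball (0:ℂ) 1, E z w = 0 := by
    intro w hw
    have hw1 : w ∈ Metric.ball (0:ℂ) 1 := by
      have : ‖w‖ < 1/8 := by simpa [Complex.dist_eq] using mem_ball.mp hw
      rw [NCI.mem_D_iff]; linarith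
    have han := hEan (Metric.ball (0:ℂ) 1) _ _ analyticOnNhd_id analyticOnNhd_const
      (Set.mapsTo_id _) (fun x _ => hw1)
    have hzeros : ∃ᶠ z in 𝓝[≠] (0:ℂ), E z w = 0 := by
      have hmem : Metric.ball (0:ℂ) (1/8) ∈ 𝓝 (0:ℂ) :=
        Metric.isOpen_ball.mem_nhds (by simp)
      apply Filter.Eventually.frequently
      filter_upwards [mem_nhdsWithin_of_mem_nhds hmem] with z hz
      exact hst3 z hz w hw
    have heq := han.eqOn_zero_of_preconnected_of_frequently_eq_zero
      (convex_ball (0:ℂ) 1).isPreconnected (by simp) hzeros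
    intro z hz
    exact heq hz
  -- full polarized identity
  have hpol : ∀ z ∈ Metric.ball (0:ℂ) 1, ∀ w ∈ Metric.ball (0:ℂ) 1,
      (∏ j, (1 - f j z * fc j w)) = (1 - z * w) ^ (lam:ℂ) := by
    intro z hz
    have han := hEan (Metric.ball (0:ℂ) 1) _ _ analyticOnNhd_const analyticOnNhd_id
      (fun x _ => hz) (Set.mapsTo_id _)
    have hzeros : ∃ᶠ w in 𝓝[≠] (0:ℂ), E z w = 0 := by
      have hmem : Metric.ball (0:ℂ) (1/8) ∈ 𝓝 (0:ℂ) :=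
        Metric.isOpen_ball.mem_nhds (by simp)
      apply Filter.Eventually.frequently
      filter_upwards [mem_nhdsWithin_of_mem_nhds hmem] with w hw
      exact hst4 w hw z hz
    have heq := han.eqOn_zero_of_preconnected_of_frequently_eq_zero
      (convex_ball (0:ℂ) 1).isPreconnected (by simp) hzeros
    intro w hw
    have h8 : (∏ j, (1 - f j z * fc j w)) - (1 - z * w) ^ (lam:ℂ) = 0 := heq hw
    exact sub_eq_zero.mp h8
  -- subset expansion
  set F : Finset (Fin p) → ℂ → ℂ := fun S z => ∏ j ∈ S, f j z with hF
  set Fc : Finset (Fin p) → ℂ → ℂ := fun S w => ∏ j ∈ S, fc j w with hFcdef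
  have hexp : ∀ z ∈ Metric.ball (0:ℂ) 1, ∀ w ∈ Metric.ball (0:ℂ) 1,
      ∑ S : Finset (Fin p), (-1:ℂ) ^ S.card * (F S z * Fc S w) = (1 - z * w) ^ (lam:ℂ) := by
    intro z hz w hw
    rw [← hpol z hz w hw]
    have h1 : (∏ j, ((1:ℂ) - f j z * fc j w)) = ∏ j, (-(f j z * fc j w) + 1) :=
      Finset.prod_congr rfl fun j _ => by ring
    rw [h1, Finset.prod_add, Finset.powerset_univ]
    apply Finset.sum_congr rfl
    intro S _
    rw [Finset.prod_const_one, mul_one]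
    have h2 : (∏ j ∈ S, -(f j z * fc j w)) = ∏ j ∈ S, ((-1) * (f j z * fc j w)) := by
      apply Finset.prod_congr rfl; intro j _; ring
    rw [h2, Finset.prod_mul_distrib, Finset.prod_const, Finset.prod_mul_distrib]
  -- analyticity of the products
  have hFan : ∀ S : Finset (Fin p), AnalyticOnNhd ℂ (F S) (Metric.ball (0:ℂ) 1) := fun S =>
    Finset.analyticOnNhd_fun_prod _ (fun j _ => hA j)
  have hFcan : ∀ S : Finset (Fin p), AnalyticOnNhd ℂ (Fc S) (Metric.ball (0:ℂ) 1) := fun S =>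
    Finset.analyticOnNhd_fun_prod _ (fun j _ => hAc j)
  -- Taylor coefficients (scaled by factorials)
  set α : Finset (Fin p) → ℕ → ℂ := fun S m => iteratedDeriv m (F S) 0 with hα
  have hFcconj : ∀ S, Fc S = fun w => (starRingEnd ℂ) (F S ((starRingEnd ℂ) w)) := by
    intro S
    funext w
    rw [hFcdef, hF]
    simp [hfc, map_prod]
  have hFciter : ∀ S n, iteratedDeriv n (Fc S) 0 = (starRingEnd ℂ) (α S n) := by
    intro S n
    rw [hFcconj S, hα]
    exact NCI.iter_conj_refl (hFan S) n
  -- the binomial-type coefficients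
  set A : ℕ → ℝ := fun m => (-1:ℝ) ^ m * ∏ i ∈ Finset.range m, (lam - i) with hAdef
  -- first coefficient extraction (in z)
  have hEm : ∀ (m : ℕ), ∀ w ∈ Metric.ball (0:ℂ) 1,
      ∑ S : Finset (Fin p), ((-1:ℂ) ^ S.card * α S m) * Fc S w = ((A m : ℝ) : ℂ) * w ^ m := by
    intro m w hw
    have hL : iteratedDeriv m
        (fun z => ∑ S : Finset (Fin p), ((-1:ℂ) ^ S.card * Fc S w) * F S z) 0
        = ∑ S : Finset (Fin p), ((-1:ℂ) ^ S.card * Fc S w) * α S m := by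
      rw [NCI.iter_sum Finset.univ _ (fun S _ => analyticOnNhd_const.mul (hFan S)) m]
      exact Finset.sum_congr rfl fun S _ => NCI.iter_cmul (hFan S) _ m
    have hR : iteratedDeriv m (fun z => NCI.Pf lam (z * w)) 0 = w ^ m * ((A m : ℝ) : ℂ) := by
      rw [NCI.iter_dilate (NCI.Pf_analytic lam) hw m, NCI.Pf_iter m lam, hAdef]
    have heq2 : iteratedDeriv m
        (fun z => ∑ S : Finset (Fin p), ((-1:ℂ) ^ S.card * Fc S w) * F S z) 0
        = iteratedDeriv m (fun z => NCI.Pf lam (z * w)) 0 := by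
      apply NCI.iter_congr
      intro z hz
      have h3 : ∑ S : Finset (Fin p), ((-1:ℂ) ^ S.card * Fc S w) * F S z
          = ∑ S : Finset (Fin p), (-1:ℂ) ^ S.card * (F S z * Fc S w) := by
        apply Finset.sum_congr rfl; intro S _; ring
      rw [h3, hexp z hz w hw]
      rfl
    rw [hL] at heq2
    calc ∑ S : Finset (Fin p), ((-1:ℂ) ^ S.card * α S m) * Fc S w
        = ∑ S : Finset (Fin p), ((-1:ℂ) ^ S.card * Fc S w) * α S m := by
          apply Finset.sum_congr rfl; intro S _; ring
      _ = iteratedDeriv m (fun z => NCI.Pf lam (z * w)) 0 := heq2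
      _ = w ^ m * ((A m : ℝ) : ℂ) := hR
      _ = ((A m : ℝ) : ℂ) * w ^ m := mul_comm _ _
  -- second coefficient extraction (in w): the matrix identity
  have hmat : ∀ m n : ℕ,
      ∑ S : Finset (Fin p), (-1:ℂ) ^ S.card * (α S m * (starRingEnd ℂ) (α S n))
      = if n = m then (m.factorial : ℂ) * ((A m : ℝ) : ℂ) else 0 := by
    intro m n
    have hL : iteratedDeriv n
        (fun w => ∑ S : Finset (Fin p), ((-1:ℂ) ^ S.card * α S m) * Fc S w) 0
        = ∑ S : Finset (Fin p), ((-1:ℂ) ^ S.card * α S m) * (starRingEnd ℂ) (α S n) := by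
      rw [NCI.iter_sum Finset.univ _ (fun S _ => analyticOnNhd_const.mul (hFcan S)) n]
      apply Finset.sum_congr rfl
      intro S _
      rw [NCI.iter_cmul (hFcan S) _ n, hFciter S n]
    have hR : iteratedDeriv n (fun w : ℂ => ((A m : ℝ) : ℂ) * w ^ m) 0
        = ((A m : ℝ) : ℂ) * (if n = m then (m.factorial : ℂ) else 0) := by
      rw [NCI.iter_cmul (g := fun w : ℂ => w ^ m) (analyticOnNhd_id.pow m) _ n, NCI.iter_monomial m n]
    have heq2 : iteratedDeriv n
        (fun w => ∑ S : Finset (Fin p), ((-1:ℂ) ^ S.card * α S m) * Fc S w) 0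
        = iteratedDeriv n (fun w : ℂ => ((A m : ℝ) : ℂ) * w ^ m) 0 := by
      apply NCI.iter_congr
      intro w hw
      exact hEm m w hw
    rw [hL, hR] at heq2
    calc ∑ S : Finset (Fin p), (-1:ℂ) ^ S.card * (α S m * (starRingEnd ℂ) (α S n))
        = ∑ S : Finset (Fin p), ((-1:ℂ) ^ S.card * α S m) * (starRingEnd ℂ) (α S n) := by
          apply Finset.sum_congr rfl; intro S _; ring
      _ = ((A m : ℝ) : ℂ) * (if n = m then (m.factorial : ℂ) else 0) := heq2
      _ = if n = m then (m.factorial : ℂ) * ((A m : ℝ) : ℂ) else 0 := by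
          split_ifs with h
          · ring
          · ring
  -- first derivatives
  set d : Fin p → ℂ := fun j => deriv (f j) 0 with hd
  have h0mem : (0:ℂ) ∈ Metric.ball (0:ℂ) 1 := by simp
  have hα0 : α ∅ 1 = 0 := by
    simp only [hα]
    have h1 : F ∅ = fun _ => (1:ℂ) := by funext z; simp only [hF]; exact Finset.prod_empty
    rw [h1, iteratedDeriv_one]
    exact deriv_const 0 1
  have hαsing : ∀ j, α ({j} : Finset (Fin p)) 1 = d j := by
    intro j
    simp only [hα, hd]
    have h1 : F {j} = f j := by
      funext z; simp only [hF]; simp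
    rw [h1, iteratedDeriv_one]
  have hαbig : ∀ S : Finset (Fin p), 2 ≤ S.card → α S 1 = 0 := by
    intro S hS
    obtain ⟨j, hj⟩ := Finset.card_pos.mp (Nat.lt_of_lt_of_le Nat.zero_lt_two hS)
    have hrw : F S = fun z => f j z * ∏ k ∈ S.erase j, f k z := by
      funext z
      simp only [hF]
      exact (Finset.mul_prod_erase S _ hj).symm
    simp only [hα]
    rw [hrw, iteratedDeriv_one]
    have h1 : DifferentiableAt ℂ (f j) 0 := (hA j 0 h0mem).differentiableAt
    have h2 : DifferentiableAt ℂ (fun z => ∏ k ∈ S.erase j, f k z) 0 :=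
      ((Finset.analyticOnNhd_fun_prod (S.erase j) (fun k _ => hA k)) 0 h0mem).differentiableAt
    rw [deriv_fun_mul h1 h2]
    have h3 : (∏ k ∈ S.erase j, f k 0) = 0 := by
      obtain ⟨k, hk⟩ : (S.erase j).Nonempty := by
        rw [← Finset.card_pos, Finset.card_erase_of_mem hj]; omega
      exact Finset.prod_eq_zero hk (h0 k)
    rw [h0 j, h3]
    ring
  have hsum1 : ∑ S : Finset (Fin p), (-1:ℂ) ^ S.card * (α S 1 * (starRingEnd ℂ) (α S 1))
      = - ∑ j, d j * (starRingEnd ℂ) (d j) := by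
    have hzero : ∀ S ∈ (Finset.univ : Finset (Finset (Fin p))),
        S ∉ (Finset.univ : Finset (Fin p)).image (fun j => ({j} : Finset (Fin p))) →
        (-1:ℂ) ^ S.card * (α S 1 * (starRingEnd ℂ) (α S 1)) = 0 := by
      intro S _ hS
      have hcard : S.card ≠ 1 := by
        intro hc
        obtain ⟨j, hj⟩ := Finset.card_eq_one.mp hc
        exact hS (Finset.mem_image.mpr ⟨j, Finset.mem_univ j, hj.symm⟩)
      rcases Nat.lt_or_ge S.card 2 with h | h
      · have h4 : S.card = 0 := by omega
        rw [Finset.card_eq_zero.mp h4, hα0]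
        ring
      · rw [hαbig S h]
        ring
    rw [← Finset.sum_subset (Finset.subset_univ
      ((Finset.univ : Finset (Fin p)).image fun j => ({j} : Finset (Fin p)))) hzero]
    rw [Finset.sum_image (fun a _ b _ hab => Finset.singleton_injective hab)]
    rw [← Finset.sum_neg_distrib]
    apply Finset.sum_congr rfl
    intro j _
    rw [hαsing j, Finset.card_singleton]
    ring
  have hA1 : A 1 = -lam := by
    rw [hAdef]
    simp
  have hlamsum : ∑ j, d j * (starRingEnd ℂ) (d j) = ((lam : ℝ) : ℂ) := by
    have h5 := hmat 1 1
    rw [hsum1, if_pos rfl, hA1, Nat.factorial_one] at h5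
    push_cast at h5 ⊢
    linear_combination -h5
  have hreal : ∑ j, Complex.normSq (d j) = lam := by
    have h1 : ((∑ j, Complex.normSq (d j) : ℝ) : ℂ) = ((lam:ℝ):ℂ) := by
      push_cast
      rw [← hlamsum]
      apply Finset.sum_congr rfl
      intro j _
      exact (Complex.mul_conj _).symm
    exact_mod_cast h1
  have hlamlep : lam ≤ p := by
    have h1 : ∀ j, Complex.normSq (d j) ≤ 1 := by
      intro j
      have h2 : ‖deriv (f j) 0‖ ≤ 1 :=
        Complex.norm_deriv_le_one_of_mapsTo_ball (hol j)
          (fun w hw => by rw [h0 j]; exact Metric.ball_subset_closedBall (hmapD j w hw)) one_pos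
      rw [hd, Complex.normSq_eq_norm_sq]
      nlinarith [norm_nonneg (deriv (f j) 0)]
    calc lam = ∑ j, Complex.normSq (d j) := hreal.symm
      _ ≤ ∑ _j : Fin p, (1:ℝ) := Finset.sum_le_sum (fun j _ => h1 j)
      _ = p := by simp
  -- integrality
  have hint : ∃ n : ℕ, lam = n := by
    by_contra hno
    push_neg at hno
    have hAne : ∀ m, A m ≠ 0 := by
      intro m
      rw [hAdef]
      apply mul_ne_zero (pow_ne_zero _ (by norm_num))
      rw [Finset.prod_ne_zero_iff]
      intro i _
      exact sub_ne_zero.mpr (hno i)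
    set m1 : ℕ := Nat.floor lam + 1 with hm1
    have hm1lt : lam < m1 := by
      rw [hm1]
      push_cast
      exact Nat.lt_floor_add_one lam
    have hrec : ∀ m : ℕ, A (m + 1) = ((m:ℝ) - lam) * A m := by
      intro m
      rw [hAdef]
      simp only
      rw [pow_succ, Finset.prod_range_succ]
      ring
    have hposA : ∀ i : ℕ, ∃ c : ℝ, 0 < c ∧ A (m1 + i) = c * A m1 := by
      intro i
      induction i with
      | zero => exact ⟨1, one_pos, (one_mul _).symm⟩
      | succ i ih =>
        obtain ⟨c, hc, hAc2⟩ := ih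
        refine ⟨(((m1 + i : ℕ) : ℝ) - lam) * c, ?_, ?_⟩
        · apply mul_pos _ hc
          have h6 : (m1:ℝ) ≤ ((m1 + i : ℕ) : ℝ) := by push_cast; linarith [Nat.cast_nonneg (α := ℝ) i]
          linarith
        · have h7 : m1 + (i + 1) = (m1 + i) + 1 := rfl
          rw [h7, hrec, hAc2]
          ring
    choose cpos hcpos hAeq using hposA
    set N : ℕ := 2 ^ p + 1 with hN
    set k : Fin N → ℕ := fun i => m1 + (i : ℕ) with hk
    set L : (Fin N → ℂ) →ₗ[ℂ] (Finset (Fin p) → ℂ) :=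
      { toFun := fun c S => ∑ i, c i * α S (k i)
        map_add' := by
          intro x y
          funext S
          simp [add_mul, Finset.sum_add_distrib]
        map_smul' := by
          intro r x
          funext S
          simp [Finset.mul_sum, mul_assoc] } with hL
    have hnotinj : ¬ Function.Injective L := by
      intro hinj
      have h8 := LinearMap.finrank_le_finrank_of_injective hinj
      rw [Module.finrank_fintype_fun_eq_card, Module.finrank_fintype_fun_eq_card,
        Fintype.card_finset, Fintype.card_fin, Fintype.card_fin] at h8
      omega
    obtain ⟨c1, c2, hc12, hc12ne⟩ : ∃ c1 c2, L c1 = L c2 ∧ c1 ≠ c2 := by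
      by_contra h9
      push_neg at h9
      exact hnotinj fun a b hab => h9 a b hab
    set c : Fin N → ℂ := c1 - c2 with hc
    have hcne : c ≠ 0 := sub_ne_zero.mpr hc12ne
    have hLc : ∀ S : Finset (Fin p), ∑ i, c i * α S (k i) = 0 := by
      intro S
      have h10 : L c = 0 := by
        rw [hc, map_sub, hc12, sub_self]
      exact congrFun h10 S
    -- compute the double sum in two ways
    have hT2 : ∑ S : Finset (Fin p), (-1:ℂ) ^ S.card *
          ((∑ i, c i * α S (k i)) * (starRingEnd ℂ) (∑ i, c i * α S (k i))) = 0 := by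
      apply Finset.sum_eq_zero
      intro S _
      rw [hLc S]
      ring
    have hT1 : ∑ S : Finset (Fin p), (-1:ℂ) ^ S.card *
          ((∑ i, c i * α S (k i)) * (starRingEnd ℂ) (∑ i, c i * α S (k i)))
        = ∑ i : Fin N, (c i * (starRingEnd ℂ) (c i)) *
            (((k i).factorial : ℂ) * ((A (k i) : ℝ) : ℂ)) := by
      have hexpand : ∀ S : Finset (Fin p), (-1:ℂ) ^ S.card *
            ((∑ i, c i * α S (k i)) * (starRingEnd ℂ) (∑ i, c i * α S (k i)))
          = ∑ i : Fin N, ∑ i' : Fin N, (c i * (starRingEnd ℂ) (c i')) *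
              ((-1:ℂ) ^ S.card * (α S (k i) * (starRingEnd ℂ) (α S (k i')))) := by
        intro S
        rw [map_sum, Finset.sum_mul_sum]
        rw [Finset.mul_sum]
        apply Finset.sum_congr rfl
        intro i _
        rw [Finset.mul_sum]
        apply Finset.sum_congr rfl
        intro i' _
        rw [map_mul]
        ring
      rw [Finset.sum_congr rfl (fun S _ => hexpand S)]
      rw [Finset.sum_comm]
      apply Finset.sum_congr rfl
      intro i _
      rw [Finset.sum_comm]
      have h11 : ∀ i' : Fin N,
          ∑ S : Finset (Fin p), (c i * (starRingEnd ℂ) (c i')) *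
              ((-1:ℂ) ^ S.card * (α S (k i) * (starRingEnd ℂ) (α S (k i'))))
          = (c i * (starRingEnd ℂ) (c i')) *
              (if k i' = k i then ((k i).factorial : ℂ) * ((A (k i) : ℝ) : ℂ) else 0) := by
        intro i'
        rw [← Finset.mul_sum, hmat (k i) (k i')]
      rw [Finset.sum_congr rfl (fun i' _ => h11 i')]
      rw [Finset.sum_eq_single i]
      · rw [if_pos rfl]
      · intro i' _ hne
        rw [if_neg, mul_zero]
        intro hkk
        apply hne
        have : (i' : ℕ) = (i : ℕ) := by
          rw [hk] at hkk
          simpa using hkk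
        exact Fin.ext this
      · intro habs
        exact absurd (Finset.mem_univ i) habs
    rw [hT2] at hT1
    -- convert to a real statement
    have hT3 : ((∑ i : Fin N, Complex.normSq (c i) *
        (((k i).factorial : ℝ) * A (k i)) : ℝ) : ℂ)
        = ∑ i : Fin N, (c i * (starRingEnd ℂ) (c i)) *
            (((k i).factorial : ℂ) * ((A (k i) : ℝ) : ℂ)) := by
      push_cast
      apply Finset.sum_congr rfl
      intro i _
      rw [← Complex.mul_conj]
    have hT4 : ∑ i : Fin N, Complex.normSq (c i) * (((k i).factorial : ℝ) * A (k i)) = 0 := by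
      have h15 := hT3.trans hT1.symm
      exact_mod_cast h15
    have hT5 : (∑ i : Fin N, Complex.normSq (c i) * (((k i).factorial : ℝ) * cpos (i:ℕ))) * A m1
        = 0 := by
      rw [Finset.sum_mul]
      rw [← hT4]
      apply Finset.sum_congr rfl
      intro i _
      rw [hk]
      simp only
      rw [hAeq (i:ℕ)]
      ring
    have hT6 : ∑ i : Fin N, Complex.normSq (c i) * (((k i).factorial : ℝ) * cpos (i:ℕ)) = 0 :=
      by
      rcases mul_eq_zero.mp hT5 with h | h
      · exact h
      · exact absurd h (hAne m1)
    have hT7 : ∀ i : Fin N, Complex.normSq (c i) * (((k i).factorial : ℝ) * cpos (i:ℕ)) = 0 := by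
      have hnonneg : ∀ i ∈ (Finset.univ : Finset (Fin N)),
          0 ≤ Complex.normSq (c i) * (((k i).factorial : ℝ) * cpos (i:ℕ)) := by
        intro i _
        apply mul_nonneg (Complex.normSq_nonneg _)
        apply mul_nonneg (by positivity) (le_of_lt (hcpos (i:ℕ)))
      intro i
      exact (Finset.sum_eq_zero_iff_of_nonneg hnonneg).mp hT6 i (Finset.mem_univ i)
    apply hcne
    funext i
    have h12 := hT7 i
    have h13 : (((k i).factorial : ℝ) * cpos (i:ℕ)) > 0 := by
      apply mul_pos (by positivity) (hcpos (i:ℕ))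
    have h14 : Complex.normSq (c i) = 0 := by
      rcases mul_eq_zero.mp h12 with h | h
      · exact h
      · exact absurd h (ne_of_gt h13)
    exact Complex.normSq_eq_zero.mp h14
  -- assemble
  obtain ⟨n, hn⟩ := hint
  have hn1 : 1 ≤ n := by
    rcases Nat.eq_zero_or_pos n with h | h
    · exfalso
      rw [h] at hn
      simp at hn
      exact absurd hn (ne_of_gt hlam)
    · exact h
  have hnp : n ≤ p := by
    have : (n : ℝ) ≤ p := by rw [← hn]; exact hlamlep
    exact_mod_cast this
  exact ⟨n, hn1, hnp, hn⟩
end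

section
/- Let p ≥ 2 be an integer and f = (f¹, …, f^p) : Δ → Δ^p a holomorphic map with f(0) = 0 such that every component f^j is non-constant and ∏_{j=1}^p (1 − |f^j(w)|²) = (1 − |w|²)^p for all w ∈ Δ. Then for each j there is a complex number c_j with |c_j| = 1 such that f^j(w) = c_j w for all w ∈ Δ; that is, f is the diagonal embedding w ↦ (w, …, w) up to reparametrizations. -/
open Metric Set

/-- If `f = (f¹, …, fᵖ) : Δ → Δᵖ` is holomorphic with `f(0) = 0`, all components
non-constant, and `∏ⱼ (1 - |fʲ(w)|²) = (1 - |w|²)^p` on `Δ`, then each component is a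
rotation `w ↦ cⱼ w` with `|cⱼ| = 1`; i.e. `f` is the diagonal embedding up to
reparametrizations. -/
theorem maximal_constant_diagonal (p : ℕ) (hp : 2 ≤ p)
    (f : Fin p → ℂ → ℂ)
    (hol : ∀ j, DifferentiableOn ℂ (f j) (Metric.ball 0 1))
    (hmap : ∀ j, ∀ w ∈ Metric.ball (0 : ℂ) 1, ‖f j w‖ < 1)
    (h0 : ∀ j, f j 0 = 0)
    (hnc : ∀ j, ∃ w ∈ Metric.ball (0 : ℂ) 1, ∃ w' ∈ Metric.ball (0 : ℂ) 1, f j w ≠ f j w')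
    (hiso : ∀ w ∈ Metric.ball (0 : ℂ) 1,
      ∏ j, (1 - ‖f j w‖ ^ 2) = (1 - ‖w‖ ^ 2) ^ p) :
    ∀ j, ∃ c : ℂ, ‖c‖ = 1 ∧ ∀ w ∈ Metric.ball (0 : ℂ) 1, f j w = c * w := by
  have hmaps : ∀ j, MapsTo (f j) (ball (0 : ℂ) 1) (ball (f j 0) 1) := by
    intro j w hw
    rw [h0 j, mem_ball_zero_iff]
    exact hmap j w hw
  -- Schwarz: |f j w| ≤ |w|
  have hschwarz : ∀ j, ∀ w ∈ ball (0 : ℂ) 1, ‖f j w‖ ≤ ‖w‖ := by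
    intro j w hw
    exact Complex.norm_le_norm_of_mapsTo_ball (hol j) (by simpa [h0 j] using (hmaps j).mono_right ball_subset_closedBall)
      (h0 j) (by simpa [mem_ball_zero_iff] using hw)
  -- equality: |f j w| = |w|
  have heq : ∀ j, ∀ w ∈ ball (0 : ℂ) 1, ‖f j w‖ = ‖w‖ := by
    intro j w hw
    by_contra hne
    have hlt : ‖f j w‖ < ‖w‖ :=
      lt_of_le_of_ne (hschwarz j w hw) hne
    have hw1 : ‖w‖ < 1 := by simpa [mem_ball_zero_iff] using hw
    have hpos : (0 : ℝ) < 1 - ‖w‖ ^ 2 := by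
      nlinarith [norm_nonneg w]
    have hprod : ∏ _j : Fin p, (1 - ‖w‖ ^ 2)
        < ∏ j, (1 - ‖f j w‖ ^ 2) := by
      refine Finset.prod_lt_prod (fun i _ => hpos) (fun i _ => ?_) ⟨j, Finset.mem_univ j, ?_⟩
      · nlinarith [hschwarz i w hw, norm_nonneg (f i w), norm_nonneg w]
      · nlinarith [norm_nonneg (f j w), norm_nonneg w]
    rw [Finset.prod_const, Finset.card_univ, Fintype.card_fin, hiso w hw] at hprod
    exact lt_irrefl _ hprod
  intro j
  -- equality case of Schwarz at z₀ = 1/2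
  have hz₀ : (1/2 : ℂ) ∈ ball (0 : ℂ) 1 := by
    simp [mem_ball_zero_iff]; norm_num
  have habs : ‖f j (1/2)‖ = 1/2 := by
    simpa using heq j (1/2) hz₀
  have hne0 : (1/2 : ℂ) ≠ 0 := by norm_num
  have hds : ‖dslope (f j) 0 (1/2)‖ = 1 / 1 := by
    rw [dslope_of_ne _ hne0, slope_def_field, norm_div,
      h0 j, sub_zero, habs]
    simp [map_div₀]
  have key := Complex.affine_of_mapsTo_ball_of_exists_norm_dslope_eq_div
    (hol j) ((hmaps j).mono_right ball_subset_closedBall) hz₀ hds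
  refine ⟨dslope (f j) 0 (1/2), ?_, ?_⟩
  · simpa using hds
  · intro w hw
    have := key hw
    simp only [h0 j, sub_zero, zero_add, smul_eq_mul] at this
    rw [this, mul_comm]
end

section
/- Let p ≥ 1 be an integer and λ₁, …, λ_p > 0 real constants with ∑_{j=1}^p λ_j = 1. Suppose f₁, …, f_p : Δ → Δ are holomorphic functions with f_j(0) = 0 for all j and ∏_{j=1}^p (1 − |f_j(w)|²)^{λ_j} = 1 − |w|² for all w ∈ Δ. Then for each j there is a complex number c_j with |c_j| = 1 such that f_j(w) = c_j w for all w ∈ Δ; i.e., f is the diagonal embedding up to reparametrizations. -/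
/-- If `f₁, …, f_p : Δ → Δ` are holomorphic with `fⱼ(0) = 0`,
`∏ⱼ (1 - |fⱼ(w)|²)^{λⱼ} = 1 - |w|²` on `Δ` for positive reals `λⱼ` with `∑ⱼ λⱼ = 1`,
then each component is a rotation `w ↦ cⱼ w` with `|cⱼ| = 1`; i.e. `f` is the diagonal
embedding up to reparametrizations. -/
theorem sum_one_implies_diagonal (p : ℕ) (hp : 1 ≤ p)
    (lam : Fin p → ℝ) (hlam : ∀ j, 0 < lam j) (hsum : ∑ j, lam j = 1)
    (f : Fin p → ℂ → ℂ)
    (hol : ∀ j, DifferentiableOn ℂ (f j) (Metric.ball 0 1))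
    (hmap : ∀ j, ∀ w ∈ Metric.ball (0 : ℂ) 1, ‖f j w‖ < 1)
    (h0 : ∀ j, f j 0 = 0)
    (hiso : ∀ w ∈ Metric.ball (0 : ℂ) 1,
      ∏ j, (1 - ‖f j w‖ ^ 2) ^ lam j = 1 - ‖w‖ ^ 2) :
    ∀ j, ∃ c : ℂ, ‖c‖ = 1 ∧ ∀ w ∈ Metric.ball (0 : ℂ) 1, f j w = c * w := by
  have hmaps : ∀ j, Set.MapsTo (f j) (Metric.ball 0 1) (Metric.ball (0 : ℂ) 1) := by
    intro j z hz
    rw [Metric.mem_ball, dist_zero_right]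
    exact hmap j z hz
  -- Schwarz lemma: |f j w| ≤ |w|
  have hle : ∀ j, ∀ w ∈ Metric.ball (0 : ℂ) 1, ‖f j w‖ ≤ ‖w‖ := by
    intro j w hw
    exact Complex.norm_le_norm_of_mapsTo_ball (hol j) ((hmaps j).mono_right Metric.ball_subset_closedBall) (h0 j)
      (mem_ball_zero_iff.1 hw)
  -- Equality: |f j w| = |w|
  have heq : ∀ j, ∀ w ∈ Metric.ball (0 : ℂ) 1, ‖f j w‖ = ‖w‖ := by
    intro j w hw
    have hw1 : ‖w‖ < 1 := mem_ball_zero_iff.1 hw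
    have hpos : (0 : ℝ) < 1 - ‖w‖ ^ 2 := by
      nlinarith [norm_nonneg w]
    by_contra hne
    have hlt : ‖f j w‖ < ‖w‖ := lt_of_le_of_ne (hle j w hw) hne
    have hfle : ∀ i, 1 - ‖w‖ ^ 2 ≤ 1 - ‖f i w‖ ^ 2 := fun i => by
      have h1 := hle i w hw
      nlinarith [norm_nonneg (f i w)]
    have hstrict : 1 - ‖w‖ ^ 2 < 1 - ‖f j w‖ ^ 2 := by
      nlinarith [norm_nonneg (f j w)]
    have key : (1 - ‖w‖ ^ 2 : ℝ) < ∏ i, (1 - ‖f i w‖ ^ 2) ^ lam i := by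
      calc (1 - ‖w‖ ^ 2 : ℝ)
          = ∏ i, (1 - ‖w‖ ^ 2) ^ lam i := by
            rw [← Real.rpow_sum_of_pos hpos, hsum, Real.rpow_one]
        _ < ∏ i, (1 - ‖f i w‖ ^ 2) ^ lam i := by
            refine Finset.prod_lt_prod (fun i _ => Real.rpow_pos_of_pos hpos _)
              (fun i _ => Real.rpow_le_rpow hpos.le (hfle i) (hlam i).le)
              ⟨j, Finset.mem_univ j, ?_⟩
            exact Real.rpow_lt_rpow hpos.le hstrict (hlam j)
    rw [hiso w hw] at key
    exact lt_irrefl _ key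
  -- Equality case of Schwarz lemma
  intro j
  have h12 : (1/2 : ℂ) ∈ Metric.ball (0 : ℂ) 1 := by
    simp [mem_ball_zero_iff]
    norm_num
  have habs12 : ‖f j (1/2)‖ = 1/2 := by
    have := heq j (1/2) h12
    simpa using this
  have hdn : ‖dslope (f j) 0 (1/2 : ℂ)‖ = 1 / 1 := by
    rw [dslope_of_ne _ (by norm_num : (1/2 : ℂ) ≠ 0)]
    rw [slope_def_field, h0 j]
    simp only [sub_zero]
    rw [norm_div]
    rw [habs12]
    norm_num
  have hmaps' : Set.MapsTo (f j) (Metric.ball 0 1) (Metric.ball (f j 0) 1) := by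
    rw [h0 j]; exact hmaps j
  have haff := Complex.affine_of_mapsTo_ball_of_norm_dslope_eq_div
    (hol j) (hmaps'.mono_right Metric.ball_subset_closedBall) h12 hdn
  refine ⟨dslope (f j) 0 (1/2 : ℂ), by simpa using hdn, fun w hw => ?_⟩
  have := haff hw
  simp only [h0 j, sub_zero, zero_add, smul_eq_mul] at this
  rw [this, mul_comm]
end

section
/- Let n ≥ 2 be an integer and f = (f₁, f_{2,1}, …, f_{2,n}) : Δ → ℂ^{n+1} a holomorphic map with |f₁(w)| < 1 and ∑_{j=1}^n |f_{2,j}(w)|² < 1 for all w ∈ Δ. Then the following are equivalent: (a) f(0) = 0 and (1 − |f₁(w)|²)(1 − ∑_{j=1}^n |f_{2,j}(w)|²) = 1 − |w|² for all w ∈ Δ; (b) there exists a unitary matrix U ∈ U(n+1) such that U · (f₁(w), f_{2,1}(w), …, f_{2,n}(w))ᵗ = (w, f₁(w) f_{2,1}(w), …, f₁(w) f_{2,n}(w))ᵗ for all w ∈ Δ. -/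
open Complex Metric Filter Set Topology
open scoped InnerProductSpace

local notation "conj'" => starRingEnd ℂ

/-- If `f` has a derivative at `conj z₀`, then `z ↦ conj (f (conj z))` has derivative
`conj d` at `z₀`. -/
lemma hasDerivAt_conj_conj {f : ℂ → ℂ} {d z₀ : ℂ}
    (hf : HasDerivAt f d (conj' z₀)) :
    HasDerivAt (fun z => conj' (f (conj' z))) (conj' d) z₀ := by
  rw [hasDerivAt_iff_tendsto_slope] at hf ⊢
  have hmap : Tendsto (fun z => conj' z) (𝓝[≠] z₀) (𝓝[≠] (conj' z₀)) := by
    apply Filter.Tendsto.inf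
    · exact (Complex.continuous_conj.tendsto z₀)
    · refine tendsto_principal_principal.2 fun z hz => ?_
      simp only [mem_compl_iff, mem_singleton_iff] at hz ⊢
      intro h; apply hz
      have := congrArg conj' h
      simpa using this
  have := ((Complex.continuous_conj.tendsto d).comp (hf.comp hmap))
  refine this.congr fun z => ?_
  simp only [Function.comp_apply, slope_def_field]
  rw [← map_sub, ← map_sub, map_div₀]
  simp

lemma diffOn_conj_conj {f : ℂ → ℂ} (hf : DifferentiableOn ℂ f (ball 0 1)) :
    DifferentiableOn ℂ (fun z => conj' (f (conj' z))) (ball 0 1) := by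
  intro z hz
  have hz' : conj' z ∈ ball (0 : ℂ) 1 := by
    simp only [mem_ball_zero_iff] at hz ⊢
    simpa using hz
  have hd := (hf.differentiableAt (isOpen_ball.mem_nhds hz')).hasDerivAt
  exact ((hasDerivAt_conj_conj hd).differentiableAt).differentiableWithinAt

/-- Identity theorem helper: a holomorphic function on a ball vanishing on a small
segment `z₀ + dir * s`, `s` real, vanishes on the whole ball. -/
lemma eqOn_zero_of_seg {g : ℂ → ℂ} {R : ℝ} (hg : DifferentiableOn ℂ g (ball 0 R))
    {z₀ dir : ℂ} (hz₀ : z₀ ∈ ball (0 : ℂ) R) (hdir : dir ≠ 0) {δ : ℝ} (hδ : 0 < δ)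
    (hzero : ∀ s : ℝ, |s| < δ → g (z₀ + dir * s) = 0) : EqOn g 0 (ball 0 R) := by
  have hanal := hg.analyticOnNhd isOpen_ball
  apply hanal.eqOn_zero_of_preconnected_of_mem_closure (convex_ball (0:ℂ) R).isPreconnected hz₀
  rw [Metric.mem_closure_iff]
  intro ε hε
  set s : ℝ := min (δ / 2) (ε / (2 * (‖dir‖ + 1))) with hs
  have hs0 : 0 < s := lt_min (by positivity) (by positivity)
  refine ⟨z₀ + dir * s, ⟨?_, ?_⟩, ?_⟩
  · apply hzero
    rw [abs_of_pos hs0]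
    calc s ≤ δ / 2 := min_le_left _ _
      _ < δ := by linarith
  · simp only [mem_singleton_iff]
    intro h
    have : dir * (s : ℂ) = 0 := by linear_combination h
    rcases mul_eq_zero.1 this with h' | h'
    · exact hdir h'
    · refine (ne_of_gt hs0) ?_
      have : (s:ℂ) = 0 := h'
      exact_mod_cast this
  · have : dist z₀ (z₀ + dir * s) = ‖dir‖ * s := by
      rw [dist_eq_norm]
      simp [norm_mul, abs_of_pos hs0]
    rw [this]
    have h1 : s ≤ ε / (2 * (‖dir‖ + 1)) := min_le_right _ _
    have h2 : (0:ℝ) ≤ ‖dir‖ := norm_nonneg _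
    calc ‖dir‖ * s ≤ ‖dir‖ * (ε / (2 * (‖dir‖ + 1))) := by
          exact mul_le_mul_of_nonneg_left h1 h2
      _ < ε := by
          rw [mul_div_assoc', div_lt_iff₀ (by positivity)]
          nlinarith

/-- Polarization: if two finite families of holomorphic functions on the unit disk have
equal pointwise "norms", their full Gram kernels agree. -/
lemma gram_polarization {ι : Type*} [Fintype ι] (u v : ι → ℂ → ℂ)
    (hu : ∀ i, DifferentiableOn ℂ (u i) (ball 0 1))
    (hv : ∀ i, DifferentiableOn ℂ (v i) (ball 0 1))
    (hdiag : ∀ w ∈ ball (0:ℂ) 1, ∑ i, u i w * conj' (u i w) = ∑ i, v i w * conj' (v i w)) :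
    ∀ w ∈ ball (0:ℂ) 1, ∀ z ∈ ball (0:ℂ) 1,
      ∑ i, u i w * conj' (u i z) = ∑ i, v i w * conj' (v i z) := by
  set gu : ι → ℂ → ℂ := fun i z => conj' (u i (conj' z)) with hgu
  set gv : ι → ℂ → ℂ := fun i z => conj' (v i (conj' z)) with hgv
  have hgud : ∀ i, DifferentiableOn ℂ (gu i) (ball 0 1) := fun i => diffOn_conj_conj (hu i)
  have hgvd : ∀ i, DifferentiableOn ℂ (gv i) (ball 0 1) := fun i => diffOn_conj_conj (hv i)
  set F : ℂ → ℂ → ℂ := fun w z => (∑ i, u i w * gu i z) - ∑ i, v i w * gv i z with hF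
  have hFdiag : ∀ x ∈ ball (0:ℂ) 1, F x (conj' x) = 0 := by
    intro x hx
    simp only [hF, hgu, hgv, Complex.conj_conj, sub_eq_zero]
    exact hdiag x hx
  -- Step A : vanishing along complexified diagonal directions
  have stepA : ∀ a ∈ ball (0:ℂ) 1, ∀ t : ℂ, ‖t‖ < 1 - ‖a‖ → F (a + t) (conj' a + t) = 0 := by
    intro a ha t ht
    rw [mem_ball_zero_iff] at ha
    have hr : (0:ℝ) < 1 - ‖a‖ := by linarith
    have hmaps1 : ∀ t' ∈ ball (0:ℂ) (1 - ‖a‖), a + t' ∈ ball (0:ℂ) 1 := by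
      intro t' ht'
      rw [mem_ball_zero_iff] at ht' ⊢
      calc ‖a + t'‖ ≤ ‖a‖ + ‖t'‖ := norm_add_le _ _
        _ < 1 := by linarith
    have hmaps2 : ∀ t' ∈ ball (0:ℂ) (1 - ‖a‖), conj' a + t' ∈ ball (0:ℂ) 1 := by
      intro t' ht'
      rw [mem_ball_zero_iff] at ht' ⊢
      calc ‖conj' a + t'‖ ≤ ‖conj' a‖ + ‖t'‖ := norm_add_le _ _
        _ = ‖a‖ + ‖t'‖ := by rw [RCLike.norm_conj]
        _ < 1 := by linarith
    have hgd : DifferentiableOn ℂ (fun t' => F (a + t') (conj' a + t')) (ball 0 (1 - ‖a‖)) := by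
      have hd1 : DifferentiableOn ℂ (fun t' : ℂ => a + t') (ball 0 (1 - ‖a‖)) :=
        (differentiable_id.const_add a).differentiableOn
      have hd2 : DifferentiableOn ℂ (fun t' : ℂ => conj' a + t') (ball 0 (1 - ‖a‖)) :=
        (differentiable_id.const_add (conj' a)).differentiableOn
      apply DifferentiableOn.sub <;> apply DifferentiableOn.fun_sum <;> intro i _
      · exact ((hu i).comp hd1 hmaps1).mul ((hgud i).comp hd2 hmaps2)
      · exact ((hv i).comp hd1 hmaps1).mul ((hgvd i).comp hd2 hmaps2)
    have hzeros : ∀ s : ℝ, |s| < 1 - ‖a‖ →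
        (fun t' => F (a + t') (conj' a + t')) ((0:ℂ) + 1 * s) = 0 := by
      intro s hs
      have habs : ‖(s : ℂ)‖ < 1 - ‖a‖ := by rwa [Complex.norm_real, Real.norm_eq_abs]
      have hmem : a + (s : ℂ) ∈ ball (0:ℂ) 1 := by
        rw [mem_ball_zero_iff]
        calc ‖a + (s:ℂ)‖ ≤ ‖a‖ + ‖(s:ℂ)‖ := norm_add_le _ _
          _ < 1 := by rw [Complex.norm_real, Real.norm_eq_abs] at habs ⊢; linarith
      have : conj' a + (s : ℂ) = conj' (a + (s:ℂ)) := by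
        rw [map_add, Complex.conj_ofReal]
      simp only [zero_add, one_mul, this]
      exact hFdiag _ hmem
    have := eqOn_zero_of_seg hgd (mem_ball_self hr) one_ne_zero hr hzeros
    have ht' : t ∈ ball (0:ℂ) (1 - ‖a‖) := mem_ball_zero_iff.2 ht
    simpa using this ht'
  -- Step B : vanishing of the full kernel
  intro w hw z hz
  have key : ∀ z' ∈ ball (0:ℂ) 1, F w z' = 0 := by
    have hFd : DifferentiableOn ℂ (F w) (ball 0 1) := by
      apply DifferentiableOn.sub <;> apply DifferentiableOn.fun_sum <;> intro i _
      · exact (differentiableOn_const _).mul (hgud i)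
      · exact (differentiableOn_const _).mul (hgvd i)
    rw [mem_ball_zero_iff] at hw
    set δ : ℝ := (1 - ‖w‖) / 4 with hδ
    have hδ0 : 0 < δ := by rw [hδ]; linarith
    have hzeros : ∀ s : ℝ, |s| < δ → F w (conj' w + (2 * Complex.I) * s) = 0 := by
      intro s hs
      have hIs : ‖(Complex.I * s : ℂ)‖ = |s| := by
        rw [norm_mul, Complex.norm_I, Complex.norm_real, one_mul, Real.norm_eq_abs]
      have h1 : w - Complex.I * s ∈ ball (0:ℂ) 1 := by
        rw [mem_ball_zero_iff]
        calc ‖w - Complex.I * s‖ ≤ ‖w‖ + ‖(Complex.I * s : ℂ)‖ := norm_sub_le _ _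
          _ = ‖w‖ + |s| := by rw [hIs]
          _ < 1 := by rw [hδ] at hs; linarith [abs_nonneg s, hs]
      have h2 : ‖(Complex.I * s : ℂ)‖ < 1 - ‖w - Complex.I * s‖ := by
        have : ‖w - Complex.I * s‖ ≤ ‖w‖ + |s| := by
          calc ‖w - Complex.I * s‖ ≤ ‖w‖ + ‖(Complex.I * s : ℂ)‖ := norm_sub_le _ _
            _ = ‖w‖ + |s| := by rw [hIs]
        rw [hIs, hδ] at *
        linarith
      have hA := stepA (w - Complex.I * s) h1 (Complex.I * s) h2
      have e1 : w - Complex.I * s + Complex.I * s = w := by ring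
      have e2 : conj' (w - Complex.I * ↑s) + Complex.I * ↑s
          = conj' w + (2 * Complex.I) * ↑s := by
        rw [map_sub, map_mul, Complex.conj_I, Complex.conj_ofReal]
        ring
      rwa [e1, e2] at hA
    have hcw : conj' w ∈ ball (0:ℂ) 1 := by
      rw [mem_ball_zero_iff, RCLike.norm_conj]; exact hw
    have hdir : (2 * Complex.I : ℂ) ≠ 0 := by
      simp [Complex.I_ne_zero]
    have := eqOn_zero_of_seg hFd hcw hdir hδ0 hzeros
    intro z' hz'
    simpa using this hz'
  have hfin := key (conj' z) (by rw [mem_ball_zero_iff, RCLike.norm_conj]; exact mem_ball_zero_iff.1 hz)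
  simp only [hF, hgu, hgv, Complex.conj_conj, sub_eq_zero] at hfin
  exact hfin

/-- Two families of vectors with equal Gram kernels are related by a linear isometry. -/
lemma exists_isometry_of_gram {ι : Type*} {N : ℕ} (v u : ι → EuclideanSpace ℂ (Fin N))
    (h : ∀ a b, ⟪v a, v b⟫_ℂ = ⟪u a, u b⟫_ℂ) :
    ∃ T : EuclideanSpace ℂ (Fin N) →ₗᵢ[ℂ] EuclideanSpace ℂ (Fin N), ∀ a, T (v a) = u a := by
  classical
  set L : (ι →₀ ℂ) →ₗ[ℂ] EuclideanSpace ℂ (Fin N) := Finsupp.linearCombination ℂ v with hL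
  set M : (ι →₀ ℂ) →ₗ[ℂ] EuclideanSpace ℂ (Fin N) := Finsupp.linearCombination ℂ u with hM
  have expand : ∀ (f : ι → EuclideanSpace ℂ (Fin N)) (c c' : ι →₀ ℂ),
      (⟪Finsupp.linearCombination ℂ f c, Finsupp.linearCombination ℂ f c'⟫_ℂ)
        = ∑ a ∈ c.support, ∑ b ∈ c'.support, conj' (c a) * (c' b * ⟪f a, f b⟫_ℂ) := by
    intro f c c'
    rw [Finsupp.linearCombination_apply, Finsupp.linearCombination_apply,
      Finsupp.sum, Finsupp.sum, sum_inner]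
    refine Finset.sum_congr rfl fun a _ => ?_
    rw [inner_smul_left, inner_sum, Finset.mul_sum]
    refine Finset.sum_congr rfl fun b _ => ?_
    rw [inner_smul_right]
  have key : ∀ c c' : ι →₀ ℂ, (⟪L c, L c'⟫_ℂ) = ⟪M c, M c'⟫_ℂ := by
    intro c c'
    rw [hL, hM, expand, expand]
    exact Finset.sum_congr rfl fun a _ => Finset.sum_congr rfl fun b _ => by rw [h a b]
  have hker : LinearMap.ker L ≤ LinearMap.ker M := by
    intro c hc
    rw [LinearMap.mem_ker] at hc ⊢
    have h0 : (⟪M c, M c⟫_ℂ) = 0 := by rw [← key, hc, inner_zero_left]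
    exact inner_self_eq_zero.mp h0
  set Q := LinearMap.quotKerEquivRange L with hQ
  set T₀ : LinearMap.range L →ₗ[ℂ] EuclideanSpace ℂ (Fin N) :=
    ((LinearMap.ker L).liftQ M hker).comp Q.symm.toLinearMap with hT₀def
  have hT₀ : ∀ c : ι →₀ ℂ, T₀ ⟨L c, LinearMap.mem_range_self L c⟩ = M c := by
    intro c
    have hQs : Q.symm ⟨L c, LinearMap.mem_range_self L c⟩ = Submodule.Quotient.mk c := by
      rw [LinearEquiv.symm_apply_eq]
      exact Subtype.ext (LinearMap.quotKerEquivRange_apply_mk L c).symm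
    simp [hT₀def, hQs, Submodule.liftQ_apply]
  have hnorm : ∀ s : LinearMap.range L, ‖T₀ s‖ = ‖s‖ := by
    rintro ⟨x, c, rfl⟩
    rw [hT₀ c]
    have h1 : ‖M c‖ = Real.sqrt (RCLike.re (⟪M c, M c⟫_ℂ)) := norm_eq_sqrt_re_inner _
    have h2 : ‖L c‖ = Real.sqrt (RCLike.re (⟪L c, L c⟫_ℂ)) := norm_eq_sqrt_re_inner _
    rw [h1, ← key]
    exact ((by rw [h2] : ‖L c‖ = _)).symm
  let LI : LinearMap.range L →ₗᵢ[ℂ] EuclideanSpace ℂ (Fin N) := ⟨T₀, hnorm⟩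
  refine ⟨LI.extend, fun a => ?_⟩
  have hv : v a = L (Finsupp.single a 1) := by
    rw [hL, Finsupp.linearCombination_single, one_smul]
  have hmem : v a ∈ LinearMap.range L := hv ▸ LinearMap.mem_range_self L _
  have : LI.extend ((⟨v a, hmem⟩ : LinearMap.range L) : EuclideanSpace ℂ (Fin N)) = LI ⟨v a, hmem⟩ :=
    LinearIsometry.extend_apply LI _
  rw [show (v a : EuclideanSpace ℂ (Fin N)) = ((⟨v a, hmem⟩ : LinearMap.range L) : EuclideanSpace ℂ (Fin N)) from rfl, this]
  have hsub : (⟨v a, hmem⟩ : LinearMap.range L)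
      = ⟨L (Finsupp.single a 1), LinearMap.mem_range_self L _⟩ := Subtype.ext hv
  have : LI ⟨v a, hmem⟩ = T₀ ⟨L (Finsupp.single a 1), LinearMap.mem_range_self L _⟩ := by
    rw [hsub]; rfl
  rw [this, hT₀]
  rw [hM, Finsupp.linearCombination_single, one_smul]

/-- A linear isometry of a finite-dimensional complex Euclidean space is given by a
unitary matrix. -/
lemma isometry_to_unitary_matrix {N : ℕ}
    (T : EuclideanSpace ℂ (Fin N) →ₗᵢ[ℂ] EuclideanSpace ℂ (Fin N)) :
    ∃ U : Matrix (Fin N) (Fin N) ℂ, U ∈ Matrix.unitaryGroup (Fin N) ℂ ∧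
      ∀ x : EuclideanSpace ℂ (Fin N), U.mulVec x = T x := by
  classical
  set e : Fin N → EuclideanSpace ℂ (Fin N) := fun j => EuclideanSpace.single j 1 with he
  set U : Matrix (Fin N) (Fin N) ℂ := Matrix.of fun i j => T (e j) i with hU
  have hx : ∀ x : EuclideanSpace ℂ (Fin N), x = ∑ j, x j • e j := by
    intro x
    ext i
    rw [WithLp.ofLp_sum, Finset.sum_apply]
    simp only [he, PiLp.smul_apply, EuclideanSpace.single_apply, smul_eq_mul]
    simp [Finset.sum_ite_eq]
  have hmul : ∀ x : EuclideanSpace ℂ (Fin N), U.mulVec x = T x := by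
    intro x
    have hTx : T x = ∑ j, x j • T (e j) := by
      conv_lhs => rw [hx x]
      rw [map_sum]
      simp only [LinearIsometry.map_smul]
    funext i
    rw [Matrix.mulVec, dotProduct]
    have : (T x) i = ∑ j, x j * (T (e j)) i := by
      rw [hTx, WithLp.ofLp_sum, Finset.sum_apply]
      simp [PiLp.smul_apply]
    rw [this]
    exact Finset.sum_congr rfl fun j _ => by rw [hU]; simp [Matrix.of_apply]; ring
  refine ⟨U, ?_, hmul⟩
  rw [Matrix.mem_unitaryGroup_iff']
  ext i j
  rw [Matrix.mul_apply, Matrix.one_apply]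
  have : ∀ k, (star U) i k * U k j = conj' ((T (e i)) k) * (T (e j)) k := by
    intro k
    rw [Matrix.star_apply, hU]
    simp [Matrix.of_apply]
  rw [Finset.sum_congr rfl fun k _ => this k]
  have hinner : (∑ k, conj' ((T (e i)) k) * (T (e j)) k) = ⟪T (e i), T (e j)⟫_ℂ := by
    rw [PiLp.inner_apply]
    simp [RCLike.inner_apply, mul_comm]
  rw [hinner, LinearIsometry.inner_map_map]
  rw [he]
  simp [EuclideanSpace.inner_single_left, EuclideanSpace.single_apply, eq_comm]

/-- A unitary matrix preserves the sum of squared moduli. -/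
lemma unitary_norm_sq {N : ℕ} {U : Matrix (Fin N) (Fin N) ℂ}
    (hU : U ∈ Matrix.unitaryGroup (Fin N) ℂ) (x : Fin N → ℂ) :
    ∑ i, ‖U.mulVec x i‖ ^ 2 = ∑ i, ‖x i‖ ^ 2 := by
  have h1 : ∀ j k : Fin N, ∑ i, conj' (U i j) * U i k = if j = k then 1 else 0 := by
    intro j k
    have := Matrix.mem_unitaryGroup_iff'.mp hU
    have := congrFun (congrFun this j) k
    rw [Matrix.mul_apply] at this
    simp only [Matrix.star_apply, Matrix.one_apply] at this
    rw [← this]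
    exact Finset.sum_congr rfl fun i _ => by rw [RCLike.star_def]
  have key : ∑ i, conj' (U.mulVec x i) * (U.mulVec x i) = ∑ j, conj' (x j) * x j := by
    have expand : ∀ i, conj' (U.mulVec x i) * U.mulVec x i
        = ∑ j, ∑ k, (conj' (U i j) * U i k) * (conj' (x j) * x k) := by
      intro i
      rw [Matrix.mulVec, dotProduct, map_sum, Finset.sum_mul]
      refine Finset.sum_congr rfl fun j _ => ?_
      rw [map_mul, Finset.mul_sum]
      refine Finset.sum_congr rfl fun k _ => ?_
      ring
    rw [Finset.sum_congr rfl fun i _ => expand i]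
    rw [Finset.sum_comm]
    have : ∀ j, (∑ i, ∑ k, (conj' (U i j) * U i k) * (conj' (x j) * x k))
        = ∑ k, (∑ i, conj' (U i j) * U i k) * (conj' (x j) * x k) := by
      intro j
      rw [Finset.sum_comm]
      exact Finset.sum_congr rfl fun k _ => by rw [Finset.sum_mul]
    rw [Finset.sum_congr rfl fun j _ => this j]
    refine Finset.sum_congr rfl fun j _ => ?_
    rw [Finset.sum_congr rfl fun k _ => by rw [h1 j k]]
    simp [Finset.sum_ite_eq]
  have habs : ∀ z : ℂ, conj' z * z = ((‖z‖ : ℝ) : ℂ) ^ 2 := by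
    intro z
    rw [mul_comm, Complex.mul_conj, Complex.normSq_eq_norm_sq]
    push_cast; ring
  rw [Finset.sum_congr rfl fun i _ => habs _, Finset.sum_congr rfl fun i _ => habs _] at key
  have : ((∑ i, ‖U.mulVec x i‖ ^ 2 : ℝ) : ℂ)
      = ((∑ i, ‖x i‖ ^ 2 : ℝ) : ℂ) := by push_cast; exact_mod_cast key
  exact_mod_cast this

/-- Characterization of normalized holomorphic isometries from `(Δ, g_Δ)` into
`(Δ, g_Δ) × (𝔹ⁿ, g_{𝔹ⁿ})`: the functional equation
`(1 - |f₁|²)(1 - ∑ |f_{2,j}|²) = 1 - |w|²` with `f(0) = 0` holds if and only if there is a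
unitary matrix `U ∈ U(n+1)` with
`U (f₁, f_{2,1}, …, f_{2,n})ᵗ = (w, f₁ f_{2,1}, …, f₁ f_{2,n})ᵗ` on `Δ`. -/
theorem isometry_iff_unitary (n : ℕ) (hn : 2 ≤ n)
    (f₁ : ℂ → ℂ) (f₂ : Fin n → ℂ → ℂ)
    (hol₁ : DifferentiableOn ℂ f₁ (Metric.ball 0 1))
    (hol₂ : ∀ j, DifferentiableOn ℂ (f₂ j) (Metric.ball 0 1))
    (hmap₁ : ∀ w ∈ Metric.ball (0 : ℂ) 1, ‖f₁ w‖ < 1)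
    (hmap₂ : ∀ w ∈ Metric.ball (0 : ℂ) 1, ∑ j, ‖f₂ j w‖ ^ 2 < 1) :
    ((f₁ 0 = 0 ∧ (∀ j, f₂ j 0 = 0) ∧
      ∀ w ∈ Metric.ball (0 : ℂ) 1,
        (1 - ‖f₁ w‖ ^ 2) * (1 - ∑ j, ‖f₂ j w‖ ^ 2)
          = 1 - ‖w‖ ^ 2)
    ↔ ∃ U : Matrix (Fin (n + 1)) (Fin (n + 1)) ℂ,
        U ∈ Matrix.unitaryGroup (Fin (n + 1)) ℂ ∧
        ∀ w ∈ Metric.ball (0 : ℂ) 1,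
          U.mulVec (Fin.cons (f₁ w) (fun j => f₂ j w))
            = Fin.cons w (fun j => f₁ w * f₂ j w)) := by
  have e : ∀ z : ℂ, z * conj' z = ((‖z‖ ^ 2 : ℝ) : ℂ) := fun z => by
    rw [Complex.mul_conj, Complex.normSq_eq_norm_sq]
  constructor
  · rintro ⟨-, -, heq⟩
    set V : Fin (n + 1) → ℂ → ℂ := Fin.cons f₁ f₂ with hV
    set W : Fin (n + 1) → ℂ → ℂ :=
      Fin.cons (fun w => w) (fun j w => f₁ w * f₂ j w) with hW
    have hVd : ∀ i, DifferentiableOn ℂ (V i) (Metric.ball 0 1) := by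
      intro i
      refine Fin.cases ?_ ?_ i <;> simp only [hV, Fin.cons_zero, Fin.cons_succ]
      · exact hol₁
      · exact hol₂
    have hWd : ∀ i, DifferentiableOn ℂ (W i) (Metric.ball 0 1) := by
      intro i
      refine Fin.cases ?_ ?_ i <;> simp only [hW, Fin.cons_zero, Fin.cons_succ]
      · exact differentiable_id.differentiableOn
      · exact fun j => hol₁.mul (hol₂ j)
    have hdiag : ∀ w ∈ Metric.ball (0:ℂ) 1,
        ∑ i, V i w * conj' (V i w) = ∑ i, W i w * conj' (W i w) := by
      intro w hw
      have hreal : ‖f₁ w‖ ^ 2 + ∑ j, ‖f₂ j w‖ ^ 2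
          = ‖w‖ ^ 2
            + ‖f₁ w‖ ^ 2 * ∑ j, ‖f₂ j w‖ ^ 2 := by
        linear_combination -(heq w hw)
      calc ∑ i, V i w * conj' (V i w)
          = ((‖f₁ w‖ ^ 2 + ∑ j, ‖f₂ j w‖ ^ 2 : ℝ) : ℂ) := by
            rw [Fin.sum_univ_succ]
            simp only [hV, Fin.cons_zero, Fin.cons_succ, e]
            push_cast
            ring
        _ = ((‖w‖ ^ 2
              + ‖f₁ w‖ ^ 2 * ∑ j, ‖f₂ j w‖ ^ 2 : ℝ) : ℂ) := by
            rw [hreal]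
        _ = ∑ i, W i w * conj' (W i w) := by
            rw [Fin.sum_univ_succ]
            simp only [hW, Fin.cons_zero, Fin.cons_succ, e]
            simp only [map_mul, norm_mul, mul_pow]
            push_cast
            rw [Finset.mul_sum]
    have hgram := gram_polarization V W hVd hWd hdiag
    set vv : {w : ℂ // w ∈ Metric.ball (0:ℂ) 1} → EuclideanSpace ℂ (Fin (n + 1)) :=
      fun w => (WithLp.equiv 2 _).symm (fun i => V i w.1) with hvv
    set ww : {w : ℂ // w ∈ Metric.ball (0:ℂ) 1} → EuclideanSpace ℂ (Fin (n + 1)) :=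
      fun w => (WithLp.equiv 2 _).symm (fun i => W i w.1) with hww
    have hinner : ∀ a b, (⟪vv a, vv b⟫_ℂ) = ⟪ww a, ww b⟫_ℂ := by
      intro a b
      rw [PiLp.inner_apply, PiLp.inner_apply]
      simp only [hvv, hww, RCLike.inner_apply, WithLp.equiv_symm_apply, WithLp.ofLp_toLp]
      have := hgram b.1 b.2 a.1 a.2
      exact this
    obtain ⟨T, hT⟩ := exists_isometry_of_gram vv ww hinner
    obtain ⟨U, hUmem, hUmul⟩ := isometry_to_unitary_matrix T
    refine ⟨U, hUmem, fun w hw => ?_⟩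
    have h1 := hUmul (vv ⟨w, hw⟩)
    rw [hT ⟨w, hw⟩] at h1
    have e1 : (Fin.cons (f₁ w) (fun j => f₂ j w) : Fin (n+1) → ℂ)
        = fun i => V i w := by
      funext i
      refine Fin.cases ?_ ?_ i <;> simp [hV]
    have e2 : (Fin.cons w (fun j => f₁ w * f₂ j w) : Fin (n+1) → ℂ)
        = fun i => W i w := by
      funext i
      refine Fin.cases ?_ ?_ i <;> simp [hW]
    rw [e1, e2]
    exact h1
  · rintro ⟨U, hU, hUv⟩
    have hkey : ∀ w ∈ Metric.ball (0:ℂ) 1,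
        ‖f₁ w‖ ^ 2 + ∑ j, ‖f₂ j w‖ ^ 2
          = ‖w‖ ^ 2
            + ‖f₁ w‖ ^ 2 * ∑ j, ‖f₂ j w‖ ^ 2 := by
      intro w hw
      have h := unitary_norm_sq hU (Fin.cons (f₁ w) (fun j => f₂ j w))
      rw [hUv w hw] at h
      rw [Fin.sum_univ_succ, Fin.sum_univ_succ] at h
      simp only [Fin.cons_zero, Fin.cons_succ, map_mul, norm_mul, mul_pow] at h
      rw [← Finset.mul_sum] at h
      linarith
    have h0 := hkey 0 (Metric.mem_ball_self one_pos)
    simp only [map_zero, norm_zero] at h0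
    have ha : ‖f₁ 0‖ < 1 := hmap₁ 0 (Metric.mem_ball_self one_pos)
    have hb : ∑ j, ‖f₂ j 0‖ ^ 2 < 1 := hmap₂ 0 (Metric.mem_ball_self one_pos)
    have ha0 : 0 ≤ ‖f₁ 0‖ ^ 2 := by positivity
    have hb0 : 0 ≤ ∑ j, ‖f₂ j 0‖ ^ 2 :=
      Finset.sum_nonneg fun j _ => by positivity
    have hA : ‖f₁ 0‖ ^ 2 = 0 := by nlinarith
    have hB : ∑ j, ‖f₂ j 0‖ ^ 2 = 0 := by nlinarith
    refine ⟨?_, ?_, ?_⟩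
    · exact norm_eq_zero.mp (sq_eq_zero_iff.mp hA)
    · intro j
      have hj : ‖f₂ j 0‖ ^ 2 = 0 := by
        have := (Finset.sum_eq_zero_iff_of_nonneg
          (fun j _ => by positivity : ∀ j ∈ Finset.univ, 0 ≤ ‖f₂ j 0‖ ^ 2)).mp hB
        exact this j (Finset.mem_univ j)
      exact norm_eq_zero.mp (sq_eq_zero_iff.mp hj)
    · intro w hw
      linear_combination -(hkey w hw)
end

section
/- Let n ≥ 2 be an integer. For every unitary matrix U ∈ U(n+1) there exists a holomorphic map f = (f₁, f_{2,1}, …, f_{2,n}) : Δ → ℂ^{n+1} with |f₁(w)| < 1 and ∑_{j=1}^n |f_{2,j}(w)|² < 1 on Δ, f(0) = 0, such that U · (f₁(w), f_{2,1}(w), …, f_{2,n}(w))ᵗ = (w, f₁(w) f_{2,1}(w), …, f₁(w) f_{2,n}(w))ᵗ for all w ∈ Δ; consequently (1 − |f₁(w)|²)(1 − ∑_{j=1}^n |f_{2,j}(w)|²) = 1 − |w|² on Δ, i.e. f is a holomorphic isometry from (Δ, g_Δ) into (Δ, g_Δ) × (𝔹^n, g_{𝔹^n}). -/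
open Metric Set Complex Filter

noncomputable section SPick

def mob (a z : ℂ) : ℂ := (z - a) / (1 - (starRingEnd ℂ) a * z)

variable {a z x y : ℂ}

namespace Complex

def abs : AbsoluteValue ℂ ℝ where
  toFun := fun z => ‖z‖
  map_mul' := norm_mul
  nonneg' := norm_nonneg
  eq_zero' := fun _ => norm_eq_zero
  add_le' := norm_add_le

@[simp]
lemma abs_apply (u : ℂ) : Complex.abs u = ‖u‖ := rfl

lemma sq_abs (u : ℂ) : Complex.abs u ^ 2 = Complex.normSq u := Complex.sq_norm u

lemma abs_conj (u : ℂ) : Complex.abs ((starRingEnd ℂ) u) = Complex.abs u := Complex.norm_conj u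

lemma abs_ofReal (r : ℝ) : Complex.abs (r : ℂ) = |r| := by
  rw [abs_apply, Complex.norm_real, Real.norm_eq_abs]

lemma continuous_abs : Continuous Complex.abs := continuous_norm

end Complex

lemma conj_mul_self (u : ℂ) : (starRingEnd ℂ) u * u = (Complex.normSq u : ℂ) := by
  rw [mul_comm, Complex.mul_conj]

lemma normSq_lt_one_iff {u : ℂ} : Complex.normSq u < 1 ↔ Complex.abs u < 1 := by
  rw [← Complex.sq_abs]
  constructor
  · intro h
    nlinarith [Complex.abs.nonneg u]
  · intro h
    nlinarith [Complex.abs.nonneg u]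

lemma mob_denom_ne (ha : Complex.abs a < 1) (hz : Complex.abs z < 1) :
    1 - (starRingEnd ℂ) a * z ≠ 0 := by
  intro h
  have h1 : (starRingEnd ℂ) a * z = 1 := by linear_combination -h
  have := congrArg Complex.abs h1
  rw [map_mul, map_one, Complex.abs_conj] at this
  nlinarith [Complex.abs.nonneg a, Complex.abs.nonneg z]

lemma differentiableAt_mob (ha : Complex.abs a < 1) (hz : Complex.abs z < 1) :
    DifferentiableAt ℂ (mob a) z := by
  show DifferentiableAt ℂ (fun w : ℂ => (w - a) / (1 - (starRingEnd ℂ) a * w)) z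
  exact (differentiableAt_id.sub_const a).div
    ((differentiableAt_const 1).sub (differentiableAt_id.const_mul _)) (mob_denom_ne ha hz)

lemma hasDerivAt_mob (a p : ℂ) (h : 1 - (starRingEnd ℂ) a * p ≠ 0) :
    HasDerivAt (mob a) ((1 - (starRingEnd ℂ) a * a) / (1 - (starRingEnd ℂ) a * p) ^ 2) p := by
  have h1 : HasDerivAt (fun w : ℂ => w - a) 1 p := (hasDerivAt_id p).sub_const a
  have h2 : HasDerivAt (fun w : ℂ => 1 - (starRingEnd ℂ) a * w) (-((starRingEnd ℂ) a * 1)) p :=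
    ((hasDerivAt_id p).const_mul _).const_sub 1
  have H := h1.div h2 h
  have : HasDerivAt (mob a)
      ((1 * (1 - (starRingEnd ℂ) a * p) - (p - a) * -((starRingEnd ℂ) a * 1)) /
        (1 - (starRingEnd ℂ) a * p) ^ 2) p := H
  convert this using 1
  field_simp
  ring

lemma normSq_mob_identity (a b : ℂ) :
    Complex.normSq (1 - (starRingEnd ℂ) a * b) - Complex.normSq (b - a)
      = (1 - Complex.normSq a) * (1 - Complex.normSq b) := by
  simp only [Complex.normSq_apply, Complex.sub_re, Complex.sub_im, Complex.mul_re,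
    Complex.mul_im, Complex.one_re, Complex.one_im, Complex.conj_re, Complex.conj_im]
  ring

lemma mob_self (a : ℂ) : mob a a = 0 := by simp [mob]

lemma abs_mob_lt (ha : Complex.abs a < 1) (hz : Complex.abs z < 1) :
    Complex.abs (mob a z) < 1 := by
  have hd := mob_denom_ne ha hz
  have hd' : 0 < Complex.normSq (1 - (starRingEnd ℂ) a * z) := Complex.normSq_pos.2 hd
  have hna : Complex.normSq a < 1 := normSq_lt_one_iff.2 ha
  have hnz : Complex.normSq z < 1 := normSq_lt_one_iff.2 hz
  have key := normSq_mob_identity a z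
  have hlt : Complex.normSq (z - a) < Complex.normSq (1 - (starRingEnd ℂ) a * z) := by
    nlinarith
  rw [mob, map_div₀, div_lt_one (Complex.abs.pos hd)]
  have := Complex.sq_abs (z - a)
  have := Complex.sq_abs (1 - (starRingEnd ℂ) a * z)
  nlinarith [Complex.abs.nonneg (z - a), Complex.abs.nonneg (1 - (starRingEnd ℂ) a * z)]

lemma mob_inv (ha : Complex.abs a < 1) (hz : Complex.abs z < 1) :
    mob (-a) (mob a z) = z := by
  have hd := mob_denom_ne ha hz
  have hna : (1 : ℂ) - (starRingEnd ℂ) a * a ≠ 0 := by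
    have h2 : Complex.abs a * Complex.abs a < 1 := by nlinarith [Complex.abs.nonneg a]
    intro h
    have h1 : (starRingEnd ℂ) a * a = 1 := by linear_combination -h
    have := congrArg Complex.abs h1
    rw [map_mul, map_one, Complex.abs_conj] at this
    nlinarith
  have hna' : (1 : ℂ) - a * (starRingEnd ℂ) a ≠ 0 := by rw [mul_comm]; exact hna
  have hkey : 1 + (starRingEnd ℂ) a * ((z - a) / (1 - (starRingEnd ℂ) a * z))
      = (1 - (starRingEnd ℂ) a * a) / (1 - (starRingEnd ℂ) a * z) := by
    field_simp
    ring
  have hne2 : 1 + (starRingEnd ℂ) a * ((z - a) / (1 - (starRingEnd ℂ) a * z)) ≠ 0 := by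
    rw [hkey]
    exact div_ne_zero hna hd
  rw [mob, mob, map_neg, neg_mul, sub_neg_eq_add, sub_neg_eq_add]
  rw [div_eq_iff hne2]
  rw [hkey, div_add' _ _ _ hd, mul_div_assoc', div_left_inj' hd]
  ring

lemma mob_neg_zero (a : ℂ) : mob (-a) 0 = a := by simp [mob]

/-- The two-point Schwarz–Pick lemma on the unit disk. -/
lemma schwarz_pick_abs {φ : ℂ → ℂ} (hd : DifferentiableOn ℂ φ (ball 0 1))
    (hm : MapsTo φ (ball 0 1) (ball 0 1)) (hx : Complex.abs x < 1) (hy : Complex.abs y < 1) :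
    Complex.abs (mob (φ x) (φ y)) ≤ Complex.abs (mob x y) := by
  have hxb : x ∈ ball (0 : ℂ) 1 := by simpa [mem_ball_zero_iff] using hx
  have hφx : Complex.abs (φ x) < 1 := by
    have := hm hxb; simpa [mem_ball_zero_iff] using this
  set h : ℂ → ℂ := mob (φ x) ∘ φ ∘ mob (-x) with hh
  have hax : Complex.abs (-x) < 1 := by simpa using hx
  have hdh : DifferentiableOn ℂ h (ball 0 1) := by
    intro z hz
    rw [mem_ball_zero_iff] at hz
    have h1 : Complex.abs (mob (-x) z) < 1 := abs_mob_lt hax hz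
    have h1b : mob (-x) z ∈ ball (0 : ℂ) 1 := by simpa [mem_ball_zero_iff] using h1
    have h2 : Complex.abs (φ (mob (-x) z)) < 1 := by
      have := hm h1b; simpa [mem_ball_zero_iff] using this
    have i1 : DifferentiableAt ℂ (mob (-x)) z := differentiableAt_mob hax hz
    have i2 : DifferentiableAt ℂ φ (mob (-x) z) :=
      hd.differentiableAt (isOpen_ball.mem_nhds h1b)
    have i3 : DifferentiableAt ℂ (mob (φ x)) (φ (mob (-x) z)) := differentiableAt_mob hφx h2
    exact (DifferentiableAt.comp z i3 (DifferentiableAt.comp z i2 i1)).differentiableWithinAt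
  have hmh : MapsTo h (ball 0 1) (ball 0 1) := by
    intro z hz
    rw [mem_ball_zero_iff] at hz
    have h1 : Complex.abs (mob (-x) z) < 1 := abs_mob_lt hax hz
    have h1b : mob (-x) z ∈ ball (0 : ℂ) 1 := by simpa [mem_ball_zero_iff] using h1
    have h2 : Complex.abs (φ (mob (-x) z)) < 1 := by
      have := hm h1b; simpa [mem_ball_zero_iff] using this
    have : Complex.abs (h z) < 1 := abs_mob_lt hφx h2
    simpa [mem_ball_zero_iff] using this
  have h0 : h 0 = 0 := by
    simp only [hh, Function.comp_apply, mob_neg_zero, mob_self]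
  have hz' : Complex.abs (mob x y) < 1 := abs_mob_lt hx hy
  have := Complex.norm_le_norm_of_mapsTo_ball (z := mob x y) hdh
    (hmh.mono_right ball_subset_closedBall) h0 hz'
  have hcomp : h (mob x y) = mob (φ x) (φ y) := by
    simp only [hh, Function.comp_apply, mob_inv hx hy]
  rwa [hcomp] at this

/-- The Schwarz–Pick derivative bound on the unit disk. -/
lemma schwarz_pick_deriv {φ : ℂ → ℂ} (hd : DifferentiableOn ℂ φ (ball 0 1))
    (hm : MapsTo φ (ball 0 1) (ball 0 1)) (hx : Complex.abs x < 1) :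
    Complex.abs (deriv φ x) * (1 - Complex.abs x ^ 2) ≤ 1 - Complex.abs (φ x) ^ 2 := by
  have hxb : x ∈ ball (0 : ℂ) 1 := by simpa [mem_ball_zero_iff] using hx
  have hφx : Complex.abs (φ x) < 1 := by
    have := hm hxb; simpa [mem_ball_zero_iff] using this
  have hax : Complex.abs (-x) < 1 := by simpa using hx
  set h : ℂ → ℂ := mob (φ x) ∘ φ ∘ mob (-x) with hh
  have hdh : DifferentiableOn ℂ h (ball 0 1) := by
    intro z hz
    rw [mem_ball_zero_iff] at hz
    have h1 : Complex.abs (mob (-x) z) < 1 := abs_mob_lt hax hz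
    have h1b : mob (-x) z ∈ ball (0 : ℂ) 1 := by simpa [mem_ball_zero_iff] using h1
    have h2 : Complex.abs (φ (mob (-x) z)) < 1 := by
      have := hm h1b; simpa [mem_ball_zero_iff] using this
    have i1 : DifferentiableAt ℂ (mob (-x)) z := differentiableAt_mob hax hz
    have i2 : DifferentiableAt ℂ φ (mob (-x) z) :=
      hd.differentiableAt (isOpen_ball.mem_nhds h1b)
    have i3 : DifferentiableAt ℂ (mob (φ x)) (φ (mob (-x) z)) := differentiableAt_mob hφx h2
    exact (DifferentiableAt.comp z i3 (DifferentiableAt.comp z i2 i1)).differentiableWithinAt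
  have hmh : MapsTo h (ball 0 1) (ball 0 1) := by
    intro z hz
    rw [mem_ball_zero_iff] at hz
    have h1 : Complex.abs (mob (-x) z) < 1 := abs_mob_lt hax hz
    have h1b : mob (-x) z ∈ ball (0 : ℂ) 1 := by simpa [mem_ball_zero_iff] using h1
    have h2 : Complex.abs (φ (mob (-x) z)) < 1 := by
      have := hm h1b; simpa [mem_ball_zero_iff] using this
    have : Complex.abs (h z) < 1 := abs_mob_lt hφx h2
    simpa [mem_ball_zero_iff] using this
  have h0 : h 0 = 0 := by
    simp only [hh, Function.comp_apply, mob_neg_zero, mob_self]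
  have hder : Complex.abs (deriv h 0) ≤ 1 :=
    Complex.norm_deriv_le_one_of_mapsTo_ball hdh
      (by rw [h0]; exact hmh.mono_right ball_subset_closedBall) one_pos
  -- compute deriv h 0
  have hden0 : (1 : ℂ) - (starRingEnd ℂ) (-x) * (0 : ℂ) ≠ 0 := by simp
  have hin : HasDerivAt (mob (-x))
      ((1 - (starRingEnd ℂ) (-x) * (-x)) / (1 - (starRingEnd ℂ) (-x) * 0) ^ 2) 0 :=
    hasDerivAt_mob (-x) 0 hden0
  have hφder : HasDerivAt φ (deriv φ x) (mob (-x) 0) := by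
    rw [mob_neg_zero]
    exact (hd.differentiableAt (isOpen_ball.mem_nhds hxb)).hasDerivAt
  have hdenx : (1 : ℂ) - (starRingEnd ℂ) (φ x) * (φ x) ≠ 0 := mob_denom_ne hφx hφx
  have hout : HasDerivAt (mob (φ x))
      ((1 - (starRingEnd ℂ) (φ x) * (φ x)) / (1 - (starRingEnd ℂ) (φ x) * (φ x)) ^ 2)
      (φ (mob (-x) 0)) := by
    rw [mob_neg_zero]
    exact hasDerivAt_mob (φ x) (φ x) hdenx
  have hcomp : HasDerivAt h
      ((1 - (starRingEnd ℂ) (φ x) * (φ x)) / (1 - (starRingEnd ℂ) (φ x) * (φ x)) ^ 2 *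
        (deriv φ x * ((1 - (starRingEnd ℂ) (-x) * (-x)) / (1 - (starRingEnd ℂ) (-x) * 0) ^ 2)))
      0 := by
    exact (hout.comp 0 (hφder.comp 0 hin))
  have hd0 := hcomp.deriv
  rw [hd0] at hder
  have e1 : (starRingEnd ℂ) (-x) * (-x) = (Complex.normSq x : ℂ) := by
    rw [map_neg, neg_mul_neg, conj_mul_self]
  have e2 : (starRingEnd ℂ) (φ x) * (φ x) = (Complex.normSq (φ x) : ℂ) := conj_mul_self _
  have e0 : ((1 : ℂ) - (starRingEnd ℂ) (-x) * 0) ^ 2 = 1 := by simp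
  rw [e1, e2, e0] at hder
  have hnx : Complex.normSq x < 1 := normSq_lt_one_iff.2 hx
  have hnφ : Complex.normSq (φ x) < 1 := normSq_lt_one_iff.2 hφx
  have hAne : (1 : ℂ) - (Complex.normSq (φ x) : ℂ) ≠ 0 := by
    intro hcon
    have : ((1 - Complex.normSq (φ x) : ℝ) : ℂ) = 0 := by push_cast; linear_combination hcon
    have := Complex.ofReal_eq_zero.1 this
    linarith
  have e3 : (1 - (Complex.normSq (φ x) : ℂ)) / (1 - (Complex.normSq (φ x) : ℂ)) ^ 2
      = (1 - (Complex.normSq (φ x) : ℂ))⁻¹ := by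
    rw [sq, div_mul_eq_div_div, div_self hAne, one_div]
  rw [e3] at hder
  have c1 : (1 : ℂ) - (Complex.normSq (φ x) : ℂ) = ((1 - Complex.normSq (φ x) : ℝ) : ℂ) := by
    push_cast; ring
  have c2 : (1 : ℂ) - (Complex.normSq x : ℂ) = ((1 - Complex.normSq x : ℝ) : ℂ) := by
    push_cast; ring
  rw [c1, c2] at hder
  rw [map_mul, map_inv₀, map_mul, map_div₀, Complex.abs_ofReal, Complex.abs_ofReal,
    abs_of_pos (by linarith : (0:ℝ) < 1 - Complex.normSq (φ x)),
    abs_of_pos (by linarith : (0:ℝ) < 1 - Complex.normSq x)] at hder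
  simp only [map_one] at hder
  have hpos : (0:ℝ) < 1 - Complex.normSq (φ x) := by linarith
  rw [div_one] at hder
  rw [Complex.sq_abs x, Complex.sq_abs (φ x)]
  have h2 := mul_le_mul_of_nonneg_left hder hpos.le
  rw [← mul_assoc, mul_inv_cancel₀ hpos.ne', one_mul, mul_one] at h2
  linarith

end SPick


open Metric Set Complex Filter Matrix

noncomputable section MatrixPart

variable {N : ℕ} (U : Matrix (Fin (N + 1)) (Fin (N + 1)) ℂ)

def Pm (N : ℕ) : Matrix (Fin (N + 1)) (Fin (N + 1)) ℂ :=
  Matrix.diagonal (fun i => if i = 0 then 0 else 1)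

def Amat (ζ : ℂ) : Matrix (Fin (N + 1)) (Fin (N + 1)) ℂ := U - ζ • Pm N

def dfun (ζ : ℂ) : ℂ := (Amat U ζ).det

def afun (i : Fin (N + 1)) (ζ : ℂ) : ℂ := ((Amat U ζ).updateRow 0 (Pi.single i 1)).det

def wfun (i : Fin (N + 1)) (ζ : ℂ) : ℂ := afun U i ζ / dfun U ζ

def phiF (ζ : ℂ) : ℂ := wfun U 0 ζ

lemma cast_sum_sq (y : Fin (N + 1) → ℂ) :
    ((∑ i, Complex.abs (y i) ^ 2 : ℝ) : ℂ) = star y ⬝ᵥ y := by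
  rw [dotProduct, Complex.ofReal_sum]
  refine Finset.sum_congr rfl fun i _ => ?_
  rw [Pi.star_apply, Complex.star_def, Complex.sq_abs, mul_comm, Complex.mul_conj]

lemma unitary_sum_sq (hU : U ∈ Matrix.unitaryGroup (Fin (N + 1)) ℂ) (x : Fin (N + 1) → ℂ) :
    ∑ i, Complex.abs ((U *ᵥ x) i) ^ 2 = ∑ i, Complex.abs (x i) ^ 2 := by
  have h1 : star U * U = 1 := Matrix.mem_unitaryGroup_iff'.1 hU
  apply Complex.ofReal_injective
  rw [cast_sum_sq, cast_sum_sq]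
  rw [Matrix.star_mulVec, Matrix.dotProduct_mulVec, Matrix.vecMul_vecMul,
    Matrix.star_eq_conjTranspose] at *
  rw [h1, Matrix.vecMul_one]

lemma Pm_mulVec (v : Fin (N + 1) → ℂ) (i : Fin (N + 1)) :
    (Pm N *ᵥ v) i = (if i = 0 then 0 else 1) * v i := by
  rw [Pm, mulVec_diagonal]

lemma dfun_ne (hU : U ∈ Matrix.unitaryGroup (Fin (N + 1)) ℂ) {ζ : ℂ}
    (hζ : Complex.abs ζ < 1) : dfun U ζ ≠ 0 := by
  intro hdet
  obtain ⟨v, hv0, hveq⟩ := (Matrix.exists_mulVec_eq_zero_iff).2 hdet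
  have hUv : U *ᵥ v = ζ • (Pm N *ᵥ v) := by
    have : (U - ζ • Pm N) *ᵥ v = U *ᵥ v - (ζ • Pm N) *ᵥ v := Matrix.sub_mulVec _ _ _
    rw [Amat] at hveq
    rw [hveq] at this  -- 0 = U*v - ...
    have h2 := this.symm
    rw [sub_eq_zero] at h2
    rw [h2, Matrix.smul_mulVec]
  have hsum := unitary_sum_sq U hU v
  rw [hUv] at hsum
  set T := ∑ i, Complex.abs (v i) ^ 2 with hT
  have hTub : ∑ i, Complex.abs ((ζ • (Pm N *ᵥ v)) i) ^ 2
      = Complex.abs ζ ^ 2 * ∑ i, Complex.abs ((Pm N *ᵥ v) i) ^ 2 := by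
    rw [Finset.mul_sum]
    refine Finset.sum_congr rfl fun i _ => ?_
    rw [Pi.smul_apply, smul_eq_mul,
      show Complex.abs (ζ * (Pm N *ᵥ v) i) = Complex.abs ζ * Complex.abs ((Pm N *ᵥ v) i)
        from map_mul Complex.abs _ _, mul_pow]
  have hle : ∑ i, Complex.abs ((Pm N *ᵥ v) i) ^ 2 ≤ T := by
    refine Finset.sum_le_sum fun i _ => ?_
    rw [Pm_mulVec]
    rcases eq_or_ne i 0 with h | h
    · rw [if_pos h, zero_mul, map_zero]
      nlinarith [sq_nonneg (Complex.abs (v i))]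
    · rw [if_neg h, one_mul]
  have hTpos : 0 < T := by
    obtain ⟨i, hi⟩ := Function.ne_iff.1 hv0
    have h1 : 0 < Complex.abs (v i) ^ 2 := by
      have := Complex.abs.pos hi
      positivity
    have h2 : Complex.abs (v i) ^ 2 ≤ T := by
      rw [hT]
      exact Finset.single_le_sum (f := fun j => Complex.abs (v j) ^ 2)
        (fun j _ => by positivity) (Finset.mem_univ i)
    linarith
  have hP : 0 ≤ ∑ i, Complex.abs ((Pm N *ᵥ v) i) ^ 2 := by positivity
  have hz2 : Complex.abs ζ ^ 2 < 1 := by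
    nlinarith [Complex.abs.nonneg ζ]
  nlinarith

lemma isUnit_dfun (hU : U ∈ Matrix.unitaryGroup (Fin (N + 1)) ℂ) {ζ : ℂ}
    (hζ : Complex.abs ζ < 1) : IsUnit (Amat U ζ).det :=
  isUnit_iff_ne_zero.2 (dfun_ne U hU hζ)

lemma wfun_eq_inv (hU : U ∈ Matrix.unitaryGroup (Fin (N + 1)) ℂ) {ζ : ℂ}
    (hζ : Complex.abs ζ < 1) (i : Fin (N + 1)) :
    wfun U i ζ = ((Amat U ζ)⁻¹ *ᵥ Pi.single 0 1) i := by
  have h1 : ((Amat U ζ)⁻¹ *ᵥ Pi.single 0 1) i = (Amat U ζ)⁻¹ i 0 * 1 := by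
    rw [Matrix.mulVec_single]
    simp
  rw [h1, mul_one, Matrix.inv_def, Matrix.smul_apply, Matrix.adjugate_apply,
    smul_eq_mul, Ring.inverse_eq_inv]
  rw [wfun, afun, dfun]
  ring

lemma Amat_mulVec (hU : U ∈ Matrix.unitaryGroup (Fin (N + 1)) ℂ) {ζ : ℂ}
    (hζ : Complex.abs ζ < 1) :
    (Amat U ζ) *ᵥ (fun i => wfun U i ζ) = Pi.single 0 1 := by
  have he : (fun i => wfun U i ζ) = (Amat U ζ)⁻¹ *ᵥ Pi.single 0 1 := by
    funext i
    exact wfun_eq_inv U hU hζ i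
  rw [he, Matrix.mulVec_mulVec, Matrix.mul_nonsing_inv _ (isUnit_dfun U hU hζ),
    Matrix.one_mulVec]

lemma U_mulVec_wfun (hU : U ∈ Matrix.unitaryGroup (Fin (N + 1)) ℂ) {ζ : ℂ}
    (hζ : Complex.abs ζ < 1) :
    U *ᵥ (fun i => wfun U i ζ)
      = Pi.single 0 1 + ζ • (Pm N *ᵥ (fun i => wfun U i ζ)) := by
  have h := Amat_mulVec U hU hζ
  rw [Amat, Matrix.sub_mulVec, Matrix.smul_mulVec, sub_eq_iff_eq_add] at h
  exact h

lemma sum_identity (hU : U ∈ Matrix.unitaryGroup (Fin (N + 1)) ℂ) {ζ : ℂ}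
    (hζ : Complex.abs ζ < 1) :
    Complex.abs (phiF U ζ) ^ 2
      = 1 - (1 - Complex.abs ζ ^ 2) * (∑ j : Fin N, Complex.abs (wfun U j.succ ζ) ^ 2) := by
  have hsum := unitary_sum_sq U hU (fun i => wfun U i ζ)
  rw [U_mulVec_wfun U hU hζ] at hsum
  rw [Fin.sum_univ_succ, Fin.sum_univ_succ] at hsum
  have h0 : ((Pi.single 0 1 + ζ • (Pm N *ᵥ fun i => wfun U i ζ) : Fin (N+1) → ℂ)) 0 = 1 := by
    rw [Pi.add_apply, Pi.smul_apply, Pm_mulVec]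
    simp
  have hsucc : ∀ j : Fin N,
      ((Pi.single 0 1 + ζ • (Pm N *ᵥ fun i => wfun U i ζ) : Fin (N+1) → ℂ)) j.succ
        = ζ * wfun U j.succ ζ := by
    intro j
    rw [Pi.add_apply, Pi.smul_apply, Pm_mulVec]
    rw [Pi.single_apply]
    simp [Fin.succ_ne_zero j]
  rw [h0] at hsum
  simp only [hsucc] at hsum
  simp only [_root_.map_mul, mul_pow, _root_.map_one, one_pow] at hsum
  rw [← Finset.mul_sum] at hsum
  rw [phiF]
  nlinarith [hsum]

lemma sum_sq_nonneg {ζ : ℂ} : 0 ≤ ∑ j : Fin N, Complex.abs (wfun U j.succ ζ) ^ 2 := by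
  positivity

lemma abs_phi_le (hU : U ∈ Matrix.unitaryGroup (Fin (N + 1)) ℂ) {ζ : ℂ}
    (hζ : Complex.abs ζ < 1) : Complex.abs (phiF U ζ) ≤ 1 := by
  have h := sum_identity U hU hζ
  have h2 : (0:ℝ) ≤ ∑ j : Fin N, Complex.abs (wfun U j.succ ζ) ^ 2 := sum_sq_nonneg U
  have hz2 : (0:ℝ) ≤ 1 - Complex.abs ζ ^ 2 := by nlinarith [Complex.abs.nonneg ζ]
  have h3 : Complex.abs (phiF U ζ) ^ 2 ≤ 1 := by nlinarith [mul_nonneg hz2 h2]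
  nlinarith [Complex.abs.nonneg (phiF U ζ)]

lemma abs_phi_lt (hU : U ∈ Matrix.unitaryGroup (Fin (N + 1)) ℂ)
    (hc2 : ∃ i, i ≠ 0 ∧ U i 0 ≠ 0) {ζ : ℂ}
    (hζ : Complex.abs ζ < 1) : Complex.abs (phiF U ζ) < 1 := by
  have h := sum_identity U hU hζ
  have h2 : (0:ℝ) ≤ ∑ j : Fin N, Complex.abs (wfun U j.succ ζ) ^ 2 := sum_sq_nonneg U
  rcases lt_or_eq_of_le h2 with hpos | hzero
  · have hz2 : (0:ℝ) < 1 - Complex.abs ζ ^ 2 := by nlinarith [Complex.abs.nonneg ζ]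
    have h3 : Complex.abs (phiF U ζ) ^ 2 < 1 := by nlinarith [mul_pos hz2 hpos]
    nlinarith [Complex.abs.nonneg (phiF U ζ)]
  · exfalso
    -- all the wfun of successors vanish
    have hall : ∀ j : Fin N, wfun U j.succ ζ = 0 := by
      intro j
      have := (Finset.sum_eq_zero_iff_of_nonneg
        (fun i (_ : i ∈ Finset.univ) => sq_nonneg (Complex.abs (wfun U i.succ ζ)))).1
        hzero.symm j (Finset.mem_univ j)
      have habs : Complex.abs (wfun U j.succ ζ) = 0 := by
        nlinarith [Complex.abs.nonneg (wfun U j.succ ζ)]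
      exact Complex.abs.eq_zero.1 habs
    obtain ⟨i0, hi0ne, hi0⟩ := hc2
    have hmv := U_mulVec_wfun U hU hζ
    have happ := congrFun hmv i0
    have hPzero : (Pm N *ᵥ fun i => wfun U i ζ) i0 = 0 := by
      rw [Pm_mulVec]
      rcases eq_or_ne i0 0 with h' | h'
      · rw [if_pos h', zero_mul]
      · rw [if_neg h', one_mul]
        rcases Fin.eq_succ_of_ne_zero h' with ⟨j, rfl⟩
        exact hall j
    have hUv : (U *ᵥ fun i => wfun U i ζ) i0 = U i0 0 * wfun U 0 ζ := by
      rw [Matrix.mulVec, dotProduct, Fin.sum_univ_succ]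
      have : ∀ j : Fin N, U i0 j.succ * wfun U j.succ ζ = 0 := by
        intro j
        rw [hall j, mul_zero]
      rw [Finset.sum_eq_zero fun j _ => this j, add_zero]
    rw [hUv] at happ
    rw [Pi.add_apply, Pi.smul_apply, hPzero, smul_zero, add_zero, Pi.single_apply,
      if_neg hi0ne] at happ
    have hw0 : wfun U 0 ζ = 0 := by
      rcases mul_eq_zero.1 happ with h' | h'
      · exact absurd h' hi0
      · exact h'
    have := sum_identity U hU hζ
    rw [phiF, hw0, ← hzero] at this
    simp at this

/-- Differentiability of a determinant of a matrix with entries differentiable in the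
parameter. -/
lemma differentiable_det_entries {m : ℕ} {f : ℂ → Matrix (Fin m) (Fin m) ℂ}
    (hf : ∀ i j, Differentiable ℂ fun ζ => f ζ i j) :
    Differentiable ℂ fun ζ => (f ζ).det := by
  have : (fun ζ => (f ζ).det)
      = fun ζ => ∑ σ : Equiv.Perm (Fin m),
          ((Equiv.Perm.sign σ : ℤ) : ℂ) * ∏ i, f ζ (σ i) i := by
    funext ζ
    rw [Matrix.det_apply]
    refine Finset.sum_congr rfl fun σ _ => ?_
    rw [Units.smul_def, zsmul_eq_mul]
  rw [this]
  apply Differentiable.fun_sum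
  intro σ _
  exact (Differentiable.fun_finsetProd fun i _ => hf (σ i) i).const_mul _

lemma diff_dfun : Differentiable ℂ (dfun U) := by
  apply differentiable_det_entries
  intro i j
  have : (fun ζ => Amat U ζ i j) = fun ζ => U i j - ζ * Pm N i j := by
    funext ζ
    rw [Amat, Matrix.sub_apply, Matrix.smul_apply, smul_eq_mul]
  rw [this]
  exact (differentiable_const _).sub (differentiable_id.mul (differentiable_const _))

lemma diff_afun (k : Fin (N + 1)) : Differentiable ℂ (afun U k) := by
  apply differentiable_det_entries
  intro i j
  rcases eq_or_ne i 0 with h | h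
  · have : (fun ζ => ((Amat U ζ).updateRow 0 (Pi.single k 1)) i j)
        = fun _ : ℂ => (Pi.single k (1:ℂ) : Fin (N+1) → ℂ) j := by
      funext ζ
      rw [Matrix.updateRow_apply, if_pos h]
    rw [this]
    exact differentiable_const _
  · have : (fun ζ => ((Amat U ζ).updateRow 0 (Pi.single k 1)) i j)
        = fun ζ => U i j - ζ * Pm N i j := by
      funext ζ
      rw [Matrix.updateRow_apply, if_neg h, Amat, Matrix.sub_apply, Matrix.smul_apply,
        smul_eq_mul]
    rw [this]
    exact (differentiable_const _).sub (differentiable_id.mul (differentiable_const _))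

lemma diff_wfun (hU : U ∈ Matrix.unitaryGroup (Fin (N + 1)) ℂ) (k : Fin (N + 1)) :
    DifferentiableOn ℂ (wfun U k) (ball 0 1) := by
  have : wfun U k = fun ζ => afun U k ζ / dfun U ζ := rfl
  rw [this]
  apply DifferentiableOn.div ((diff_afun U k).differentiableOn)
    ((diff_dfun U).differentiableOn)
  intro ζ hζ
  rw [mem_ball_zero_iff] at hζ
  exact dfun_ne U hU hζ

lemma diff_phiF (hU : U ∈ Matrix.unitaryGroup (Fin (N + 1)) ℂ) :
    DifferentiableOn ℂ (phiF U) (ball 0 1) := diff_wfun U hU 0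

lemma mapsTo_phiF (hU : U ∈ Matrix.unitaryGroup (Fin (N + 1)) ℂ)
    (hc2 : ∃ i, i ≠ 0 ∧ U i 0 ≠ 0) :
    Set.MapsTo (phiF U) (ball 0 1) (ball 0 1) := by
  intro ζ hζ
  rw [mem_ball_zero_iff] at *
  exact abs_phi_lt U hU hc2 hζ

end MatrixPart

noncomputable section AnalysisPart

open Metric Set Complex Filter Matrix Topology

variable {N : ℕ} (U : Matrix (Fin (N + 1)) (Fin (N + 1)) ℂ)

def Sol (w ζ : ℂ) : Prop := Complex.abs ζ < 1 ∧ ζ = w * phiF U ζ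

lemma sol_abs_le (hU : U ∈ Matrix.unitaryGroup (Fin (N + 1)) ℂ) {w ζ : ℂ}
    (h : Sol U w ζ) : Complex.abs ζ ≤ Complex.abs w := by
  have h2 := congrArg Complex.abs h.2
  rw [show Complex.abs (w * phiF U ζ) = Complex.abs w * Complex.abs (phiF U ζ)
    from map_mul Complex.abs _ _] at h2
  have h3 := abs_phi_le U hU h.1
  nlinarith [Complex.abs.nonneg w, Complex.abs.nonneg (phiF U ζ)]

lemma sol_unique (hU : U ∈ Matrix.unitaryGroup (Fin (N + 1)) ℂ)
    (hc2 : ∃ i, i ≠ 0 ∧ U i 0 ≠ 0) {w x y : ℂ} (hw : Complex.abs w < 1)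
    (hx : Sol U w x) (hy : Sol U w y) : x = y := by
  by_contra hne
  rcases eq_or_ne w 0 with rfl | hw0
  · apply hne
    rw [hx.2, hy.2, zero_mul, zero_mul]
  have hwpos : 0 < Complex.abs w := Complex.abs.pos hw0
  have hφx : Complex.abs (phiF U x) < 1 := abs_phi_lt U hU hc2 hx.1
  have hφy : Complex.abs (phiF U y) < 1 := abs_phi_lt U hU hc2 hy.1
  have habsx : Complex.abs x < Complex.abs w := by
    have := congrArg Complex.abs hx.2
    rw [show Complex.abs (w * phiF U x) = Complex.abs w * Complex.abs (phiF U x)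
      from map_mul Complex.abs _ _] at this
    nlinarith
  have habsy : Complex.abs y < Complex.abs w := by
    have := congrArg Complex.abs hy.2
    rw [show Complex.abs (w * phiF U y) = Complex.abs w * Complex.abs (phiF U y)
      from map_mul Complex.abs _ _] at this
    nlinarith
  -- Schwarz–Pick
  have hSP := schwarz_pick_abs (diff_phiF U hU) (mapsTo_phiF U hU hc2) hx.1 hy.1
  set u : ℂ := (starRingEnd ℂ) x * y with hu
  have hphx : phiF U x = x / w := by
    rw [eq_div_iff hw0]
    linear_combination -hx.2
  have hphy : phiF U y = y / w := by
    rw [eq_div_iff hw0]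
    linear_combination -hy.2
  -- denominators
  have hD1ne : (1 : ℂ) - (starRingEnd ℂ) (phiF U x) * phiF U y ≠ 0 := mob_denom_ne hφx hφy
  have hD2ne : (1 : ℂ) - u ≠ 0 := by
    rw [hu]
    exact mob_denom_ne hx.1 hy.1
  -- compute |φy - φx| and |D1|
  have hsub : phiF U y - phiF U x = (y - x) / w := by
    rw [hphx, hphy, div_sub_div_same]
  have hnsqw : (0:ℝ) < Complex.normSq w := Complex.normSq_pos.2 hw0
  have hnsqC : ((Complex.normSq w : ℝ) : ℂ) ≠ 0 := by
    simpa using hnsqw.ne'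
  have hD1eq : (1 : ℂ) - (starRingEnd ℂ) (phiF U x) * phiF U y
      = (((Complex.normSq w : ℝ) : ℂ) - u) / ((Complex.normSq w : ℝ) : ℂ) := by
    rw [hphx, hphy, map_div₀, div_mul_div_comm,
      show (starRingEnd ℂ) w * w = ((Complex.normSq w : ℝ) : ℂ) from conj_mul_self w,
      ← hu, sub_div, div_self hnsqC]
  -- rewrite Schwarz–Pick as cross-multiplied inequality
  rw [mob, mob, hsub, hD1eq, ← hu] at hSP
  rw [map_div₀, map_div₀, map_div₀, map_div₀] at hSP
  have habsnsq : Complex.abs ((Complex.normSq w : ℝ) : ℂ) = Complex.normSq w := by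
    rw [Complex.abs_ofReal, abs_of_pos hnsqw]
  rw [habsnsq] at hSP
  have hyx : (0:ℝ) < Complex.abs (y - x) := Complex.abs.pos (sub_ne_zero.2 (Ne.symm hne))
  have hD2pos : (0:ℝ) < Complex.abs (1 - u) := Complex.abs.pos hD2ne
  have hXpos : (0:ℝ) ≤ Complex.abs (((Complex.normSq w : ℝ) : ℂ) - u) := Complex.abs.nonneg _
  -- hSP : (|y-x|/|w|) / (|nsqC - u| / nsqw) ≤ |y - x| / |1 - u|
  -- key strict inequality
  have huw : Complex.abs u < Complex.abs w := by
    rw [hu, show Complex.abs ((starRingEnd ℂ) x * y)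
      = Complex.abs ((starRingEnd ℂ) x) * Complex.abs y from map_mul Complex.abs _ _,
      Complex.abs_conj]
    nlinarith [Complex.abs.nonneg x, Complex.abs.nonneg y]
  have hnsqu : Complex.normSq u < Complex.normSq w := by
    rw [← Complex.sq_abs, ← Complex.sq_abs]
    nlinarith [Complex.abs.nonneg u]
  have hkey2 : Complex.normSq (((Complex.normSq w : ℝ) : ℂ) - u)
      < Complex.normSq w * Complex.normSq (1 - u) := by
    have hidentity : Complex.normSq w * Complex.normSq (1 - u)
        - Complex.normSq (((Complex.normSq w : ℝ) : ℂ) - u)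
        = (1 - Complex.normSq w) * (Complex.normSq w - Complex.normSq u) := by
      simp only [Complex.normSq_apply, Complex.sub_re, Complex.sub_im, Complex.one_re,
        Complex.one_im, Complex.ofReal_re, Complex.ofReal_im]
      ring
    have hw1 : Complex.normSq w < 1 := normSq_lt_one_iff.2 hw
    nlinarith
  have hkey : Complex.abs (((Complex.normSq w : ℝ) : ℂ) - u)
      < Complex.abs w * Complex.abs (1 - u) := by
    have e1 : (Complex.abs (((Complex.normSq w : ℝ) : ℂ) - u)) ^ 2
        = Complex.normSq (((Complex.normSq w : ℝ) : ℂ) - u) := Complex.sq_abs _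
    have e2 : (Complex.abs w * Complex.abs (1 - u)) ^ 2
        = Complex.normSq w * Complex.normSq (1 - u) := by
      rw [mul_pow, Complex.sq_abs, Complex.sq_abs]
    nlinarith [Complex.abs.nonneg (((Complex.normSq w : ℝ) : ℂ) - u),
      mul_nonneg (Complex.abs.nonneg w) (Complex.abs.nonneg (1 - u))]
  -- derive contradiction
  have hXne : (((Complex.normSq w : ℝ) : ℂ) - u) ≠ 0 := by
    intro h0
    apply hD1ne
    rw [hD1eq, h0, zero_div]
  have hBpos : (0:ℝ) < Complex.abs (((Complex.normSq w : ℝ) : ℂ) - u) := Complex.abs.pos hXne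
  have hrw : Complex.abs (y - x) / Complex.abs w /
        (Complex.abs (((Complex.normSq w : ℝ) : ℂ) - u) / Complex.normSq w)
      = (Complex.abs (y - x) * Complex.normSq w) /
        (Complex.abs w * Complex.abs (((Complex.normSq w : ℝ) : ℂ) - u)) := by
    field_simp
  rw [hrw, div_le_div_iff₀ (by positivity) hD2pos] at hSP
  have hsW : Complex.normSq w = Complex.abs w * Complex.abs w := by
    rw [← Complex.sq_abs]; ring
  have h2 := mul_lt_mul_of_pos_left (mul_lt_mul_of_pos_left hkey hwpos) hyx
  have h3 : Complex.abs (y - x) * (Complex.abs w * (Complex.abs w * Complex.abs (1 - u)))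
      = Complex.abs (y - x) * Complex.normSq w * Complex.abs (1 - u) := by
    rw [hsW]; ring
  linarith [h2, hSP]

lemma sol_zero : Sol U 0 0 := by
  constructor
  · simp
  · rw [zero_mul]

lemma sol_local (hU : U ∈ Matrix.unitaryGroup (Fin (N + 1)) ℂ)
    (hc2 : ∃ i, i ≠ 0 ∧ U i 0 ≠ 0) {w₀ s₀ : ℂ} (hw : Complex.abs w₀ < 1)
    (hs : Sol U w₀ s₀) :
    ∃ t : ℂ → ℂ, DifferentiableAt ℂ t w₀ ∧ t w₀ = s₀ ∧ ∀ᶠ w in 𝓝 w₀, Sol U w (t w) := by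
  have hs1 : Complex.abs s₀ < 1 := hs.1
  by_cases hφ0 : phiF U s₀ = 0
  · have hs0 : s₀ = 0 := by rw [hs.2, hφ0, mul_zero]
    have hφz := hφ0
    rw [hs0] at hφz
    refine ⟨fun _ => 0, differentiableAt_const 0, ?_, ?_⟩
    · exact hs0.symm
    · exact Eventually.of_forall fun w => ⟨by simp, by rw [hφz, mul_zero]⟩
  · -- use the local inverse of Θ(ζ) = ζ / φ(ζ)
    have hφana : AnalyticAt ℂ (phiF U) s₀ :=
      (diff_phiF U hU).analyticAt (isOpen_ball.mem_nhds (mem_ball_zero_iff.2 hs1))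
    obtain ⟨p, hp⟩ := hφana
    have h1 := hp.hasStrictDerivAt
    have hval := h1.hasDerivAt.deriv
    rw [← hval] at h1
    have hder := schwarz_pick_deriv (diff_phiF U hU) (mapsTo_phiF U hU hc2) hs1
    have hwd : Complex.abs (w₀ * deriv (phiF U) s₀) < 1 := by
      rcases eq_or_ne w₀ 0 with rfl | hw0
      · simp
      · have hwpos : 0 < Complex.abs w₀ := Complex.abs.pos hw0
        have hφlt : Complex.abs (phiF U s₀) < 1 := abs_phi_lt U hU hc2 hs1
        have hseq : Complex.abs s₀ = Complex.abs w₀ * Complex.abs (phiF U s₀) := by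
          have h2 := congrArg Complex.abs hs.2
          rwa [show Complex.abs (w₀ * phiF U s₀)
            = Complex.abs w₀ * Complex.abs (phiF U s₀) from map_mul Complex.abs _ _] at h2
        rw [show Complex.abs (w₀ * deriv (phiF U) s₀)
          = Complex.abs w₀ * Complex.abs (deriv (phiF U) s₀) from map_mul Complex.abs _ _]
        have hb2 : Complex.abs s₀ ^ 2 < 1 := by nlinarith [Complex.abs.nonneg s₀]
        have hpos2 : (0:ℝ) < 1 - Complex.abs s₀ ^ 2 := by linarith
        have hseq2 : Complex.abs s₀ ^ 2
            = (Complex.abs w₀ * Complex.abs (phiF U s₀)) ^ 2 := by rw [hseq]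
        have hmul := mul_le_mul_of_nonneg_left hder hwpos.le
        nlinarith [hmul, hb2, hpos2, hseq2, Complex.abs.nonneg (deriv (phiF U) s₀),
          Complex.abs.nonneg (phiF U s₀), mul_pos hwpos hpos2]
    have hD0 : (1 * phiF U s₀ - s₀ * deriv (phiF U) s₀) / phiF U s₀ ^ 2 ≠ 0 := by
      rw [div_ne_zero_iff]
      refine ⟨?_, pow_ne_zero 2 hφ0⟩
      have hfac : 1 * phiF U s₀ - s₀ * deriv (phiF U) s₀
          = phiF U s₀ * (1 - w₀ * deriv (phiF U) s₀) := by
        linear_combination (-(deriv (phiF U) s₀)) * hs.2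
      rw [hfac]
      apply mul_ne_zero hφ0
      intro hcon
      have hcon2 : w₀ * deriv (phiF U) s₀ = 1 := by linear_combination -hcon
      rw [hcon2] at hwd
      simp at hwd
    have hΘ : HasStrictDerivAt (fun ζ => ζ / phiF U ζ)
        ((1 * phiF U s₀ - s₀ * deriv (phiF U) s₀) / phiF U s₀ ^ 2) s₀ :=
      (hasStrictDerivAt_id s₀).div h1 hφ0
    have hΘval : (fun ζ => ζ / phiF U ζ) s₀ = w₀ := by
      show s₀ / phiF U s₀ = w₀
      rw [div_eq_iff hφ0]
      exact hs.2
    set t : ℂ → ℂ := hΘ.localInverse _ _ _ hD0 with ht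
    have hE := hΘ.hasStrictFDerivAt_equiv hD0
    have htinv : HasStrictDerivAt t
        (((1 * phiF U s₀ - s₀ * deriv (phiF U) s₀) / phiF U s₀ ^ 2)⁻¹) w₀ := by
      rw [← hΘval]
      exact hΘ.to_localInverse hD0
    have htw₀ : t w₀ = s₀ := by
      rw [← hΘval]
      exact hE.localInverse_apply_image
    have hri : ∀ᶠ w in 𝓝 w₀, (fun ζ => ζ / phiF U ζ) (t w) = w := by
      rw [← hΘval]
      exact hE.eventually_right_inverse
    have hcont : ContinuousAt t w₀ := htinv.hasDerivAt.continuousAt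
    have hopen : IsOpen {ζ : ℂ | ζ ∈ ball (0:ℂ) 1 ∧ phiF U ζ ≠ 0} := by
      have hrfl : {ζ : ℂ | ζ ∈ ball (0:ℂ) 1 ∧ phiF U ζ ≠ 0}
          = ball (0:ℂ) 1 ∩ (phiF U) ⁻¹' ({0}ᶜ) := rfl
      rw [hrfl]
      exact (diff_phiF U hU).continuousOn.isOpen_inter_preimage isOpen_ball
        isOpen_compl_singleton
    have hmem : s₀ ∈ {ζ : ℂ | ζ ∈ ball (0:ℂ) 1 ∧ phiF U ζ ≠ 0} :=
      ⟨mem_ball_zero_iff.2 hs1, hφ0⟩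
    have hev2 : ∀ᶠ w in 𝓝 w₀, t w ∈ {ζ : ℂ | ζ ∈ ball (0:ℂ) 1 ∧ phiF U ζ ≠ 0} := by
      have hpre := hcont.preimage_mem_nhds (hopen.mem_nhds (htw₀ ▸ hmem))
      exact eventually_mem_set.2 hpre
    refine ⟨t, htinv.hasDerivAt.differentiableAt, htw₀, ?_⟩
    filter_upwards [hri, hev2] with w h1' h2'
    refine ⟨mem_ball_zero_iff.1 h2'.1, ?_⟩
    have h3 : t w / phiF U (t w) = w := h1'
    rw [div_eq_iff h2'.2] at h3
    exact h3

lemma sol_exists (hU : U ∈ Matrix.unitaryGroup (Fin (N + 1)) ℂ)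
    (hc2 : ∃ i, i ≠ 0 ∧ U i 0 ≠ 0) :
    ∀ w ∈ ball (0:ℂ) 1, ∃ ζ, Sol U w ζ := by
  set S : Set ℂ := {w | w ∈ ball (0:ℂ) 1 ∧ ∃ ζ, Sol U w ζ} with hS
  have hSopen : IsOpen S := by
    rw [isOpen_iff_mem_nhds]
    rintro w₀ ⟨hw₀b, ζ₀, hζ₀⟩
    obtain ⟨t, _, _, hev⟩ := sol_local U hU hc2 (mem_ball_zero_iff.1 hw₀b) hζ₀
    have hball : ∀ᶠ w in 𝓝 w₀, w ∈ ball (0:ℂ) 1 :=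
      eventually_mem_set.2 (isOpen_ball.mem_nhds hw₀b)
    have : ∀ᶠ w in 𝓝 w₀, w ∈ S := by
      filter_upwards [hev, hball] with w h1 h2
      exact ⟨h2, t w, h1⟩
    exact eventually_mem_set.1 this
  have hSclosed : ∀ winf ∈ ball (0:ℂ) 1, winf ∈ closure S → winf ∈ S := by
    intro winf hwinfb hwinfcl
    rw [mem_closure_iff_seq_limit] at hwinfcl
    obtain ⟨g, hgS, hglim⟩ := hwinfcl
    have hwinf : Complex.abs winf < 1 := mem_ball_zero_iff.1 hwinfb
    set R : ℝ := (1 + Complex.abs winf) / 2 with hR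
    have hR1 : R < 1 := by rw [hR]; linarith
    have hwR : Complex.abs winf < R := by rw [hR]; linarith
    have htendabs : Tendsto (fun k => Complex.abs (g k)) atTop (𝓝 (Complex.abs winf)) :=
      (Complex.continuous_abs.continuousAt.tendsto).comp hglim
    have hev : ∀ᶠ k in atTop, Complex.abs (g k) < R := htendabs.eventually_lt_const hwR
    obtain ⟨K, hK⟩ := eventually_atTop.1 hev
    have hSol : ∀ k : ℕ, ∃ ζ, Sol U (g (k + K)) ζ := fun k => (hgS (k + K)).2
    choose ζ' hζ' using hSol
    have hζmem : ∀ k, ζ' k ∈ closedBall (0:ℂ) R := by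
      intro k
      rw [mem_closedBall_zero_iff]
      calc Complex.abs (ζ' k) ≤ Complex.abs (g (k + K)) := sol_abs_le U hU (hζ' k)
        _ ≤ R := (hK (k + K) (Nat.le_add_left K k)).le
    obtain ⟨zstar, hzstarmem, κ, hκmono, hκlim⟩ :=
      (isCompact_closedBall (0:ℂ) R).tendsto_subseq hζmem
    have hzstarball : zstar ∈ ball (0:ℂ) 1 := by
      rw [mem_ball_zero_iff]
      have := mem_closedBall_zero_iff.1 hzstarmem
      linarith
    have hg' : Tendsto (fun j => g (κ j + K)) atTop (𝓝 winf) := by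
      have h1 : Tendsto (fun k => g (k + K)) atTop (𝓝 winf) :=
        hglim.comp (tendsto_add_atTop_nat K)
      exact h1.comp hκmono.tendsto_atTop
    have hφcont : ContinuousAt (phiF U) zstar :=
      ((diff_phiF U hU).differentiableAt (isOpen_ball.mem_nhds hzstarball)).continuousAt
    have hRHS : Tendsto (fun j => g (κ j + K) * phiF U (ζ' (κ j))) atTop
        (𝓝 (winf * phiF U zstar)) :=
      hg'.mul ((hφcont.tendsto).comp hκlim)
    have hLHS : Tendsto (fun j => ζ' (κ j)) atTop (𝓝 zstar) := hκlim
    have heq : (fun j => ζ' (κ j)) = fun j => g (κ j + K) * phiF U (ζ' (κ j)) := by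
      funext j
      exact (hζ' (κ j)).2
    rw [heq] at hLHS
    have hlim : zstar = winf * phiF U zstar := tendsto_nhds_unique hLHS hRHS
    exact ⟨hwinfb, zstar, ⟨mem_ball_zero_iff.1 hzstarball, hlim⟩⟩
  intro w hwb
  by_contra hno
  have hV : IsOpen (closure S)ᶜ := isClosed_closure.isOpen_compl
  have hsub : ball (0:ℂ) 1 ⊆ S ∪ (closure S)ᶜ := by
    intro z hz
    by_cases hzc : z ∈ closure S
    · exact Or.inl (hSclosed z hz hzc)
    · exact Or.inr hzc
  have h0S : (0:ℂ) ∈ S := ⟨by simp, 0, sol_zero U⟩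
  have hne1 : (ball (0:ℂ) 1 ∩ S).Nonempty := ⟨0, by simp, h0S⟩
  have hwS : w ∉ S := fun hcon => hno hcon.2
  have hne2 : (ball (0:ℂ) 1 ∩ (closure S)ᶜ).Nonempty := by
    refine ⟨w, hwb, fun hcon => hwS (hSclosed w hwb hcon)⟩
  obtain ⟨z, hz1, hz2, hz3⟩ := (convex_ball (0:ℂ) 1).isPreconnected S (closure S)ᶜ hSopen hV
    hsub hne1 hne2
  exact hz3 (subset_closure hz2)

open scoped Classical in
/-- The branch of the solution. -/
def solF : ℂ → ℂ := fun w => if h : ∃ ζ, Sol U w ζ then h.choose else 0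

lemma solF_spec (hU : U ∈ Matrix.unitaryGroup (Fin (N + 1)) ℂ)
    (hc2 : ∃ i, i ≠ 0 ∧ U i 0 ≠ 0) {w : ℂ} (hw : Complex.abs w < 1) :
    Sol U w (solF U w) := by
  have h := sol_exists U hU hc2 w (mem_ball_zero_iff.2 hw)
  rw [solF, dif_pos h]
  exact h.choose_spec

lemma solF_zero (hU : U ∈ Matrix.unitaryGroup (Fin (N + 1)) ℂ)
    (hc2 : ∃ i, i ≠ 0 ∧ U i 0 ≠ 0) : solF U 0 = 0 :=
  sol_unique U hU hc2 (by simp) (solF_spec U hU hc2 (by simp)) (sol_zero U)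

lemma solF_diff (hU : U ∈ Matrix.unitaryGroup (Fin (N + 1)) ℂ)
    (hc2 : ∃ i, i ≠ 0 ∧ U i 0 ≠ 0) :
    DifferentiableOn ℂ (solF U) (ball 0 1) := by
  intro w₀ hw₀
  have hw₀' : Complex.abs w₀ < 1 := mem_ball_zero_iff.1 hw₀
  obtain ⟨t, htd, htw, hev⟩ := sol_local U hU hc2 hw₀' (solF_spec U hU hc2 hw₀')
  have hball : ∀ᶠ w in 𝓝 w₀, w ∈ ball (0:ℂ) 1 :=
    eventually_mem_set.2 (isOpen_ball.mem_nhds hw₀)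
  have heq : solF U =ᶠ[𝓝 w₀] t := by
    filter_upwards [hev, hball] with w h1 h2
    exact sol_unique U hU hc2 (mem_ball_zero_iff.1 h2) (solF_spec U hU hc2
      (mem_ball_zero_iff.1 h2)) h1
  exact (htd.congr_of_eventuallyEq heq).differentiableWithinAt


lemma main_identities (hU : U ∈ Matrix.unitaryGroup (Fin (N + 1)) ℂ)
    (hc2 : ∃ i, i ≠ 0 ∧ U i 0 ≠ 0) {w : ℂ} (hw : Complex.abs w < 1) :
    (U.mulVec (Fin.cons (solF U w) (fun j => w * wfun U j.succ (solF U w)))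
        = Fin.cons w (fun j => solF U w * (w * wfun U j.succ (solF U w))))
      ∧ (∑ j : Fin N, Complex.abs (w * wfun U j.succ (solF U w)) ^ 2 < 1)
      ∧ ((1 - Complex.abs (solF U w) ^ 2)
            * (1 - ∑ j : Fin N, Complex.abs (w * wfun U j.succ (solF U w)) ^ 2)
          = 1 - Complex.abs w ^ 2) := by
  have hsol := solF_spec U hU hc2 hw
  set ζ := solF U w with hζdef
  have hζ1 : Complex.abs ζ < 1 := hsol.1
  have hcons : (Fin.cons ζ (fun j => w * wfun U j.succ ζ) : Fin (N+1) → ℂ)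
      = fun i => w * wfun U i ζ := by
    funext i
    refine Fin.cases ?_ ?_ i
    · rw [Fin.cons_zero]
      exact hsol.2
    · intro j
      rw [Fin.cons_succ]
  have hsmul : (fun i => w * wfun U i ζ) = w • (fun i => wfun U i ζ) := by
    funext i
    rw [Pi.smul_apply, smul_eq_mul]
  have hmv : U *ᵥ (fun i => w * wfun U i ζ)
      = Fin.cons w (fun j => ζ * (w * wfun U j.succ ζ)) := by
    rw [hsmul, Matrix.mulVec_smul, U_mulVec_wfun U hU hζ1]
    funext i
    refine Fin.cases ?_ ?_ i
    · rw [Fin.cons_zero, Pi.smul_apply, Pi.add_apply, Pi.smul_apply, Pm_mulVec]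
      simp
    · intro j
      rw [Fin.cons_succ, Pi.smul_apply, Pi.add_apply, Pi.smul_apply, Pm_mulVec,
        Pi.single_apply, if_neg (Fin.succ_ne_zero j), if_neg (Fin.succ_ne_zero j),
        one_mul, zero_add, smul_eq_mul, smul_eq_mul]
      ring
  have hmv' : U.mulVec (Fin.cons ζ (fun j => w * wfun U j.succ ζ))
      = Fin.cons w (fun j => ζ * (w * wfun U j.succ ζ)) := by
    rw [hcons]
    exact hmv
  refine ⟨hmv', ?_, ?_⟩
  all_goals {
    have hsum := unitary_sum_sq U hU (fun i => w * wfun U i ζ)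
    rw [hmv] at hsum
    rw [Fin.sum_univ_succ, Fin.sum_univ_succ] at hsum
    rw [Fin.cons_zero] at hsum
    simp only [Fin.cons_succ] at hsum
    have hzero : w * wfun U 0 ζ = ζ := hsol.2.symm
    rw [hzero] at hsum
    have hexp : ∀ j : Fin N, Complex.abs (ζ * (w * wfun U j.succ ζ)) ^ 2
        = Complex.abs ζ ^ 2 * Complex.abs (w * wfun U j.succ ζ) ^ 2 := by
      intro j
      rw [show Complex.abs (ζ * (w * wfun U j.succ ζ))
        = Complex.abs ζ * Complex.abs (w * wfun U j.succ ζ) from map_mul Complex.abs _ _,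
        mul_pow]
    rw [Finset.sum_congr rfl fun j _ => hexp j, ← Finset.mul_sum] at hsum
    set F := ∑ j : Fin N, Complex.abs (w * wfun U j.succ ζ) ^ 2 with hF
    have hF0 : 0 ≤ F := by rw [hF]; positivity
    have hζ2 : Complex.abs ζ ^ 2 < 1 := by nlinarith [Complex.abs.nonneg ζ]
    have hw2 : Complex.abs w ^ 2 < 1 := by nlinarith [Complex.abs.nonneg w]
    first
      | (nlinarith [hsum, hζ2, hw2, hF0])
      | (nlinarith [hsum])
  }

end AnalysisPart


noncomputable section MainTheorem

open Metric Set Complex Filter Matrix Topology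

/-- Existence: for every unitary matrix `U ∈ U(n+1)` there is a holomorphic map
`f = (f₁, f_{2,1}, …, f_{2,n}) : Δ → Δ × 𝔹ⁿ` with `f(0) = 0` satisfying
`U (f₁, f_{2,1}, …, f_{2,n})ᵗ = (w, f₁ f_{2,1}, …, f₁ f_{2,n})ᵗ` on `Δ`; consequently it
satisfies the isometry functional equation
`(1 - |f₁|²)(1 - ∑ |f_{2,j}|²) = 1 - |w|²` on `Δ`. -/
theorem exists_isometry_of_unitary (n : ℕ) (hn : 2 ≤ n)
    (U : Matrix (Fin (n + 1)) (Fin (n + 1)) ℂ)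
    (hU : U ∈ Matrix.unitaryGroup (Fin (n + 1)) ℂ) :
    ∃ (f₁ : ℂ → ℂ) (f₂ : Fin n → ℂ → ℂ),
      DifferentiableOn ℂ f₁ (Metric.ball 0 1) ∧
      (∀ j, DifferentiableOn ℂ (f₂ j) (Metric.ball 0 1)) ∧
      (∀ w ∈ Metric.ball (0 : ℂ) 1, ‖f₁ w‖ < 1) ∧
      (∀ w ∈ Metric.ball (0 : ℂ) 1, ∑ j, ‖f₂ j w‖ ^ 2 < 1) ∧
      f₁ 0 = 0 ∧ (∀ j, f₂ j 0 = 0) ∧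
      (∀ w ∈ Metric.ball (0 : ℂ) 1,
        U.mulVec (Fin.cons (f₁ w) (fun j => f₂ j w))
          = Fin.cons w (fun j => f₁ w * f₂ j w)) ∧
      ∀ w ∈ Metric.ball (0 : ℂ) 1,
        (1 - ‖f₁ w‖ ^ 2) * (1 - ∑ j, ‖f₂ j w‖ ^ 2)
          = 1 - ‖w‖ ^ 2 := by
  by_cases hc2 : ∃ i, i ≠ 0 ∧ U i 0 ≠ 0
  · -- main case
    refine ⟨solF U, fun j w => w * wfun U j.succ (solF U w), ?_, ?_, ?_, ?_, ?_, ?_, ?_, ?_⟩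
    · exact solF_diff U hU hc2
    · intro j
      have hs_diff := solF_diff U hU hc2
      have h1 : DifferentiableOn ℂ (fun w => afun U j.succ (solF U w)) (ball 0 1) :=
        (diff_afun U j.succ).comp_differentiableOn hs_diff
      have h2 : DifferentiableOn ℂ (fun w => dfun U (solF U w)) (ball 0 1) :=
        (diff_dfun U).comp_differentiableOn hs_diff
      have h3 : DifferentiableOn ℂ
          (fun w => w * (afun U j.succ (solF U w) / dfun U (solF U w))) (ball 0 1) :=
        differentiableOn_id.mul (h1.div h2 fun w hw =>
          dfun_ne U hU (solF_spec U hU hc2 (mem_ball_zero_iff.1 hw)).1)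
      exact h3
    · intro w hw
      exact (solF_spec U hU hc2 (mem_ball_zero_iff.1 hw)).1
    · intro w hw
      have hkey := main_identities U hU hc2 (mem_ball_zero_iff.1 hw)
      exact hkey.2.1
    · exact solF_zero U hU hc2
    · intro j
      show (0:ℂ) * wfun U j.succ (solF U 0) = 0
      rw [zero_mul]
    · intro w hw
      exact (main_identities U hU hc2 (mem_ball_zero_iff.1 hw)).1
    · intro w hw
      exact (main_identities U hU hc2 (mem_ball_zero_iff.1 hw)).2.2
  · -- degenerate case: the first column of U is a multiple of e₀
    push_neg at hc2
    have h1 : star U * U = 1 := Matrix.mem_unitaryGroup_iff'.1 hU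
    have hent := congrFun (congrFun h1 0) 0
    rw [Matrix.mul_apply] at hent
    have hent2 : ∑ k, (star U) 0 k * U k 0 = (starRingEnd ℂ) (U 0 0) * U 0 0 := by
      rw [Fin.sum_univ_succ]
      have hz : ∀ j : Fin n, (star U) 0 j.succ * U j.succ 0 = 0 := by
        intro j
        rw [hc2 j.succ (Fin.succ_ne_zero j), mul_zero]
      rw [Finset.sum_eq_zero fun j _ => hz j, add_zero, Matrix.star_apply]
      rfl
    rw [hent2] at hent
    have hone : (1 : Matrix (Fin (n+1)) (Fin (n+1)) ℂ) 0 0 = 1 := Matrix.one_apply_eq 0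
    rw [hone] at hent
    have habs00 : Complex.abs (U 0 0) = 1 := by
      rw [conj_mul_self] at hent
      have h2 : Complex.normSq (U 0 0) = 1 := by exact_mod_cast hent
      rw [← Complex.sq_abs] at h2
      nlinarith [Complex.abs.nonneg (U 0 0)]
    refine ⟨fun w => (starRingEnd ℂ) (U 0 0) * w, fun _ _ => 0, ?_, ?_, ?_, ?_, ?_, ?_, ?_, ?_⟩
    · exact (differentiable_id.const_mul _).differentiableOn
    · intro j
      exact (differentiable_const 0).differentiableOn
    · intro w hw
      show Complex.abs ((starRingEnd ℂ) (U 0 0) * w) < 1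
      rw [show Complex.abs ((starRingEnd ℂ) (U 0 0) * w)
        = Complex.abs ((starRingEnd ℂ) (U 0 0)) * Complex.abs w from map_mul Complex.abs _ _,
        Complex.abs_conj, habs00, one_mul]
      exact mem_ball_zero_iff.1 hw
    · intro w hw
      simp
    · show (starRingEnd ℂ) (U 0 0) * 0 = 0
      rw [mul_zero]
    · intro j
      rfl
    · intro w hw
      show U.mulVec (Fin.cons ((starRingEnd ℂ) (U 0 0) * w) (fun _ => (0:ℂ)))
        = Fin.cons w (fun _ => ((starRingEnd ℂ) (U 0 0) * w) * 0)
      funext i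
      rw [Matrix.mulVec, dotProduct, Fin.sum_univ_succ]
      have hz : ∀ j : Fin n, U i j.succ *
          (Fin.cons ((starRingEnd ℂ) (U 0 0) * w) (fun _ => (0:ℂ)) : Fin (n+1) → ℂ) j.succ
            = 0 := by
        intro j
        rw [Fin.cons_succ, mul_zero]
      rw [Finset.sum_eq_zero fun j _ => hz j, add_zero, Fin.cons_zero]
      refine Fin.cases ?_ ?_ i
      · rw [Fin.cons_zero]
        rw [show U 0 0 * ((starRingEnd ℂ) (U 0 0) * w)
          = ((starRingEnd ℂ) (U 0 0) * U 0 0) * w by ring, hent, one_mul]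
      · intro j
        rw [Fin.cons_succ, hc2 j.succ (Fin.succ_ne_zero j), zero_mul, mul_zero]
    · intro w hw
      have habs : Complex.abs ((starRingEnd ℂ) (U 0 0) * w) = Complex.abs w := by
        rw [show Complex.abs ((starRingEnd ℂ) (U 0 0) * w)
          = Complex.abs ((starRingEnd ℂ) (U 0 0)) * Complex.abs w from map_mul Complex.abs _ _,
          Complex.abs_conj, habs00, one_mul]
      simp only [← Complex.abs_apply]
      rw [habs]
      simp

end MainTheorem
end

section
/- For each integer N ≥ 2 there exist ε > 0 and a holomorphic map f = (f₁, …, f_N) : {z ∈ ℂ : |z| < 1 + ε} → ℂ^N such that ∑_{k=1}^N |f_k(z)|² < 1 for |z| < 1 and ∑_{k=1}^N |f_k(z)|² = 1 for |z| = 1 (so f restricts to a proper holomorphic map from Δ to 𝔹^N extending holomorphically to a neighborhood of the closed unit disk), every component f_k is algebraic (there is a nonzero polynomial P_k ∈ ℂ[X, Y] with P_k(z, f_k(z)) = 0 on Δ), and f is not rational: at least one component f_k is not a rational function on Δ. -/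
open Filter Metric Complex Topology Polynomial

noncomputable section AlgIrrAux

/-- The iteration map whose fixed point (near `1`) is the algebraic function `σ`. -/
def itMap (z t : ℂ) : ℂ := 1 + z * (100 * t - 1) / (1000 * t ^ 2)

/-- Iterates of the map, starting at `1`. -/
def itSeq (z : ℂ) : ℕ → ℂ
  | 0 => 1
  | n + 1 => itMap z (itSeq z n)

/-- The algebraic function `σ`, a branch of the inverse of
`t ↦ 1000 t² (t-1)/(100 t - 1)` near `t = 1`. -/
def sigmaFn (z : ℂ) : ℂ := limUnder atTop (itSeq z)

lemma t_facts {t : ℂ} (ht : ‖t - 1‖ ≤ 1/5) : 4/5 ≤ ‖t‖ ∧ ‖t‖ ≤ 6/5 ∧ t ≠ 0 := by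
  have h1 : ‖(1:ℂ)‖ ≤ ‖t‖ + ‖t - 1‖ := by
    calc ‖(1:ℂ)‖ = ‖t + (1 - t)‖ := by ring_nf
    _ ≤ ‖t‖ + ‖1 - t‖ := norm_add_le _ _
    _ = ‖t‖ + ‖t - 1‖ := by rw [norm_sub_rev]
  simp only [norm_one] at h1
  have h2 : ‖t‖ ≤ ‖(1:ℂ)‖ + ‖t - 1‖ := by
    calc ‖t‖ = ‖1 + (t - 1)‖ := by ring_nf
    _ ≤ ‖(1:ℂ)‖ + ‖t - 1‖ := norm_add_le _ _
  simp only [norm_one] at h2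
  refine ⟨by linarith, by linarith, ?_⟩
  intro h
  rw [h] at ht
  simp at ht
  norm_num at ht

lemma itMap_close {z t : ℂ} (hz : ‖z‖ ≤ 21/20) (ht : ‖t - 1‖ ≤ 1/5) :
    ‖itMap z t - 1‖ ≤ 1/5 := by
  obtain ⟨htl, htu, ht0⟩ := t_facts ht
  have hnum : ‖z * (100 * t - 1)‖ ≤ 21/20 * 121 := by
    rw [norm_mul]
    have : ‖100 * t - 1‖ ≤ 121 := by
      calc ‖100 * t - 1‖ ≤ ‖100 * t‖ + ‖(1:ℂ)‖ := norm_sub_le _ _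
      _ = 100 * ‖t‖ + 1 := by simp [norm_mul]
      _ ≤ 100 * (6/5) + 1 := by linarith
      _ = 121 := by norm_num
    exact mul_le_mul hz this (norm_nonneg _) (by norm_num)
  have hden : (640 : ℝ) ≤ ‖1000 * t ^ 2‖ := by
    rw [norm_mul, norm_pow]
    have : (4/5:ℝ)^2 ≤ ‖t‖^2 := by
      apply pow_le_pow_left₀ (by norm_num) htl
    simp only [Complex.norm_ofNat]
    nlinarith
  have key : itMap z t - 1 = z * (100 * t - 1) / (1000 * t ^ 2) := by
    rw [itMap]; ring
  rw [key, norm_div]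
  calc ‖z * (100 * t - 1)‖ / ‖1000 * t ^ 2‖ ≤ (21/20 * 121) / 640 := by
        apply div_le_div₀ (by norm_num) hnum (by norm_num) hden
  _ ≤ 1/5 := by norm_num

lemma itMap_contr {z t t' : ℂ} (hz : ‖z‖ ≤ 21/20) (ht : ‖t - 1‖ ≤ 1/5)
    (ht' : ‖t' - 1‖ ≤ 1/5) : ‖itMap z t - itMap z t'‖ ≤ 2/5 * ‖t - t'‖ := by
  obtain ⟨htl, htu, ht0⟩ := t_facts ht
  obtain ⟨htl', htu', ht0'⟩ := t_facts ht'
  have key : itMap z t - itMap z t' =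
      z * (t' - t) * (100 * t * t' - t - t') / (1000 * t ^ 2 * t' ^ 2) := by
    rw [itMap, itMap]
    field_simp
    ring
  rw [key, norm_div]
  have hnum : ‖z * (t' - t) * (100 * t * t' - t - t')‖ ≤ 21/20 * (732/5) * ‖t - t'‖ := by
    rw [norm_mul, norm_mul]
    have hf : ‖100 * t * t' - t - t'‖ ≤ 732/5 := by
      calc ‖100 * t * t' - t - t'‖ ≤ ‖100 * t * t' - t‖ + ‖t'‖ := norm_sub_le _ _
      _ ≤ ‖100 * t * t'‖ + ‖t‖ + ‖t'‖ := by
          have := norm_sub_le (100 * t * t') t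
          linarith
      _ = 100 * ‖t‖ * ‖t'‖ + ‖t‖ + ‖t'‖ := by simp [norm_mul]
      _ ≤ 100 * (6/5) * (6/5) + 6/5 + 6/5 := by nlinarith
      _ = 732/5 := by norm_num
    have h1 : ‖t' - t‖ = ‖t - t'‖ := norm_sub_rev _ _
    rw [h1]
    calc ‖z‖ * ‖t - t'‖ * ‖100 * t * t' - t - t'‖
        ≤ (21/20) * ‖t - t'‖ * (732/5) := by
          apply mul_le_mul _ hf (norm_nonneg _) (by positivity)
          apply mul_le_mul_of_nonneg_right hz (norm_nonneg _)
    _ = 21/20 * (732/5) * ‖t - t'‖ := by ring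
  have hden : (2048/5 : ℝ) ≤ ‖1000 * t ^ 2 * t' ^ 2‖ := by
    rw [norm_mul, norm_mul, norm_pow, norm_pow]
    simp only [Complex.norm_ofNat]
    have h2 : (4/5:ℝ)^2 ≤ ‖t‖^2 := pow_le_pow_left₀ (by norm_num) htl 2
    have h3 : (4/5:ℝ)^2 ≤ ‖t'‖^2 := pow_le_pow_left₀ (by norm_num) htl' 2
    nlinarith
  calc ‖z * (t' - t) * (100 * t * t' - t - t')‖ / ‖1000 * t ^ 2 * t' ^ 2‖
      ≤ (21/20 * (732/5) * ‖t - t'‖) / (2048/5) := by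
        apply div_le_div₀ (by positivity) hnum (by norm_num) hden
  _ ≤ 2/5 * ‖t - t'‖ := by
        rw [div_le_iff₀ (by norm_num)]
        nlinarith [norm_nonneg (t - t')]


lemma itSeq_close {z : ℂ} (hz : ‖z‖ ≤ 21/20) : ∀ n, ‖itSeq z n - 1‖ ≤ 1/5 := by
  intro n
  induction n with
  | zero => simp [itSeq]
  | succ n ih => exact itMap_close hz ih

lemma itSeq_step {z : ℂ} (hz : ‖z‖ ≤ 21/20) :
    ∀ n, dist (itSeq z n) (itSeq z (n + 1)) ≤ (1/5) * (2/5) ^ n := by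
  intro n
  induction n with
  | zero =>
    have h1 : itSeq z (0+1) = 1 + z * (99/1000) := by
      show itMap z (itSeq z 0) = _
      show itMap z 1 = _
      rw [itMap]; norm_num; ring
    rw [show itSeq z 0 = (1:ℂ) from rfl, h1, dist_eq_norm, pow_zero, mul_one]
    have h2 : (1 : ℂ) - (1 + z * (99/1000)) = -(z * (99/1000)) := by ring
    rw [h2, norm_neg, norm_mul]
    have : ‖(99/1000 : ℂ)‖ = 99/1000 := by
      rw [show ((99:ℂ)/1000) = ((99/1000 : ℝ) : ℂ) by norm_num, Complex.norm_real]
      norm_num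
    rw [this]
    nlinarith [norm_nonneg z]
  | succ n ih =>
    have h1 : dist (itSeq z (n+1)) (itSeq z (n+2)) =
        ‖itMap z (itSeq z n) - itMap z (itSeq z (n+1))‖ := by
      rw [dist_eq_norm]; rfl
    rw [h1]
    calc ‖itMap z (itSeq z n) - itMap z (itSeq z (n+1))‖
        ≤ 2/5 * ‖itSeq z n - itSeq z (n+1)‖ :=
          itMap_contr hz (itSeq_close hz n) (itSeq_close hz (n+1))
    _ ≤ 2/5 * ((1/5) * (2/5)^n) := by
        rw [← dist_eq_norm]
        nlinarith [dist_nonneg (x := itSeq z n) (y := itSeq z (n+1))]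
    _ = 1/5 * (2/5)^(n+1) := by ring

lemma itSeq_cauchy {z : ℂ} (hz : ‖z‖ ≤ 21/20) : CauchySeq (itSeq z) :=
  cauchySeq_of_le_geometric (2/5) (1/5) (by norm_num) (itSeq_step hz)

lemma sigma_tendsto {z : ℂ} (hz : ‖z‖ ≤ 21/20) :
    Tendsto (itSeq z) atTop (𝓝 (sigmaFn z)) :=
  (itSeq_cauchy hz).tendsto_limUnder

lemma sigma_dist {z : ℂ} (hz : ‖z‖ ≤ 21/20) (n : ℕ) :
    dist (itSeq z n) (sigmaFn z) ≤ (1/5) * (2/5)^n / (1 - 2/5) :=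
  dist_le_of_le_geometric_of_tendsto (2/5) (1/5) (by norm_num) (itSeq_step hz)
    (sigma_tendsto hz) n

lemma sigma_close {z : ℂ} (hz : ‖z‖ ≤ 21/20) : ‖sigmaFn z - 1‖ ≤ 1/5 := by
  have h1 : Tendsto (fun n => ‖itSeq z n - 1‖) atTop (𝓝 ‖sigmaFn z - 1‖) :=
    ((sigma_tendsto hz).sub_const 1).norm
  exact le_of_tendsto h1 (Eventually.of_forall (itSeq_close hz))

lemma sigma_ne_zero {z : ℂ} (hz : ‖z‖ ≤ 21/20) : sigmaFn z ≠ 0 :=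
  (t_facts (sigma_close hz)).2.2

lemma sigma_fix {z : ℂ} (hz : ‖z‖ ≤ 21/20) : sigmaFn z = itMap z (sigmaFn z) := by
  have h0 : sigmaFn z ≠ 0 := sigma_ne_zero hz
  have hc : Tendsto (fun n => itMap z (itSeq z n)) atTop (𝓝 (itMap z (sigmaFn z))) := by
    have hcont : ContinuousAt (itMap z) (sigmaFn z) := by
      apply ContinuousAt.add continuousAt_const
      apply ContinuousAt.div
      · fun_prop
      · fun_prop
      · simp [h0]
    exact hcont.tendsto.comp (sigma_tendsto hz)
  have h2 : Tendsto (fun n => itSeq z (n+1)) atTop (𝓝 (sigmaFn z)) :=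
    (sigma_tendsto hz).comp (tendsto_add_atTop_nat 1)
  have h3 : (fun n => itSeq z (n+1)) = fun n => itMap z (itSeq z n) := rfl
  rw [h3] at h2
  exact tendsto_nhds_unique h2 hc

lemma sigma_rel {z : ℂ} (hz : ‖z‖ ≤ 21/20) :
    1000 * (sigmaFn z)^3 - 1000 * (sigmaFn z)^2 = z * (100 * sigmaFn z - 1) := by
  have h0 : sigmaFn z ≠ 0 := sigma_ne_zero hz
  have h := sigma_fix hz
  rw [itMap] at h
  field_simp at h
  linear_combination h

lemma sigma_diff : DifferentiableOn ℂ sigmaFn (ball 0 (21/20)) := by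
  have hball : ∀ z ∈ ball (0:ℂ) (21/20), ‖z‖ ≤ 21/20 := by
    intro z hzb
    rw [mem_ball, dist_zero_right] at hzb
    exact le_of_lt hzb
  have hdn : ∀ n, DifferentiableOn ℂ (fun z => itSeq z n) (ball 0 (21/20)) := by
    intro n
    induction n with
    | zero => exact differentiableOn_const 1
    | succ n ih =>
      have : (fun z => itSeq z (n+1)) =
          fun z => 1 + z * (100 * itSeq z n - 1) / (1000 * (itSeq z n) ^ 2) := rfl
      rw [this]
      apply DifferentiableOn.add (differentiableOn_const 1)
      apply DifferentiableOn.div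
      · exact (differentiableOn_id).mul (((differentiableOn_const 100).mul ih).sub
          (differentiableOn_const 1))
      · exact (differentiableOn_const 1000).mul (ih.pow 2)
      · intro z hzb
        have h0 := sigma_ne_zero (hball z hzb)
        have := (t_facts (itSeq_close (hball z hzb) n)).2.2
        simp only [mul_ne_zero_iff]
        exact ⟨by norm_num, pow_ne_zero 2 this⟩
  have huni : TendstoUniformlyOn (fun n z => itSeq z n) sigmaFn atTop (ball 0 (21/20)) := by
    rw [Metric.tendstoUniformlyOn_iff]
    intro ε hε
    have hlim : Tendsto (fun n : ℕ => (1/5) * (2/5:ℝ)^n / (1 - 2/5)) atTop (𝓝 0) := by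
      have := tendsto_pow_atTop_nhds_zero_of_lt_one (show (0:ℝ) ≤ 2/5 by norm_num)
        (show (2/5:ℝ) < 1 by norm_num)
      have h2 := this.const_mul (1/5 : ℝ)
      simp only [mul_zero] at h2
      have h3 := h2.div_const (1 - 2/5 : ℝ)
      simpa using h3
    filter_upwards [hlim.eventually (gt_mem_nhds hε)] with n hn
    intro x hx
    have := sigma_dist (hball x hx) n
    rw [dist_comm] at this
    calc dist (sigmaFn x) (itSeq x n) ≤ (1/5) * (2/5)^n / (1 - 2/5) := this
    _ < ε := hn
  exact huni.tendstoLocallyUniformlyOn.differentiableOn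
    (Eventually.of_forall hdn) isOpen_ball


def rtC : ℝ := Real.sqrt 990000

lemma rtC_sq : rtC ^ 2 = 990000 := Real.sq_sqrt (by norm_num)
lemma rtC_pos : 0 < rtC := Real.sqrt_pos.mpr (by norm_num)
lemma rtC_ge : 100 ≤ rtC := by
  nlinarith [rtC_sq, rtC_pos]
lemma rtC_sqC : (rtC : ℂ) ^ 2 = 990000 := by
  rw [show ((rtC:ℂ))^2 = ((rtC^2 : ℝ) : ℂ) by push_cast; ring, rtC_sq]
  norm_num

def F1fn (z : ℂ) : ℂ := (100 * sigmaFn z - 1) / ((rtC : ℂ) * (sigmaFn z) ^ 2)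
def F2fn (z : ℂ) : ℂ := (10 * sigmaFn z - 1000 * (sigmaFn z) ^ 2) / ((rtC : ℂ) * (sigmaFn z) ^ 2)

-- the key real quantities
lemma den_normSq (z : ℂ) : normSq ((rtC : ℂ) * (sigmaFn z) ^ 2)
    = 990000 * (normSq (sigmaFn z))^2 := by
  rw [normSq_mul, map_pow, normSq_ofReal]
  nlinarith [rtC_sq]

lemma abs1_sq (z : ℂ) :
    ‖F1fn z‖ ^ 2
      = normSq (100 * sigmaFn z - 1) / (990000 * (normSq (sigmaFn z))^2) := by
  rw [Complex.sq_norm, F1fn, map_div₀, den_normSq z]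

lemma abs2_sq (z : ℂ) :
    ‖F2fn z‖ ^ 2
      = 100 * normSq (sigmaFn z) * normSq (100 * sigmaFn z - 1)
        / (990000 * (normSq (sigmaFn z))^2) := by
  rw [Complex.sq_norm, F2fn, map_div₀, den_normSq z]
  congr 1
  rw [show (10 * sigmaFn z - 1000*(sigmaFn z)^2)
      = ((-10 : ℝ) : ℂ) * (sigmaFn z * (100 * sigmaFn z - 1)) by push_cast; ring,
    normSq_mul, normSq_mul, normSq_ofReal]
  ring


lemma normSq_lower {z : ℂ} (hz : ‖z‖ ≤ 21/20) : 16/25 ≤ normSq (sigmaFn z) := by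
  have h := (t_facts (sigma_close hz)).1
  rw [Complex.normSq_eq_norm_sq]
  nlinarith

lemma normSq_B_pos {z : ℂ} (hz : ‖z‖ ≤ 21/20) : 0 < normSq (100 * sigmaFn z - 1) := by
  apply normSq_pos.mpr
  intro h
  have h2 : sigmaFn z = 1/100 := by
    linear_combination h/100
  have := sigma_close hz
  rw [h2] at this
  rw [show (1/100 : ℂ) - 1 = ((-99/100 : ℝ) : ℂ) by norm_num] at this
  rw [Complex.norm_real] at this
  norm_num at this

lemma hBE_identity (t : ℂ) :
    normSq (100 * t - 1) = 9900 * normSq t - 99 + 100 * normSq (t - 1) := by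
  simp only [Complex.normSq_apply, Complex.sub_re, Complex.sub_im, Complex.mul_re,
    Complex.mul_im, Complex.one_re, Complex.one_im, Complex.re_ofNat, Complex.im_ofNat]
  ring

lemma hRn_identity {z : ℂ} (hz : ‖z‖ ≤ 21/20) :
    1000000 * (normSq (sigmaFn z))^2 * normSq (sigmaFn z - 1)
      = normSq z * normSq (100 * sigmaFn z - 1) := by
  have h := congrArg normSq (sigma_rel hz)
  rw [show 1000 * (sigmaFn z)^3 - 1000 * (sigmaFn z)^2
      = ((1000:ℝ):ℂ) * ((sigmaFn z)^2 * (sigmaFn z - 1)) by push_cast; ring] at h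
  rw [normSq_mul, normSq_ofReal, normSq_mul, map_pow, normSq_mul] at h
  linarith [h]

lemma key_eq {z : ℂ} (hz : ‖z‖ ≤ 21/20) :
    990000 * (normSq (sigmaFn z))^2 * (100 * normSq (sigmaFn z) - 1)
      = normSq (100 * sigmaFn z - 1) * (10000 * (normSq (sigmaFn z))^2 - normSq z) := by
  have h1 := hRn_identity hz
  have h2 := hBE_identity (sigmaFn z)
  linear_combination (-1 : ℝ) * h1 - 10000 * (normSq (sigmaFn z))^2 * h2

lemma sum_boundary {z : ℂ} (habs : ‖z‖ = 1) :
    ‖F1fn z‖ ^ 2 + ‖F2fn z‖ ^ 2 = 1 := by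
  have hz : ‖z‖ ≤ 21/20 := by rw [habs]; norm_num
  set A := normSq (sigmaFn z) with hA_def
  set B := normSq (100 * sigmaFn z - 1) with hB_def
  have hA : 16/25 ≤ A := normSq_lower hz
  have hB : 0 < B := normSq_B_pos hz
  have hn : normSq z = 1 := by rw [Complex.normSq_eq_norm_sq, habs]; norm_num
  have hkey := key_eq hz
  rw [hn] at hkey
  have hcancel : 990000 * A^2 = B * (100 * A + 1) := by
    have hfac : (0:ℝ) < 100 * A - 1 := by nlinarith
    have h3 : (990000 * A^2) * (100*A-1) = (B * (100 * A + 1)) * (100*A-1) := by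
      linear_combination hkey
    exact mul_right_cancel₀ (ne_of_gt hfac) h3
  rw [abs1_sq, abs2_sq, ← hA_def, ← hB_def, ← add_div, div_eq_one_iff_eq]
  · linear_combination (-1 : ℝ) * hcancel
  · nlinarith

lemma sum_interior {z : ℂ} (habs : ‖z‖ < 1) :
    ‖F1fn z‖ ^ 2 + ‖F2fn z‖ ^ 2 < 1 := by
  have habs' : (0:ℝ) ≤ ‖z‖ := norm_nonneg _
  have hz : ‖z‖ ≤ 21/20 := by linarith
  set A := normSq (sigmaFn z) with hA_def
  set B := normSq (100 * sigmaFn z - 1) with hB_def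
  set n := normSq z with hn_def
  have hA : 16/25 ≤ A := normSq_lower hz
  have hB : 0 < B := normSq_B_pos hz
  have hn : n < 1 := by rw [hn_def, Complex.normSq_eq_norm_sq]; nlinarith
  have hkey := key_eq hz
  have hfac : (0:ℝ) < 100 * A - 1 := by nlinarith
  have hfact : (990000*A^2 - B*(100*A+1))*(100*A-1) = B*(1-n) := by
    linear_combination hkey
  have hpos : (0:ℝ) < 990000*A^2 - B*(100*A+1) := by
    nlinarith [mul_pos hB (show (0:ℝ) < 1 - n by linarith)]
  rw [abs1_sq, abs2_sq, ← hA_def, ← hB_def, ← add_div, div_lt_one (by nlinarith)]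
  nlinarith


lemma ball_norm {z : ℂ} (hzb : z ∈ ball (0:ℂ) (21/20)) : ‖z‖ ≤ 21/20 := by
  rw [mem_ball, dist_zero_right] at hzb
  exact le_of_lt hzb

lemma den_ne_zero {z : ℂ} (hz : ‖z‖ ≤ 21/20) : (rtC : ℂ) * (sigmaFn z) ^ 2 ≠ 0 := by
  apply mul_ne_zero
  · simpa using ne_of_gt rtC_pos
  · exact pow_ne_zero 2 (sigma_ne_zero hz)

lemma F1_diff : DifferentiableOn ℂ F1fn (ball 0 (21/20)) := by
  apply DifferentiableOn.div
  · exact ((differentiableOn_const (100:ℂ)).mul sigma_diff).sub (differentiableOn_const 1)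
  · exact (differentiableOn_const _).mul (sigma_diff.pow 2)
  · exact fun z hzb => den_ne_zero (ball_norm hzb)

lemma F2_diff : DifferentiableOn ℂ F2fn (ball 0 (21/20)) := by
  apply DifferentiableOn.div
  · exact ((differentiableOn_const (10:ℂ)).mul sigma_diff).sub
      ((differentiableOn_const 1000).mul (sigma_diff.pow 2))
  · exact (differentiableOn_const _).mul (sigma_diff.pow 2)
  · exact fun z hzb => den_ne_zero (ball_norm hzb)

lemma fin_sum_two {N : ℕ} (hN : 2 ≤ N) (g : ℕ → ℝ) (hg : ∀ i, 2 ≤ i → g i = 0) :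
    ∑ k : Fin N, g k = g 0 + g 1 := by
  rw [Fin.sum_univ_eq_sum_range]
  have hsplit : ∑ i ∈ Finset.Ico 0 2, g i + ∑ i ∈ Finset.Ico 2 N, g i
      = ∑ i ∈ Finset.Ico 0 N, g i :=
    Finset.sum_Ico_consecutive g (by omega) hN
  rw [Finset.range_eq_Ico, ← hsplit]
  have h2 : ∑ i ∈ Finset.Ico 2 N, g i = 0 :=
    Finset.sum_eq_zero fun i hi => hg i (Finset.mem_Ico.mp hi).1
  rw [h2, add_zero]
  rw [← Finset.range_eq_Ico]
  rw [Finset.sum_range_succ, Finset.sum_range_one]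



def NmP : MvPolynomial (Fin 2) ℂ :=
  MvPolynomial.C 100000 - MvPolynomial.C (1000 * (rtC:ℂ)) * MvPolynomial.X 1 - MvPolynomial.C 990000 * (MvPolynomial.X 0 * MvPolynomial.X 1 ^ 2)
def DmP : MvPolynomial (Fin 2) ℂ :=
  MvPolynomial.C 10000000 - MvPolynomial.C (101000 * (rtC:ℂ)) * MvPolynomial.X 1 - MvPolynomial.C 99000000 * (MvPolynomial.X 0 * MvPolynomial.X 1 ^ 2)
def Pi1 : MvPolynomial (Fin 2) ℂ :=
  MvPolynomial.C (rtC:ℂ) * MvPolynomial.X 1 * NmP ^ 2 - MvPolynomial.C 100 * (NmP * DmP) + DmP ^ 2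
def Pi2 : MvPolynomial (Fin 2) ℂ :=
  MvPolynomial.C (990000 * (rtC:ℂ)) * (MvPolynomial.X 0 * MvPolynomial.X 1 ^ 3) + MvPolynomial.C 1980000000 * (MvPolynomial.X 0 * MvPolynomial.X 1 ^ 2)
    + MvPolynomial.C (1000000 * (rtC:ℂ)) * (MvPolynomial.X 0 * MvPolynomial.X 1) - MvPolynomial.C (100000 * (rtC:ℂ)) * MvPolynomial.X 1 - MvPolynomial.C 99000000

lemma Pi1_eval (z w : ℂ) :
    MvPolynomial.eval ![z, w] Pi1
      = (rtC:ℂ) * w * (100000 - 1000*(rtC:ℂ)*w - 990000*(z*w^2))^2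
        - 100 * ((100000 - 1000*(rtC:ℂ)*w - 990000*(z*w^2))
            * (10000000 - 101000*(rtC:ℂ)*w - 99000000*(z*w^2)))
        + (10000000 - 101000*(rtC:ℂ)*w - 99000000*(z*w^2))^2 := by
  simp [Pi1, NmP, DmP]

lemma Pi2_eval (z w : ℂ) :
    MvPolynomial.eval ![z, w] Pi2
      = 990000*(rtC:ℂ)*(z*w^3) + 1980000000*(z*w^2) + 1000000*(rtC:ℂ)*(z*w)
        - 100000*(rtC:ℂ)*w - 99000000 := by
  simp [Pi2]

lemma Pi1_ne : Pi1 ≠ 0 := by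
  intro h
  have h2 := congrArg (MvPolynomial.eval ![(0:ℂ), 1]) h
  rw [Pi1_eval] at h2
  simp only [map_zero] at h2
  norm_num at h2
  have h3 : ((990000000000 * rtC - 98010000000000 : ℝ) : ℂ) = 0 := by
    push_cast
    linear_combination h2 - (1000000*(rtC:ℂ) - 99000000) * rtC_sqC
  rw [Complex.ofReal_eq_zero] at h3
  nlinarith [rtC_ge]

lemma Pi2_ne : Pi2 ≠ 0 := by
  intro h
  have h2 := congrArg (MvPolynomial.eval ![(0:ℂ), 0]) h
  rw [Pi2_eval] at h2
  simp at h2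

lemma Pi1_vanish {z : ℂ} (hz : ‖z‖ ≤ 21/20) :
    MvPolynomial.eval ![z, F1fn z] Pi1 = 0 := by
  have h0 : sigmaFn z ≠ 0 := sigma_ne_zero hz
  have hR := sigma_rel hz
  have hd := den_ne_zero hz
  have hw : (rtC:ℂ) * F1fn z * (sigmaFn z)^2 = 100*(sigmaFn z) - 1 := by
    rw [F1fn]
    field_simp [show (rtC:ℂ) ≠ 0 by exact_mod_cast ne_of_gt rtC_pos]
  rw [Pi1_eval]
  set t := sigmaFn z with ht_def
  set w := F1fn z with hw_def
  have hden : t * (10000000 - 101000*(rtC:ℂ)*w - 99000000*(z*w^2))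
      = 100000 - 1000*(rtC:ℂ)*w - 990000*(z*w^2) := by
    linear_combination (w^2*(rtC:ℂ)^2) * hR + (-100000 + 1000*(rtC:ℂ)*w - 1000*(rtC:ℂ)*w*t) * hw
      + (100*t*z*w^2 - z*w^2) * rtC_sqC
  linear_combination ((10000000 - 101000*(rtC:ℂ)*w - 99000000*(z*w^2))^2) * hw
    + (100*(10000000 - 101000*(rtC:ℂ)*w - 99000000*(z*w^2))
       - (rtC:ℂ)*w*(100000 - 1000*(rtC:ℂ)*w - 990000*(z*w^2))
       - (rtC:ℂ)*w*t*(10000000 - 101000*(rtC:ℂ)*w - 99000000*(z*w^2))) * hden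

lemma Pi2_vanish {z : ℂ} (hz : ‖z‖ ≤ 21/20) :
    MvPolynomial.eval ![z, F2fn z] Pi2 = 0 := by
  have h0 : sigmaFn z ≠ 0 := sigma_ne_zero hz
  have hR := sigma_rel hz
  have hd := den_ne_zero hz
  have hw2 : (rtC:ℂ) * F2fn z * (sigmaFn z) = 10 - 1000*(sigmaFn z) := by
    rw [F2fn]
    field_simp [show (rtC:ℂ) ≠ 0 by exact_mod_cast ne_of_gt rtC_pos]
  rw [Pi2_eval]
  set t := sigmaFn z with ht_def
  set w := F2fn z with hw_def
  have key : (990000*(rtC:ℂ)*(z*w^3) + 1980000000*(z*w^2) + 1000000*(rtC:ℂ)*(z*w)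
      - 100000*(rtC:ℂ)*w - 99000000) * t^3 = 0 := by
    linear_combination (1000 + 990000*z*w^2 - z*w^2*(rtC:ℂ)^2) * hR
      + (100*z + 10*t*w*z*(rtC:ℂ) - 100000*t^2 + 1000*t^2*w*z*(rtC:ℂ) + 990000*t^2*w^2*z) * hw2
      + (z^2*w^2 - 100*t*z^2*w^2 - 1010*t^2*z*w^2) * rtC_sqC
  have := mul_eq_zero.mp key
  rcases this with h | h
  · exact h
  · exact absurd h (pow_ne_zero 3 h0)


lemma ball1_norm {z : ℂ} (hzb : z ∈ ball (0:ℂ) 1) : ‖z‖ ≤ 21/20 := by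
  rw [mem_ball, dist_zero_right] at hzb
  linarith

lemma F2_not_rational :
    ¬ ∃ P Q : Polynomial ℂ, (∀ z ∈ ball (0:ℂ) 1, Q.eval z ≠ 0) ∧
      ∀ z ∈ ball (0:ℂ) 1, F2fn z = P.eval z / Q.eval z := by
  rintro ⟨P, Q, hQ, hPQ⟩
  have h0ball : (0:ℂ) ∈ ball (0:ℂ) 1 := by simp
  have hQ0 : Q ≠ 0 := fun h => hQ 0 h0ball (by rw [h]; simp)
  set Ph : Polynomial ℂ := Polynomial.C 10 * Q with hPh_def
  set Qh : Polynomial ℂ := Polynomial.C ((rtC:ℝ):ℂ) * P + Polynomial.C 1000 * Q with hQh_def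
  have hpoint : ∀ z ∈ ball (0:ℂ) 1, sigmaFn z * Qh.eval z = Ph.eval z := by
    intro z hzb
    have hz : ‖z‖ ≤ 21/20 := ball1_norm hzb
    have hq := hQ z hzb
    have h0 : sigmaFn z ≠ 0 := sigma_ne_zero hz
    have hd := den_ne_zero hz
    have hw2 : ((rtC:ℝ):ℂ) * F2fn z * sigmaFn z = 10 - 1000*(sigmaFn z) := by
      rw [F2fn]; field_simp [show (rtC:ℂ) ≠ 0 by exact_mod_cast ne_of_gt rtC_pos]
    rw [hPQ z hzb] at hw2
    rw [hQh_def, hPh_def]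
    simp only [Polynomial.eval_add, Polynomial.eval_mul, Polynomial.eval_C]
    field_simp at hw2
    linear_combination hw2
  set DIF : Polynomial ℂ := Polynomial.C 1000 * Ph^2 * (Ph - Qh)
      - Polynomial.X * (Polynomial.C 100 * Ph - Qh) * Qh^2 with hDIF_def
  have hDIFroot : ∀ z ∈ ball (0:ℂ) 1, DIF.IsRoot z := by
    intro z hzb
    have hz : ‖z‖ ≤ 21/20 := ball1_norm hzb
    have hR := sigma_rel hz
    have hpq := hpoint z hzb
    show DIF.eval z = 0
    rw [hDIF_def]
    simp only [Polynomial.eval_sub, Polynomial.eval_mul, Polynomial.eval_add,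
      Polynomial.eval_pow, Polynomial.eval_C, Polynomial.eval_X]
    set t := sigmaFn z
    set ph := Ph.eval z
    set qh := Qh.eval z
    linear_combination (qh^3) * hR
      - (1000*(ph^2 + ph*t*qh + t^2*qh^2) - 1000*qh*(ph + t*qh) - 100*z*qh^2) * hpq
  have hinf : {x : ℂ | DIF.IsRoot x}.Infinite := by
    apply Set.infinite_of_injective_forall_mem
      (f := fun n : ℕ => (((1:ℝ)/(n+2) : ℝ) : ℂ))
    · intro m n h
      have h2 : ((1/((m:ℝ)+2) : ℝ) : ℂ) = ((1/((n:ℝ)+2) : ℝ) : ℂ) := by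
        simpa using h
      rw [Complex.ofReal_inj] at h2
      have hm : (0:ℝ) < (m:ℝ)+2 := by positivity
      have hn : (0:ℝ) < (n:ℝ)+2 := by positivity
      rw [div_eq_div_iff (ne_of_gt hm) (ne_of_gt hn)] at h2
      have : (m:ℝ) = n := by linarith
      exact_mod_cast this
    · intro n
      apply hDIFroot
      rw [mem_ball, dist_zero_right, Complex.norm_real, Real.norm_eq_abs,
        abs_of_pos (by positivity), div_lt_one (by positivity)]
      linarith [Nat.cast_nonneg (α := ℝ) n]
  have hDIF0 : DIF = 0 := Polynomial.eq_zero_of_infinite_isRoot _ hinf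
  have hID : Polynomial.C 1000 * Ph^2 * (Ph - Qh)
      = Polynomial.X * (Polynomial.C 100 * Ph - Qh) * Qh^2 := by
    have := sub_eq_zero.mp hDIF0
    exact this
  have hPh0 : Ph ≠ 0 := by
    rw [hPh_def]
    exact mul_ne_zero (by simp) hQ0
  have hQh0 : Qh ≠ 0 := by
    intro h
    rw [h] at hID
    simp only [sub_zero, ne_eq, OfNat.ofNat_ne_zero, not_false_eq_true, zero_pow,
      mul_zero, pow_succ, pow_zero, one_mul] at hID
    have : Ph ^ 3 = 0 := by
      have h1000 : (Polynomial.C (1000:ℂ)) ≠ 0 := by simp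
      have := mul_left_cancel₀ h1000 (by linear_combination hID :
        Polynomial.C (1000:ℂ) * Ph^3 = Polynomial.C 1000 * 0)
      simpa using this
    exact hPh0 (pow_eq_zero_iff (by norm_num) |>.mp this)
  obtain ⟨P1, Q1, d, hrel, hdP, hdQ⟩ :=
    UniqueFactorizationMonoid.exists_reduced_factors Ph hPh0 Qh
  have hd0 : d ≠ 0 := fun h => hPh0 (by rw [← hdP, h, zero_mul])
  have hQ10 : Q1 ≠ 0 := fun h => hQh0 (by rw [← hdQ, h, mul_zero])
  have hP10 : P1 ≠ 0 := fun h => hPh0 (by rw [← hdP, h, mul_zero])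
  have hID1 : Polynomial.C 1000 * P1^2 * (P1 - Q1)
      = Polynomial.X * (Polynomial.C 100 * P1 - Q1) * Q1^2 := by
    apply mul_left_cancel₀ (pow_ne_zero 3 hd0)
    rw [← hdP, ← hdQ] at hID
    linear_combination hID
  have hQ1root : ∀ x : ℂ, ¬ Q1.IsRoot x := by
    intro x hx
    have hdvd : (Polynomial.X - Polynomial.C x) ∣ Q1 := Polynomial.dvd_iff_isRoot.mpr hx
    have hprime := Polynomial.prime_X_sub_C x
    have hdvdL : (Polynomial.X - Polynomial.C x) ∣
        Polynomial.C 1000 * P1^2 * (P1 - Q1) := by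
      rw [hID1]
      exact Dvd.dvd.mul_left (hdvd.trans (dvd_pow_self Q1 two_ne_zero)) _
    have hdvdP1 : (Polynomial.X - Polynomial.C x) ∣ P1 := by
      rcases (hprime.2.2 _ _ hdvdL) with h1 | h2
      · rcases (hprime.2.2 _ _ h1) with h3 | h4
        · exfalso
          apply hprime.2.1
          exact isUnit_of_dvd_unit h3 (Polynomial.isUnit_C.mpr
            (Ne.isUnit (by norm_num : (1000:ℂ) ≠ 0)))
        · exact hprime.dvd_of_dvd_pow h4
      · have : (Polynomial.X - Polynomial.C x) ∣ (P1 - Q1) + Q1 := dvd_add h2 hdvd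
        simpa using this
    exact Polynomial.not_isUnit_X_sub_C x (hrel hdvdP1 hdvd)
  have hQ1deg : Q1.degree = 0 := by
    by_contra hdeg
    obtain ⟨x, hx⟩ := IsAlgClosed.exists_root Q1 hdeg
    exact hQ1root x hx
  have hqC : Q1 = Polynomial.C (Q1.coeff 0) :=
    Polynomial.eq_C_of_degree_le_zero (le_of_eq hQ1deg)
  set q : ℂ := Q1.coeff 0 with hq_def
  have hq0 : q ≠ 0 := by
    intro h
    apply hQ10
    rw [hqC, h, map_zero]
  rw [hqC] at hID1
  rcases Nat.eq_zero_or_pos P1.natDegree with hk | hk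
  · obtain ⟨p, hp⟩ := Polynomial.natDegree_eq_zero.mp hk
    rw [← hp] at hID1
    have h0 := congrArg (Polynomial.eval 0) hID1
    have h1 := congrArg (Polynomial.eval 1) hID1
    simp only [Polynomial.eval_mul, Polynomial.eval_sub, Polynomial.eval_pow,
      Polynomial.eval_C, Polynomial.eval_X, Polynomial.eval_one, zero_mul, one_mul] at h0 h1
    have hp0 : p ≠ 0 := by
      intro h
      apply hP10
      rw [← hp, h, map_zero]
    have h2 : (1000:ℂ) * p^2 * (p - q) = 0 := by linear_combination h0
    have hpq : p = q := by
      rcases mul_eq_zero.mp h2 with h3 | h4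
      · rcases mul_eq_zero.mp h3 with h5 | h6
        · norm_num at h5
        · exact absurd (pow_eq_zero_iff two_ne_zero |>.mp h6) hp0
      · exact sub_eq_zero.mp h4
    have hq3 : (99:ℂ) * q^3 = 0 := by
      rw [hpq] at h1
      linear_combination (-1:ℂ) * h1
    have : q ^ 3 = 0 := by
      rcases mul_eq_zero.mp hq3 with h5 | h6
      · norm_num at h5
      · exact h6
    exact hq0 (pow_eq_zero_iff three_ne_zero |>.mp this)
  · have hsub0 : P1 - Polynomial.C q ≠ 0 := by
      intro h
      have h2 : P1 = Polynomial.C q := sub_eq_zero.mp h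
      rw [h2, Polynomial.natDegree_C] at hk
      omega
    have hC100P1 : (Polynomial.C (100:ℂ) * P1 - Polynomial.C q).natDegree = P1.natDegree := by
      rw [Polynomial.natDegree_sub_C, Polynomial.natDegree_C_mul
        (by norm_num : (100:ℂ) ≠ 0)]
    have hfac2 : Polynomial.C (100:ℂ) * P1 - Polynomial.C q ≠ 0 := by
      intro h
      rw [h, Polynomial.natDegree_zero] at hC100P1
      omega
    have hLdeg : (Polynomial.C (1000:ℂ) * P1^2 * (P1 - Polynomial.C q)).natDegree
        = 3 * P1.natDegree := by
      rw [Polynomial.natDegree_mul (mul_ne_zero (by simp) (pow_ne_zero 2 hP10)) hsub0,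
        Polynomial.natDegree_mul (show (Polynomial.C (1000:ℂ)) ≠ 0 by simp)
          (pow_ne_zero 2 hP10),
        Polynomial.natDegree_C, Polynomial.natDegree_pow, Polynomial.natDegree_sub_C]
      ring
    have hRdeg : (Polynomial.X * (Polynomial.C (100:ℂ) * P1 - Polynomial.C q)
        * (Polynomial.C q)^2).natDegree = 1 + P1.natDegree := by
      rw [Polynomial.natDegree_mul (mul_ne_zero Polynomial.X_ne_zero hfac2)
          (pow_ne_zero 2 (show (Polynomial.C q) ≠ 0 by simp [hq0])),
        Polynomial.natDegree_mul Polynomial.X_ne_zero hfac2,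
        Polynomial.natDegree_X, hC100P1, Polynomial.natDegree_pow, Polynomial.natDegree_C]
      ring
    have hdeg := congrArg Polynomial.natDegree hID1
    rw [hLdeg, hRdeg] at hdeg
    omega



def ffn : ℕ → ℂ → ℂ := fun i => if i = 0 then F1fn else if i = 1 then F2fn else fun _ => 0

end AlgIrrAux

/-- For every `N ≥ 2` there is an algebraic but non-rational proper holomorphic map from
the unit disk to `𝔹^N` extending holomorphically to a neighborhood of the closed unit
disk. -/
theorem exists_algebraic_irrational_proper_map (N : ℕ) (hN : 2 ≤ N) :
    ∃ (ε : ℝ) (f : Fin N → ℂ → ℂ), 0 < ε ∧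
      (∀ k, DifferentiableOn ℂ (f k) (Metric.ball 0 (1 + ε))) ∧
      (∀ z : ℂ, ‖z‖ < 1 → ∑ k, ‖f k z‖ ^ 2 < 1) ∧
      (∀ z : ℂ, ‖z‖ = 1 → ∑ k, ‖f k z‖ ^ 2 = 1) ∧
      (∀ k : Fin N, ∃ P : MvPolynomial (Fin 2) ℂ, P ≠ 0 ∧
        ∀ z : ℂ, ‖z‖ < 1 → MvPolynomial.eval ![z, f k z] P = 0) ∧
      ∃ k : Fin N, ¬ ∃ P Q : Polynomial ℂ,
        (∀ z ∈ Metric.ball (0 : ℂ) 1, Q.eval z ≠ 0) ∧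
        ∀ z ∈ Metric.ball (0 : ℂ) 1, f k z = P.eval z / Q.eval z := by
  have hrad : (1 : ℝ) + 1/20 = 21/20 := by norm_num
  have habs_le : ∀ z : ℂ, ‖z‖ < 1 → ‖z‖ ≤ 21/20 := by
    intro z hz
    linarith
  refine ⟨1/20, fun k => ffn (k : ℕ), by norm_num, ?_, ?_, ?_, ?_, ?_⟩
  · -- differentiability
    intro k
    rw [hrad]
    by_cases h0 : (k : ℕ) = 0
    · simpa [ffn, h0] using F1_diff
    · by_cases h1 : (k : ℕ) = 1
      · simpa [ffn, h0, h1] using F2_diff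
      · simpa [ffn, h0, h1] using
          (differentiableOn_const (0:ℂ) : DifferentiableOn ℂ (fun _ => (0:ℂ)) (Metric.ball 0 (21/20)))
  · -- interior
    intro z hz
    have hsum : ∑ k : Fin N, ‖ffn (k:ℕ) z‖ ^ 2
        = ‖F1fn z‖ ^ 2 + ‖F2fn z‖ ^ 2 := by
      have h := fin_sum_two hN (fun i => ‖ffn i z‖ ^ 2) ?_
      · rw [h]
        simp [ffn]
      · intro i hi
        have h2 : i ≠ 0 := by omega
        have h3 : i ≠ 1 := by omega
        simp [ffn, h2, h3]
    rw [hsum]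
    exact sum_interior hz
  · -- boundary
    intro z hz
    have hsum : ∑ k : Fin N, ‖ffn (k:ℕ) z‖ ^ 2
        = ‖F1fn z‖ ^ 2 + ‖F2fn z‖ ^ 2 := by
      have h := fin_sum_two hN (fun i => ‖ffn i z‖ ^ 2) ?_
      · rw [h]
        simp [ffn]
      · intro i hi
        have h2 : i ≠ 0 := by omega
        have h3 : i ≠ 1 := by omega
        simp [ffn, h2, h3]
    rw [hsum]
    exact sum_boundary hz
  · -- algebraicity
    intro k
    by_cases h0 : (k : ℕ) = 0
    · refine ⟨Pi1, Pi1_ne, ?_⟩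
      intro z hz
      have he : ffn (k:ℕ) = F1fn := by simp [ffn, h0]
      show MvPolynomial.eval ![z, ffn (k:ℕ) z] Pi1 = 0
      rw [he]
      exact Pi1_vanish (habs_le z hz)
    · by_cases h1 : (k : ℕ) = 1
      · refine ⟨Pi2, Pi2_ne, ?_⟩
        intro z hz
        have he : ffn (k:ℕ) = F2fn := by simp [ffn, h0, h1]
        show MvPolynomial.eval ![z, ffn (k:ℕ) z] Pi2 = 0
        rw [he]
        exact Pi2_vanish (habs_le z hz)
      · refine ⟨MvPolynomial.X 1, MvPolynomial.X_ne_zero 1, ?_⟩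
        intro z hz
        have he : ffn (k:ℕ) = fun _ => (0:ℂ) := by simp [ffn, h0, h1]
        show MvPolynomial.eval ![z, ffn (k:ℕ) z] (MvPolynomial.X 1) = 0
        rw [he]
        simp
  · -- non-rationality
    refine ⟨⟨1, by omega⟩, ?_⟩
    have he : ffn ((⟨1, by omega⟩ : Fin N) : ℕ) = F2fn := by simp [ffn]
    show ¬ ∃ P Q : Polynomial ℂ,
        (∀ z ∈ Metric.ball (0 : ℂ) 1, Q.eval z ≠ 0) ∧
        ∀ z ∈ Metric.ball (0 : ℂ) 1, ffn ((⟨1, by omega⟩ : Fin N) : ℕ) z = P.eval z / Q.eval z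
    rw [he]
    exact F2_not_rational
end
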